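/- arXiv:2410.10040 — 6 statements merged into one kernel-verified Lean document; each statement's English description precedes it below -/
import Mathlib

section
/- Let α > 0 and let m : [0,α] → ℝ be continuous with m(0) = m(α) = 0, m(s) > 0 for all s ∈ (0,α), and m continuously differentiable on (0,α). Then there exist continuously differentiable functions m¹, m² : (0,α) → ℝ such that m¹ is positive and nondecreasing, m² is positive and nonincreasing, and m(s) = m¹(s)·m²(s) for all s ∈ (0,α). If, in addition, m is Lipschitz continuous on [0,α] and there is δ ∈ (0,α/2) such that m′(s) ≥ 0 for s ∈ (0,δ) and m′(s) ≤ 0 for s ∈ (α−δ,α), then m¹ and m² can be chosen so that they extend to Lipschitz continuous functions on [0,α] with m¹(0) = 0, m²(α) = 0 and m = m¹·m² on all of [0,α]. -/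
open Set MeasureTheory

noncomputable def gfun (m : ℝ → ℝ) : ℝ → ℝ := fun t => max (deriv m t / m t) 0

noncomputable def Ffun (m : ℝ → ℝ) (b : ℝ) : ℝ → ℝ := fun s => ∫ t in b..s, gfun m t

lemma gfun_nonneg (m : ℝ → ℝ) (t : ℝ) : 0 ≤ gfun m t := le_max_right _ _

variable {α b : ℝ} {m : ℝ → ℝ}

lemma gfun_contOn (hm_pos : ∀ s ∈ Ioo 0 α, 0 < m s) (hm_C1 : ContDiffOn ℝ 1 m (Ioo 0 α)) :
    ContinuousOn (gfun m) (Ioo 0 α) := by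
  have h1 : ContinuousOn (deriv m) (Ioo 0 α) :=
    hm_C1.continuousOn_deriv_of_isOpen isOpen_Ioo le_rfl
  intro x hx
  exact ((h1 x hx).div (hm_C1.continuousOn x hx) (hm_pos x hx).ne').max continuousWithinAt_const

lemma hasDerivAt_Ffun (hm_pos : ∀ s ∈ Ioo 0 α, 0 < m s) (hm_C1 : ContDiffOn ℝ 1 m (Ioo 0 α))
    (hb : b ∈ Ioo 0 α) {x : ℝ} (hx : x ∈ Ioo 0 α) :
    HasDerivAt (Ffun m b) (gfun m x) x := by
  have hcont := gfun_contOn hm_pos hm_C1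
  have hsub : uIcc b x ⊆ Ioo 0 α := (ordConnected_Ioo).uIcc_subset hb hx
  exact intervalIntegral.integral_hasDerivAt_right
    ((hcont.mono hsub).intervalIntegrable)
    (ContinuousAt.stronglyMeasurableAtFilter isOpen_Ioo
      (fun y hy => hcont.continuousAt (isOpen_Ioo.mem_nhds hy)) x hx)
    (hcont.continuousAt (isOpen_Ioo.mem_nhds hx))

lemma contDiffOn_Ffun (hm_pos : ∀ s ∈ Ioo 0 α, 0 < m s) (hm_C1 : ContDiffOn ℝ 1 m (Ioo 0 α))
    (hb : b ∈ Ioo 0 α) : ContDiffOn ℝ 1 (Ffun m b) (Ioo 0 α) := by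
  rw [show (1 : WithTop ℕ∞) = 0 + 1 from rfl, contDiffOn_succ_iff_deriv_of_isOpen isOpen_Ioo]
  refine ⟨fun x hx => (hasDerivAt_Ffun hm_pos hm_C1 hb hx).differentiableAt.differentiableWithinAt,
    ?_, ?_⟩
  · intro h; exact absurd h (by simp)
  · rw [contDiffOn_zero]
    exact ContinuousOn.congr (gfun_contOn hm_pos hm_C1)
      (fun x hx => (hasDerivAt_Ffun hm_pos hm_C1 hb hx).deriv)

lemma hasDerivAt_m (hm_C1 : ContDiffOn ℝ 1 m (Ioo 0 α)) {x : ℝ} (hx : x ∈ Ioo 0 α) :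
    HasDerivAt m (deriv m x) x := by
  have := (hm_C1.differentiableOn one_ne_zero).differentiableAt (isOpen_Ioo.mem_nhds hx)
  exact this.hasDerivAt

lemma m_mul_gfun (hm_pos : ∀ s ∈ Ioo 0 α, 0 < m s) {x : ℝ} (hx : x ∈ Ioo 0 α) :
    m x * gfun m x = max (deriv m x) 0 := by
  unfold gfun
  rw [mul_max_of_nonneg _ _ (hm_pos x hx).le, mul_div_cancel₀ _ (hm_pos x hx).ne', mul_zero]

lemma r_props (hm_pos : ∀ s ∈ Ioo 0 α, 0 < m s) (hm_C1 : ContDiffOn ℝ 1 m (Ioo 0 α))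
    (hb : b ∈ Ioo 0 α) {c : ℝ} (hc : 0 < c) :
    ContDiffOn ℝ 1 (fun s => c * Real.exp (Ffun m b s)) (Ioo 0 α) ∧
    ContDiffOn ℝ 1 (fun s => m s * Real.exp (-(Ffun m b s)) / c) (Ioo 0 α) ∧
    (∀ s ∈ Ioo 0 α, 0 < c * Real.exp (Ffun m b s)) ∧
    (∀ s ∈ Ioo 0 α, 0 < m s * Real.exp (-(Ffun m b s)) / c) ∧
    MonotoneOn (fun s => c * Real.exp (Ffun m b s)) (Ioo 0 α) ∧
    AntitoneOn (fun s => m s * Real.exp (-(Ffun m b s)) / c) (Ioo 0 α) ∧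
    (∀ s ∈ Ioo 0 α, m s = (c * Real.exp (Ffun m b s)) * (m s * Real.exp (-(Ffun m b s)) / c)) := by
  have hF := contDiffOn_Ffun hm_pos hm_C1 hb
  have hd1 : ∀ x ∈ Ioo 0 α, HasDerivAt (fun s => c * Real.exp (Ffun m b s))
      (c * (Real.exp (Ffun m b x) * gfun m x)) x :=
    fun x hx => ((hasDerivAt_Ffun hm_pos hm_C1 hb hx).exp).const_mul c
  have hd2 : ∀ x ∈ Ioo 0 α, HasDerivAt (fun s => m s * Real.exp (-(Ffun m b s)) / c)
      ((deriv m x * Real.exp (-(Ffun m b x)) +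
        m x * (Real.exp (-(Ffun m b x)) * -(gfun m x))) / c) x :=
    fun x hx => ((hasDerivAt_m hm_C1 hx).mul
      ((hasDerivAt_Ffun hm_pos hm_C1 hb hx).neg).exp).div_const c
  refine ⟨contDiffOn_const.mul hF.exp, (hm_C1.mul (hF.neg.exp)).div_const c,
    fun s _ => mul_pos hc (Real.exp_pos _),
    fun s hs => div_pos (mul_pos (hm_pos s hs) (Real.exp_pos _)) hc, ?_, ?_, ?_⟩
  · refine monotoneOn_of_deriv_nonneg (convex_Ioo 0 α)
      (contDiffOn_const.mul hF.exp : ContDiffOn ℝ 1 _ _).continuousOn ?_ ?_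
    · rw [interior_Ioo]
      exact fun x hx => (hd1 x hx).differentiableAt.differentiableWithinAt
    · rw [interior_Ioo]
      intro x hx
      rw [(hd1 x hx).deriv]
      have := gfun_nonneg m x
      positivity
  · refine antitoneOn_of_deriv_nonpos (convex_Ioo 0 α)
      ((hm_C1.mul (hF.neg.exp)).div_const c : ContDiffOn ℝ 1 _ _).continuousOn ?_ ?_
    · rw [interior_Ioo]
      exact fun x hx => (hd2 x hx).differentiableAt.differentiableWithinAt
    · rw [interior_Ioo]
      intro x hx
      rw [(hd2 x hx).deriv]
      have key : deriv m x * Real.exp (-(Ffun m b x)) +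
          m x * (Real.exp (-(Ffun m b x)) * -(gfun m x)) =
          Real.exp (-(Ffun m b x)) * (deriv m x - max (deriv m x) 0) := by
        rw [show m x * (Real.exp (-(Ffun m b x)) * -(gfun m x)) =
            -(Real.exp (-(Ffun m b x)) * (m x * gfun m x)) by ring,
          m_mul_gfun hm_pos hx]
        ring
      rw [key]
      apply div_nonpos_of_nonpos_of_nonneg _ hc.le
      exact mul_nonpos_of_nonneg_of_nonpos (Real.exp_pos _).le
        (sub_nonpos.mpr (le_max_left _ _))
  · intro s _
    rw [Real.exp_neg]
    field_simp

lemma lip_congr {f g : ℝ → ℝ} {K : NNReal} {s : Set ℝ} (h : LipschitzOnWith K f s)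
    (he : EqOn g f s) : LipschitzOnWith K g s := fun x hx y hy => by
  rw [he hx, he hy]; exact h hx hy

lemma lip_glue {f : ℝ → ℝ} {K : NNReal} {a b c : ℝ} (hab : a ≤ b) (hbc : b ≤ c)
    (h1 : LipschitzOnWith K f (Icc a b)) (h2 : LipschitzOnWith K f (Icc b c)) :
    LipschitzOnWith K f (Icc a c) := by
  rw [lipschitzOnWith_iff_dist_le_mul] at h1 h2 ⊢
  intro x hx y hy
  rcases le_total x b with hxb | hxb <;> rcases le_total y b with hyb | hyb
  · exact h1 x ⟨hx.1, hxb⟩ y ⟨hy.1, hyb⟩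
  · have e : dist x b + dist b y = dist x y := by
      rw [Real.dist_eq, Real.dist_eq, Real.dist_eq,
        abs_of_nonpos (by linarith), abs_of_nonpos (by linarith), abs_of_nonpos (by linarith)]
      ring
    calc dist (f x) (f y) ≤ dist (f x) (f b) + dist (f b) (f y) := dist_triangle _ _ _
      _ ≤ K * dist x b + K * dist b y :=
          add_le_add (h1 x ⟨hx.1, hxb⟩ b ⟨hab, le_rfl⟩) (h2 b ⟨le_rfl, hbc⟩ y ⟨hyb, hy.2⟩)
      _ = K * (dist x b + dist b y) := (mul_add _ _ _).symm
      _ = K * dist x y := by rw [e]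
  · have e : dist y b + dist b x = dist y x := by
      rw [Real.dist_eq, Real.dist_eq, Real.dist_eq,
        abs_of_nonpos (by linarith), abs_of_nonpos (by linarith), abs_of_nonpos (by linarith)]
      ring
    rw [dist_comm x y, dist_comm (f x) (f y)]
    calc dist (f y) (f x) ≤ dist (f y) (f b) + dist (f b) (f x) := dist_triangle _ _ _
      _ ≤ K * dist y b + K * dist b x :=
          add_le_add (h1 y ⟨hy.1, hyb⟩ b ⟨hab, le_rfl⟩) (h2 b ⟨le_rfl, hbc⟩ x ⟨hxb, hx.2⟩)
      _ = K * (dist y b + dist b x) := (mul_add _ _ _).symm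
      _ = K * dist y x := by rw [e]
  · exact h2 x ⟨hxb, hx.2⟩ y ⟨hyb, hy.2⟩

lemma lip_of_bound {f : ℝ → ℝ} {f' : ℝ → ℝ} {a b B : ℝ} (hB : 0 ≤ B)
    (hd : ∀ x ∈ Icc a b, HasDerivWithinAt f (f' x) (Icc a b) x)
    (hbound : ∀ x ∈ Icc a b, |f' x| ≤ B) :
    LipschitzOnWith B.toNNReal f (Icc a b) := by
  rw [lipschitzOnWith_iff_dist_le_mul]
  intro x hx y hy
  have := (convex_Icc a b).norm_image_sub_le_of_norm_hasDerivWithin_le hd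
    (fun x hx => by rw [Real.norm_eq_abs]; exact hbound x hx) hx hy
  rw [Real.dist_eq, Real.dist_eq, abs_sub_comm]
  calc |f y - f x| ≤ B * |y - x| := by simpa [Real.norm_eq_abs] using this
    _ = ↑B.toNNReal * |x - y| := by rw [Real.coe_toNNReal B hB, abs_sub_comm]

lemma lip_const {c : ℝ} {K : NNReal} {s : Set ℝ} : LipschitzOnWith K (fun _ => c) s := by
  rw [lipschitzOnWith_iff_dist_le_mul]
  intro x _ y _
  simp [dist_self]
  positivity

lemma deriv_bound {K : NNReal} (hK : LipschitzOnWith K m (Icc 0 α)) {s : ℝ}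
    (hs : s ∈ Ioo 0 α) : |deriv m s| ≤ K := by
  have hn : Icc 0 α ∈ nhds s :=
    mem_nhds_iff.mpr ⟨Ioo 0 α, Ioo_subset_Icc_self, isOpen_Ioo, hs⟩
  have := norm_deriv_le_of_lipschitzOn hn hK
  simpa [Real.norm_eq_abs] using this

lemma gfun_zero_right {δ : ℝ} (hδα : δ < α) (hmα : m α = 0)
    (hm_pos : ∀ s ∈ Ioo 0 α, 0 < m s)
    (hdown : ∀ s ∈ Ioo (α - δ) α, deriv m s ≤ 0) {t : ℝ}
    (ht : t ∈ Ioc (α - δ) α) (h0 : 0 < α - δ) : gfun m t = 0 := by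
  rcases eq_or_lt_of_le ht.2 with h | h
  · simp [gfun, h, hmα]
  · have htm : t ∈ Ioo 0 α := ⟨lt_trans h0 ht.1, h⟩
    have h1 : deriv m t ≤ 0 := hdown t ⟨ht.1, h⟩
    have h2 : deriv m t / m t ≤ 0 := div_nonpos_of_nonpos_of_nonneg h1 (hm_pos t htm).le
    simp [gfun, max_eq_right h2]

lemma gfun_contOn_Ioc {δ : ℝ} (hδ0 : 0 < δ) (hδα : δ < α) (hmα : m α = 0)
    (hm_pos : ∀ s ∈ Ioo 0 α, 0 < m s) (hm_C1 : ContDiffOn ℝ 1 m (Ioo 0 α))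
    (hdown : ∀ s ∈ Ioo (α - δ) α, deriv m s ≤ 0) (h0 : 0 < α - δ) :
    ContinuousOn (gfun m) (Ioc 0 α) := by
  intro x hx
  rcases eq_or_lt_of_le hx.2 with h | h
  · subst h
    have hmem : Ioc 0 x ∩ Ioi (x - δ) ∈ nhdsWithin x (Ioc 0 x) :=
      Filter.inter_mem self_mem_nhdsWithin
        (mem_nhdsWithin_of_mem_nhds (Ioi_mem_nhds (by linarith)))
    refine ContinuousWithinAt.congr_of_eventuallyEq
      (continuousWithinAt_const (b := (0:ℝ)))
      (Filter.eventuallyEq_of_mem hmem ?_) ?_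
    · intro y hy
      exact gfun_zero_right hδα hmα hm_pos hdown ⟨hy.2, hy.1.2⟩ h0
    · exact gfun_zero_right hδα hmα hm_pos hdown ⟨by linarith, le_rfl⟩ h0
  · exact ((gfun_contOn hm_pos hm_C1).continuousAt
      (isOpen_Ioo.mem_nhds ⟨hx.1, h⟩)).continuousWithinAt

lemma Ffun_const_right {δ : ℝ} (hδ0 : 0 < δ) (hδα : δ < α) (hmα : m α = 0)
    (hm_pos : ∀ s ∈ Ioo 0 α, 0 < m s) (hm_C1 : ContDiffOn ℝ 1 m (Ioo 0 α))
    (hdown : ∀ s ∈ Ioo (α - δ) α, deriv m s ≤ 0) (h0 : 0 < α - δ) {s : ℝ}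
    (hs : s ∈ Icc (α - δ) α) : Ffun m δ s = Ffun m δ (α - δ) := by
  have hgc := gfun_contOn_Ioc hδ0 hδα hmα hm_pos hm_C1 hdown h0
  have hint : ∀ u v : ℝ, u ∈ Ioc 0 α → v ∈ Ioc 0 α →
      IntervalIntegrable (gfun m) volume u v := fun u v hu hv =>
    (hgc.mono (ordConnected_Ioc.uIcc_subset hu hv)).intervalIntegrable
  have hδm : δ ∈ Ioc 0 α := ⟨hδ0, hδα.le⟩
  have hdm : α - δ ∈ Ioc 0 α := ⟨h0, by linarith⟩
  have hsm : s ∈ Ioc 0 α := ⟨lt_of_lt_of_le h0 hs.1, hs.2⟩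
  have hadd := intervalIntegral.integral_add_adjacent_intervals
    (hint δ (α - δ) hδm hdm) (hint (α - δ) s hdm hsm)
  have hzero : (∫ t in (α - δ)..s, gfun m t) = 0 := by
    rw [intervalIntegral.integral_congr_ae (g := fun _ => (0:ℝ)) ?_,
      intervalIntegral.integral_zero]
    refine Filter.Eventually.of_forall ?_
    intro x hx
    rw [Set.uIoc_of_le hs.1] at hx
    exact gfun_zero_right hδα hmα hm_pos hdown ⟨hx.1, le_trans hx.2 hs.2⟩ h0
  show (∫ t in δ..s, gfun m t) = ∫ t in δ..(α - δ), gfun m t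
  rw [← hadd, hzero, add_zero]

lemma m_eq_left {δ : ℝ} (hδ0 : 0 < δ) (hδα : δ < α)
    (hm_pos : ∀ s ∈ Ioo 0 α, 0 < m s) (hm_C1 : ContDiffOn ℝ 1 m (Ioo 0 α))
    (hup : ∀ s ∈ Ioo 0 δ, 0 ≤ deriv m s) {s : ℝ} (hs : s ∈ Ioc 0 δ) :
    m s = m δ * Real.exp (Ffun m δ s) := by
  have hδm : δ ∈ Ioo 0 α := ⟨hδ0, hδα⟩
  have hFδ : Ffun m δ δ = 0 := intervalIntegral.integral_same
  rcases eq_or_lt_of_le hs.2 with h | h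
  · subst h; rw [hFδ, Real.exp_zero, mul_one]
  -- s < δ
  set F := Ffun m δ with hFdef
  set h := fun u => m u * Real.exp (-(F u)) with hhdef
  have hsub : Icc s δ ⊆ Ioo 0 α := Icc_subset_Ioo hs.1 hδα
  have hFc : ContinuousOn F (Ioo 0 α) := (contDiffOn_Ffun hm_pos hm_C1 hδm).continuousOn
  have hcont : ContinuousOn h (Icc s δ) :=
    (hm_C1.continuousOn.mono hsub).mul
      (Real.continuous_exp.comp_continuousOn (hFc.mono hsub).neg)
  have key : ∀ x ∈ Ioo s δ, HasDerivAt h 0 x := by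
    intro x hx
    have hxm : x ∈ Ioo 0 α := hsub ⟨hx.1.le, hx.2.le⟩
    have hxδ : x ∈ Ioo 0 δ := ⟨hxm.1, hx.2⟩
    have hd := (hasDerivAt_m hm_C1 hxm).mul
      (((hasDerivAt_Ffun hm_pos hm_C1 hδm hxm).neg).exp)
    have hgx : gfun m x = deriv m x / m x :=
      max_eq_left (div_nonneg (hup x hxδ) (hm_pos x hxm).le)
    have hval : deriv m x * Real.exp (-(F x)) + m x * (Real.exp (-(F x)) * -(gfun m x)) = 0 := by
      rw [hgx]
      field_simp [(hm_pos x hxm).ne']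
      ring
    replace hd := hd.congr_deriv hval
    exact hd
  have hdiff : DifferentiableOn ℝ h (interior (Icc s δ)) := by
    rw [interior_Icc]
    exact fun x hx => (key x hx).differentiableAt.differentiableWithinAt
  have hderiv0 : ∀ x ∈ interior (Icc s δ), deriv h x = 0 := by
    rw [interior_Icc]
    exact fun x hx => (key x hx).deriv
  have hmono : MonotoneOn h (Icc s δ) :=
    monotoneOn_of_deriv_nonneg (convex_Icc s δ) hcont hdiff
      (fun x hx => (hderiv0 x hx).ge)
  have hanti : AntitoneOn h (Icc s δ) :=
    antitoneOn_of_deriv_nonpos (convex_Icc s δ) hcont hdiff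
      (fun x hx => (hderiv0 x hx).le)
  have hmem1 : s ∈ Icc s δ := ⟨le_rfl, hs.2⟩
  have hmem2 : δ ∈ Icc s δ := ⟨hs.2, le_rfl⟩
  have heq : h s = h δ :=
    le_antisymm (hmono hmem1 hmem2 hs.2) (hanti hmem1 hmem2 hs.2)
  have heq2 : m s * Real.exp (-(F s)) = m δ := by
    have : h δ = m δ := by
      simp only [hhdef, hFδ, neg_zero, Real.exp_zero, mul_one]
    rw [← this, ← heq]
  calc m s = m s * Real.exp (-(F s)) * Real.exp (F s) := by
        rw [mul_assoc, ← Real.exp_add, neg_add_cancel, Real.exp_zero, mul_one]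
    _ = m δ * Real.exp (F s) := by rw [heq2]

lemma lip_weaken {f : ℝ → ℝ} {K K' : NNReal} {s : Set ℝ} (h : LipschitzOnWith K f s)
    (hKK : K ≤ K') : LipschitzOnWith K' f s := fun x hx y hy =>
  le_trans (h hx hy) (mul_le_mul_left (ENNReal.coe_le_coe.mpr hKK) _)

lemma lip_mul_const {f : ℝ → ℝ} {K : NNReal} {s : Set ℝ} {c : ℝ}
    (h : LipschitzOnWith K f s) (hc : 0 ≤ c) :
    LipschitzOnWith (K * c.toNNReal) (fun x => f x * c) s := by
  rw [lipschitzOnWith_iff_dist_le_mul] at h ⊢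
  intro x hx y hy
  have : dist (f x * c) (f y * c) = dist (f x) (f y) * c := by
    rw [Real.dist_eq, Real.dist_eq, ← sub_mul, abs_mul, abs_of_nonneg hc]
  rw [this, NNReal.coe_mul, Real.coe_toNNReal c hc]
  calc dist (f x) (f y) * c ≤ (↑K * dist x y) * c := by
        have := h x hx y hy
        nlinarith [dist_nonneg (x := f x) (y := f y)]
    _ = ↑K * c * dist x y := by ring

/-- Decomposition of a saturation-type mobility into the product of a nondecreasing
and a nonincreasing factor. -/
theorem mobility_decomposition
    (α : ℝ) (hα : 0 < α) (m : ℝ → ℝ)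
    (hm_cont : ContinuousOn m (Icc 0 α))
    (hm0 : m 0 = 0) (hmα : m α = 0)
    (hm_pos : ∀ s ∈ Ioo 0 α, 0 < m s)
    (hm_C1 : ContDiffOn ℝ 1 m (Ioo 0 α)) :
    (∃ m1 m2 : ℝ → ℝ,
      ContDiffOn ℝ 1 m1 (Ioo 0 α) ∧ ContDiffOn ℝ 1 m2 (Ioo 0 α) ∧
      (∀ s ∈ Ioo 0 α, 0 < m1 s) ∧ (∀ s ∈ Ioo 0 α, 0 < m2 s) ∧
      MonotoneOn m1 (Ioo 0 α) ∧ AntitoneOn m2 (Ioo 0 α) ∧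
      (∀ s ∈ Ioo 0 α, m s = m1 s * m2 s)) ∧
    ((∃ K : NNReal, LipschitzOnWith K m (Icc 0 α)) →
      (∃ δ ∈ Ioo 0 (α / 2),
        (∀ s ∈ Ioo 0 δ, 0 ≤ deriv m s) ∧ (∀ s ∈ Ioo (α - δ) α, deriv m s ≤ 0)) →
      ∃ m1 m2 : ℝ → ℝ,
        ContDiffOn ℝ 1 m1 (Ioo 0 α) ∧ ContDiffOn ℝ 1 m2 (Ioo 0 α) ∧
        (∀ s ∈ Ioo 0 α, 0 < m1 s) ∧ (∀ s ∈ Ioo 0 α, 0 < m2 s) ∧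
        MonotoneOn m1 (Ioo 0 α) ∧ AntitoneOn m2 (Ioo 0 α) ∧
        (∃ K1 : NNReal, LipschitzOnWith K1 m1 (Icc 0 α)) ∧
        (∃ K2 : NNReal, LipschitzOnWith K2 m2 (Icc 0 α)) ∧
        m1 0 = 0 ∧ m2 α = 0 ∧
        (∀ s ∈ Icc 0 α, m s = m1 s * m2 s)) := by
  constructor
  · have hb : α / 2 ∈ Ioo 0 α := ⟨by linarith, by linarith⟩
    obtain ⟨h1, h2, h3, h4, h5, h6, h7⟩ := r_props hm_pos hm_C1 hb (c := 1) one_pos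
    exact ⟨_, _, h1, h2, h3, h4, h5, h6, h7⟩
  · rintro ⟨K, hK⟩ ⟨δ, hδ, hup, hdown⟩
    obtain ⟨hδ0, hδhalf⟩ := hδ
    have hδα : δ < α := by linarith
    have h0d : 0 < α - δ := by linarith
    have hδd : δ < α - δ := by linarith
    have hdα : α - δ < α := by linarith
    have hδm : δ ∈ Ioo 0 α := ⟨hδ0, hδα⟩
    have hdm : α - δ ∈ Ioo 0 α := ⟨h0d, hdα⟩
    have hmδ : 0 < m δ := hm_pos δ hδm
    obtain ⟨h1, h2, h3, h4, h5, h6, h7⟩ := r_props hm_pos hm_C1 hδm hmδ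
    have hFδ : Ffun m δ δ = 0 := intervalIntegral.integral_same
    have hid : ∀ s ∈ Ioc 0 δ, m s = m δ * Real.exp (Ffun m δ s) :=
      fun s hs => m_eq_left hδ0 hδα hm_pos hm_C1 hup hs
    have hFconst : ∀ s ∈ Icc (α - δ) α, Ffun m δ s = Ffun m δ (α - δ) :=
      fun s hs => Ffun_const_right hδ0 hδα hmα hm_pos hm_C1 hdown h0d hs
    have e1 : ∀ s ∈ Ioo 0 α,
        (if s ≤ δ then m s else m δ * Real.exp (Ffun m δ s)) =
          m δ * Real.exp (Ffun m δ s) := by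
      intro s hs
      by_cases h : s ≤ δ
      · rw [if_pos h]; exact hid s ⟨hs.1, h⟩
      · rw [if_neg h]
    have e2 : ∀ s ∈ Ioo 0 α,
        (if s ≤ δ then (1:ℝ) else m s * Real.exp (-(Ffun m δ s)) / m δ) =
          m s * Real.exp (-(Ffun m δ s)) / m δ := by
      intro s hs
      by_cases h : s ≤ δ
      · rw [if_pos h, hid s ⟨hs.1, h⟩, mul_assoc, ← Real.exp_add, add_neg_cancel,
          Real.exp_zero, mul_one, div_self hmδ.ne']
      · rw [if_neg h]
    refine ⟨fun s => if s ≤ δ then m s else m δ * Real.exp (Ffun m δ s),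
      fun s => if s ≤ δ then (1:ℝ) else m s * Real.exp (-(Ffun m δ s)) / m δ,
      h1.congr e1, h2.congr e2,
      fun s hs => by simp only [e1 s hs]; exact h3 s hs,
      fun s hs => by simp only [e2 s hs]; exact h4 s hs,
      fun x hx y hy hxy => by
        simp only [e1 x hx, e1 y hy]; exact h5 hx hy hxy,
      fun x hx y hy hxy => by
        simp only [e2 x hx, e2 y hy]; exact h6 hx hy hxy,
      ?_, ?_, ?_, ?_, ?_⟩
    · -- Lipschitz m1
      have hbd : ∀ s ∈ Ioo 0 α, |deriv m s| ≤ K := fun s hs => deriv_bound hK hs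
      have hsub2 : Icc δ (α - δ) ⊆ Ioo 0 α := Icc_subset_Ioo hδ0 hdα
      obtain ⟨z, hz, hzmin⟩ := isCompact_Icc.exists_isMinOn ⟨δ, le_rfl, hδd.le⟩
        (hm_C1.continuousOn.mono hsub2)
      have hε : 0 < m z := hm_pos z (hsub2 hz)
      have Fmono : MonotoneOn (Ffun m δ) (Ioo 0 α) := by
        refine monotoneOn_of_deriv_nonneg (convex_Ioo 0 α)
          (contDiffOn_Ffun hm_pos hm_C1 hδm).continuousOn ?_ ?_
        · rw [interior_Ioo]
          exact fun x hx =>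
            (hasDerivAt_Ffun hm_pos hm_C1 hδm hx).differentiableAt.differentiableWithinAt
        · rw [interior_Ioo]
          intro x hx
          rw [(hasDerivAt_Ffun hm_pos hm_C1 hδm hx).deriv]
          exact gfun_nonneg m x
      have hB1 : (0:ℝ) ≤ m δ * Real.exp (Ffun m δ (α - δ)) * (K / m z) := by positivity
      have p2r : LipschitzOnWith (m δ * Real.exp (Ffun m δ (α - δ)) * (K / m z)).toNNReal
          (fun s => m δ * Real.exp (Ffun m δ s)) (Icc δ (α - δ)) := by
        refine lip_of_bound hB1 (fun x hx =>
          (((hasDerivAt_Ffun hm_pos hm_C1 hδm (hsub2 hx)).exp).const_mul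
            (m δ)).hasDerivWithinAt) ?_
        intro x hx
        have hx' := hsub2 hx
        have hgnn := gfun_nonneg m x
        have hg : gfun m x ≤ ↑K / m z :=
          max_le (div_le_div₀ K.coe_nonneg (le_trans (le_abs_self _) (hbd x hx')) hε
            (hzmin hx)) (by positivity)
        have hexp : Real.exp (Ffun m δ x) ≤ Real.exp (Ffun m δ (α - δ)) :=
          Real.exp_le_exp.mpr (Fmono hx' hdm hx.2)
        rw [abs_of_nonneg (by positivity)]
        calc m δ * (Real.exp (Ffun m δ x) * gfun m x)
            ≤ m δ * (Real.exp (Ffun m δ (α - δ)) * (↑K / m z)) := by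
              gcongr <;> first | exact hmδ.le | exact hgnn | exact hexp | exact hg | positivity
          _ = m δ * Real.exp (Ffun m δ (α - δ)) * (↑K / m z) := (mul_assoc _ _ _).symm
      have em1a : EqOn (fun s => if s ≤ δ then m s else m δ * Real.exp (Ffun m δ s)) m
          (Icc 0 δ) := fun s hs => if_pos hs.2
      have em1b : EqOn (fun s => if s ≤ δ then m s else m δ * Real.exp (Ffun m δ s))
          (fun s => m δ * Real.exp (Ffun m δ s)) (Icc δ (α - δ)) := by
        intro s hs
        by_cases h : s ≤ δ
        · have hsd : s = δ := le_antisymm h hs.1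
          show (if s ≤ δ then m s else m δ * Real.exp (Ffun m δ s)) = m δ * Real.exp (Ffun m δ s)
          rw [if_pos h, hsd, hFδ, Real.exp_zero, mul_one]
        · show (if s ≤ δ then m s else m δ * Real.exp (Ffun m δ s)) = _
          rw [if_neg h]
      have em1c : EqOn (fun s => if s ≤ δ then m s else m δ * Real.exp (Ffun m δ s))
          (fun _ => m δ * Real.exp (Ffun m δ (α - δ))) (Icc (α - δ) α) := by
        intro s hs
        have h : ¬ s ≤ δ := not_le.mpr (lt_of_lt_of_le hδd hs.1)
        show (if s ≤ δ then m s else m δ * Real.exp (Ffun m δ s)) = _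
        rw [if_neg h, hFconst s hs]
      refine ⟨K ⊔ (m δ * Real.exp (Ffun m δ (α - δ)) * (K / m z)).toNNReal, ?_⟩
      have g1 := lip_glue hδ0.le hδd.le
        (lip_weaken (lip_congr (hK.mono (Icc_subset_Icc le_rfl hδα.le)) em1a) le_sup_left)
        (lip_weaken (lip_congr p2r em1b) le_sup_right)
      exact lip_glue (by linarith : (0:ℝ) ≤ α - δ) hdα.le g1 (lip_congr lip_const em1c)
    · -- Lipschitz m2
      have hbd : ∀ s ∈ Ioo 0 α, |deriv m s| ≤ K := fun s hs => deriv_bound hK hs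
      have hsub2 : Icc δ (α - δ) ⊆ Ioo 0 α := Icc_subset_Ioo hδ0 hdα
      have Fmono : MonotoneOn (Ffun m δ) (Ioo 0 α) := by
        refine monotoneOn_of_deriv_nonneg (convex_Ioo 0 α)
          (contDiffOn_Ffun hm_pos hm_C1 hδm).continuousOn ?_ ?_
        · rw [interior_Ioo]
          exact fun x hx =>
            (hasDerivAt_Ffun hm_pos hm_C1 hδm hx).differentiableAt.differentiableWithinAt
        · rw [interior_Ioo]
          intro x hx
          rw [(hasDerivAt_Ffun hm_pos hm_C1 hδm hx).deriv]
          exact gfun_nonneg m x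
      have hexpneg : ∀ x ∈ Ioo 0 α, δ ≤ x → Real.exp (-(Ffun m δ x)) ≤ 1 := by
        intro x hx hδx
        rw [Real.exp_le_one_iff]
        have : (0:ℝ) ≤ Ffun m δ x := by rw [← hFδ]; exact Fmono hδm hx hδx
        linarith
      have hB2 : (0:ℝ) ≤ (↑K + ↑K) / m δ := by positivity
      have p2r : LipschitzOnWith ((↑K + ↑K) / m δ).toNNReal
          (fun s => m s * Real.exp (-(Ffun m δ s)) / m δ) (Icc δ (α - δ)) := by
        refine lip_of_bound hB2 (fun x hx =>
          (((hasDerivAt_m hm_C1 (hsub2 hx)).mul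
            (((hasDerivAt_Ffun hm_pos hm_C1 hδm (hsub2 hx)).neg).exp)).div_const
              (m δ)).hasDerivWithinAt) ?_
        intro x hx
        have hx' := hsub2 hx
        have hA : |deriv m x * Real.exp (-(Ffun m δ x))| ≤ ↑K := by
          rw [abs_mul, abs_of_pos (Real.exp_pos _)]
          calc |deriv m x| * Real.exp (-(Ffun m δ x)) ≤ ↑K * 1 :=
                mul_le_mul (hbd x hx') (hexpneg x hx' hx.1) (Real.exp_pos _).le K.coe_nonneg
            _ = ↑K := mul_one _
        have hB : |m x * (Real.exp (-(Ffun m δ x)) * -(gfun m x))| ≤ ↑K := by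
          have hBt : m x * (Real.exp (-(Ffun m δ x)) * -(gfun m x)) =
              -((m x * gfun m x) * Real.exp (-(Ffun m δ x))) := by ring
          rw [hBt, abs_neg, abs_mul, m_mul_gfun hm_pos hx',
            abs_of_nonneg (le_max_right _ _), abs_of_pos (Real.exp_pos _)]
          calc max (deriv m x) 0 * Real.exp (-(Ffun m δ x)) ≤ ↑K * 1 :=
                mul_le_mul (max_le (le_trans (le_abs_self _) (hbd x hx')) K.coe_nonneg)
                  (hexpneg x hx' hx.1) (Real.exp_pos _).le K.coe_nonneg
            _ = ↑K := mul_one _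
        calc |(deriv m x * Real.exp (-(Ffun m δ x)) +
              m x * (Real.exp (-(Ffun m δ x)) * -(gfun m x))) / m δ|
            = |deriv m x * Real.exp (-(Ffun m δ x)) +
              m x * (Real.exp (-(Ffun m δ x)) * -(gfun m x))| / m δ := by
              rw [abs_div, abs_of_pos hmδ]
          _ ≤ (|deriv m x * Real.exp (-(Ffun m δ x))| +
              |m x * (Real.exp (-(Ffun m δ x)) * -(gfun m x))|) / m δ := by
              gcongr
              exact abs_add_le _ _
          _ ≤ (↑K + ↑K) / m δ := by gcongr
      have em2a : EqOn (fun s => if s ≤ δ then (1:ℝ) else m s * Real.exp (-(Ffun m δ s)) / m δ)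
          (fun _ => (1:ℝ)) (Icc 0 δ) := fun s hs => if_pos hs.2
      have em2b : EqOn (fun s => if s ≤ δ then (1:ℝ) else m s * Real.exp (-(Ffun m δ s)) / m δ)
          (fun s => m s * Real.exp (-(Ffun m δ s)) / m δ) (Icc δ (α - δ)) := by
        intro s hs
        by_cases h : s ≤ δ
        · have hsd : s = δ := le_antisymm h hs.1
          show (if s ≤ δ then (1:ℝ) else m s * Real.exp (-(Ffun m δ s)) / m δ) =
            m s * Real.exp (-(Ffun m δ s)) / m δ
          rw [if_pos h, hsd, hFδ, neg_zero, Real.exp_zero, mul_one, div_self hmδ.ne']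
        · show (if s ≤ δ then (1:ℝ) else m s * Real.exp (-(Ffun m δ s)) / m δ) = _
          rw [if_neg h]
      have em2c : EqOn (fun s => if s ≤ δ then (1:ℝ) else m s * Real.exp (-(Ffun m δ s)) / m δ)
          (fun s => m s * (Real.exp (-(Ffun m δ (α - δ))) / m δ)) (Icc (α - δ) α) := by
        intro s hs
        have h : ¬ s ≤ δ := not_le.mpr (lt_of_lt_of_le hδd hs.1)
        show (if s ≤ δ then (1:ℝ) else m s * Real.exp (-(Ffun m δ s)) / m δ) = _
        rw [if_neg h, hFconst s hs, mul_div_assoc]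
      have hc2 : (0:ℝ) ≤ Real.exp (-(Ffun m δ (α - δ))) / m δ := by positivity
      have p3r : LipschitzOnWith (K * (Real.exp (-(Ffun m δ (α - δ))) / m δ).toNNReal)
          (fun s => m s * (Real.exp (-(Ffun m δ (α - δ))) / m δ)) (Icc (α - δ) α) :=
        lip_mul_const (hK.mono (Icc_subset_Icc (by linarith) le_rfl)) hc2
      refine ⟨(((↑K + ↑K) / m δ).toNNReal ⊔
        (K * (Real.exp (-(Ffun m δ (α - δ))) / m δ).toNNReal)), ?_⟩
      have g1 := lip_glue hδ0.le hδd.le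
        (lip_congr (lip_const (K := (((↑K + ↑K) / m δ).toNNReal ⊔
          (K * (Real.exp (-(Ffun m δ (α - δ))) / m δ).toNNReal)))) em2a)
        (lip_weaken (lip_congr p2r em2b) le_sup_left)
      exact lip_glue (by linarith : (0:ℝ) ≤ α - δ) hdα.le g1
        (lip_weaken (lip_congr p3r em2c) le_sup_right)
    · -- m1 0 = 0
      show (if (0:ℝ) ≤ δ then m 0 else m δ * Real.exp (Ffun m δ 0)) = 0
      rw [if_pos hδ0.le, hm0]
    · -- m2 α = 0
      show (if α ≤ δ then (1:ℝ) else m α * Real.exp (-(Ffun m δ α)) / m δ) = 0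
      rw [if_neg (not_le.mpr hδα), hmα, zero_mul, zero_div]
    · -- product on Icc
      intro s hs
      by_cases h : s ≤ δ
      · simp only [if_pos h, mul_one]
      · simp only [if_neg h]
        push_neg at h
        rcases eq_or_lt_of_le hs.2 with he | he
        · subst he
          rw [hmα, zero_mul, zero_div, mul_zero]
        · exact h7 s ⟨lt_trans hδ0 h, he⟩
end

section
/- Let α > 0, s₀ ∈ (0,α), and let Φ : [0,α] → ℝ be continuous, nondecreasing, differentiable on (0,α), with Φ(s₀) = 0. Let κ : (0,1] → (0,∞) be bounded, and for each ε ∈ (0,1] let Φ_ε : [0,α] → ℝ be continuous, differentiable on (0,α), with Φ_ε(s₀) = 0 and min(Φ′(s), 1/κ(ε)) + ε ≤ Φ_ε′(s) ≤ (1+ε)·(min(Φ′(s), 1/κ(ε)) + ε) for all s ∈ (0,α). Assume there exists K ≥ 0 such that for all s ∈ (0,α): (Φ(α) − Φ(s))·|Φ(s)| ≤ K·Φ′(s) and (Φ(s) − Φ(0))·|Φ(s)| ≤ K·Φ′(s). Then there exists K′ ≥ 0 such that for all ε ∈ (0,1] and all s ∈ (0,α): (Φ_ε(α) − Φ_ε(s))·|Φ_ε(s)|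 ≤ K′·Φ_ε′(s) and (Φ_ε(s) − Φ_ε(0))·|Φ_ε(s)| ≤ K′·Φ_ε′(s). -/
open Set

lemma aux_deriv_nonneg_of_monotoneOn {f : ℝ → ℝ} {a b s d : ℝ}
    (hs : s ∈ Ioo a b) (hmono : MonotoneOn f (Icc a b))
    (hd : HasDerivAt f d s) : 0 ≤ d := by
  have ht := hasDerivAt_iff_tendsto_slope.mp hd
  refine ge_of_tendsto ht ?_
  filter_upwards [self_mem_nhdsWithin,
    mem_nhdsWithin_of_mem_nhds (Ioo_mem_nhds hs.1 hs.2)] with x hx hxI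
  have hxIcc : x ∈ Icc a b := Ioo_subset_Icc_self hxI
  have hsIcc : s ∈ Icc a b := Ioo_subset_Icc_self hs
  rw [slope_def_field]
  rcases lt_or_gt_of_ne (hx : x ≠ s) with h | h
  · have h1 : f x ≤ f s := hmono hxIcc hsIcc h.le
    exact div_nonneg_iff.mpr (Or.inr ⟨by linarith, by linarith⟩)
  · have h1 : f s ≤ f x := hmono hsIcc hxIcc h.le
    exact div_nonneg (by linarith) (by linarith)

lemma aux_main {K αv C M B' ε P D A φD φA d : ℝ}
    (hK : 0 ≤ K) (hα0 : 0 ≤ αv) (hC : 0 ≤ C) (hM : 0 ≤ M) (hB'0 : 0 ≤ B')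
    (hε0 : 0 ≤ ε)
    (hA0 : 0 ≤ A) (hAM : A ≤ M) (hA2 : A ≤ 2*φA + 2*αv*ε)
    (hD2M : D ≤ 2*M) (hDle : D ≤ 2*φD + 2*αv*ε)
    (hφD0 : 0 ≤ φD) (hφDC : φD ≤ C)
    (hcond : φD * φA ≤ K * d)
    (hεP : ε ≤ P) (hP0 : 0 ≤ P)
    (hcase : d ≤ P ∨ 1 ≤ B' * P) :
    D * A ≤ (4*K + 4*αv*C + 2*αv*M + 2*M^2*B') * P := by
  rcases hcase with hdP | hBP
  · have h_a := mul_le_mul_of_nonneg_right hDle hA0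
    have h_b := mul_le_mul_of_nonneg_left hA2 (by linarith : (0:ℝ) ≤ 2*φD)
    have h_c := mul_le_mul_of_nonneg_left hAM (by positivity : (0:ℝ) ≤ 2*αv*ε)
    have h_d := mul_le_mul_of_nonneg_left hdP hK
    have h_e := mul_le_mul_of_nonneg_left hεP (mul_nonneg hα0 hC)
    have h_f := mul_le_mul_of_nonneg_left hεP (mul_nonneg hα0 hM)
    have h_g := mul_le_mul_of_nonneg_left hφDC (mul_nonneg hα0 hε0)
    have h_h : 0 ≤ 2*M^2*B'*P := by positivity
    nlinarith [h_a, h_b, h_c, h_d, h_e, h_f, h_g, h_h, hcond]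
  · have h_ab := mul_le_mul hD2M hAM hA0 (by linarith)
    have h_p := mul_le_mul_of_nonneg_left hBP (by positivity : (0:ℝ) ≤ 2*M^2)
    have h1 := mul_nonneg hK hP0
    have h2 := mul_nonneg (mul_nonneg hα0 hC) hP0
    have h3 := mul_nonneg (mul_nonneg hα0 hM) hP0
    nlinarith [h_ab, h_p]

/-- The technical regularity condition (H₅) holds uniformly in ε for the regularised
family of diffusion fluxes Φ_ε. -/
theorem regularised_technical_condition_uniform
    (α s₀ : ℝ) (hα : 0 < α) (hs₀ : s₀ ∈ Ioo 0 α)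
    (Φ Φ' : ℝ → ℝ)
    (hΦ_cont : ContinuousOn Φ (Icc 0 α))
    (hΦ_mono : MonotoneOn Φ (Icc 0 α))
    (hΦ_deriv : ∀ s ∈ Ioo 0 α, HasDerivAt Φ (Φ' s) s)
    (hΦs₀ : Φ s₀ = 0)
    (κ : ℝ → ℝ) (hκ_pos : ∀ ε ∈ Ioc (0:ℝ) 1, 0 < κ ε)
    (hκ_bdd : ∃ B : ℝ, ∀ ε ∈ Ioc (0:ℝ) 1, κ ε ≤ B)
    (Φε Φε' : ℝ → ℝ → ℝ)
    (hΦε_cont : ∀ ε ∈ Ioc (0:ℝ) 1, ContinuousOn (Φε ε) (Icc 0 α))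
    (hΦε_deriv : ∀ ε ∈ Ioc (0:ℝ) 1, ∀ s ∈ Ioo 0 α, HasDerivAt (Φε ε) (Φε' ε s) s)
    (hΦεs₀ : ∀ ε ∈ Ioc (0:ℝ) 1, Φε ε s₀ = 0)
    (hΦε_bounds : ∀ ε ∈ Ioc (0:ℝ) 1, ∀ s ∈ Ioo 0 α,
      min (Φ' s) (1 / κ ε) + ε ≤ Φε' ε s ∧
      Φε' ε s ≤ (1 + ε) * (min (Φ' s) (1 / κ ε) + ε))
    (K : ℝ) (hK : 0 ≤ K)
    (hΦ_cond : ∀ s ∈ Ioo 0 α,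
      (Φ α - Φ s) * |Φ s| ≤ K * Φ' s ∧ (Φ s - Φ 0) * |Φ s| ≤ K * Φ' s) :
    ∃ K' : ℝ, 0 ≤ K' ∧ ∀ ε ∈ Ioc (0:ℝ) 1, ∀ s ∈ Ioo 0 α,
      (Φε ε α - Φε ε s) * |Φε ε s| ≤ K' * Φε' ε s ∧
      (Φε ε s - Φε ε 0) * |Φε ε s| ≤ K' * Φε' ε s := by
  obtain ⟨B, hB⟩ := hκ_bdd
  set B' : ℝ := max B 1 with hB'def
  have hB'1 : (1:ℝ) ≤ B' := le_max_right _ _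
  have hB'0 : (0:ℝ) < B' := lt_of_lt_of_le one_pos hB'1
  have h0Icc : (0:ℝ) ∈ Icc 0 α := left_mem_Icc.2 hα.le
  have hαIcc : α ∈ Icc (0:ℝ) α := right_mem_Icc.2 hα.le
  have hs₀Icc : s₀ ∈ Icc (0:ℝ) α := Ioo_subset_Icc_self hs₀
  set C : ℝ := Φ α - Φ 0 with hCdef
  have hC : 0 ≤ C := sub_nonneg.2 (hΦ_mono h0Icc hαIcc hα.le)
  set M : ℝ := 2*C + 2*α with hMdef
  have hM : 0 ≤ M := by nlinarith
  have hΦ'0 : ∀ s ∈ Ioo 0 α, 0 ≤ Φ' s := fun s hs =>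
    aux_deriv_nonneg_of_monotoneOn hs hΦ_mono (hΦ_deriv s hs)
  refine ⟨4*K + 4*α*C + 2*α*M + 2*M^2*B', by positivity, ?_⟩
  intro ε hε s hs
  have hε0 : 0 < ε := hε.1
  have hε1 : ε ≤ 1 := hε.2
  have hκε : 0 < κ ε := hκ_pos ε hε
  have hκB : κ ε ≤ B' := le_trans (hB ε hε) (le_max_left _ _)
  -- Φε ε is monotone on [0,α]
  have hΦε_mono : MonotoneOn (Φε ε) (Icc 0 α) := by
    apply monotoneOn_of_hasDerivWithinAt_nonneg (convex_Icc 0 α) (hΦε_cont ε hε)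
      (f' := Φε' ε)
    · intro x hx
      rw [interior_Icc] at hx
      exact (hΦε_deriv ε hε x hx).hasDerivWithinAt
    · intro x hx
      rw [interior_Icc] at hx
      have h1 := (hΦε_bounds ε hε x hx).1
      have h2 : 0 ≤ min (Φ' x) (1/κ ε) := le_min (hΦ'0 x hx) (by positivity)
      linarith
  -- key difference bound
  have hg : MonotoneOn (fun t => (1+ε)*Φ t + 2*ε*t - Φε ε t) (Icc 0 α) := by
    apply monotoneOn_of_hasDerivWithinAt_nonneg (convex_Icc 0 α)
      (f' := fun x => (1+ε)*Φ' x + 2*ε - Φε' ε x)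
    · exact ((continuousOn_const.mul hΦ_cont).add
        ((continuous_const.mul continuous_id).continuousOn)).sub (hΦε_cont ε hε)
    · intro x hx
      rw [interior_Icc] at hx
      have : HasDerivAt (fun t => (1+ε)*Φ t + 2*ε*t - Φε ε t)
          ((1+ε)*Φ' x + 2*ε - Φε' ε x) x := by
        have h1 := (hΦ_deriv x hx).const_mul (1+ε)
        have h2 : HasDerivAt (fun t : ℝ => 2*ε*t) (2*ε) x := by
          simpa using (hasDerivAt_id x).const_mul (2*ε)
        exact (h1.add h2).sub (hΦε_deriv ε hε x hx)
      exact this.hasDerivWithinAt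
    · intro x hx
      rw [interior_Icc] at hx
      have h2 := (hΦε_bounds ε hε x hx).2
      have hmin : min (Φ' x) (1/κ ε) ≤ Φ' x := min_le_left _ _
      have hΦ'x := hΦ'0 x hx
      nlinarith [mul_le_mul_of_nonneg_left hmin (by linarith : (0:ℝ) ≤ 1+ε)]
  have hdiff : ∀ a ∈ Icc (0:ℝ) α, ∀ b ∈ Icc (0:ℝ) α, a ≤ b →
      Φε ε b - Φε ε a ≤ 2*(Φ b - Φ a) + 2*α*ε := by
    intro a ha b hb hab
    have hgab := hg ha hb hab
    simp only at hgab
    have hΦab : 0 ≤ Φ b - Φ a := sub_nonneg.2 (hΦ_mono ha hb hab)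
    have hba : b - a ≤ α := by
      obtain ⟨ha1, _⟩ := ha; obtain ⟨_, hb2⟩ := hb; linarith
    have p1 : 0 ≤ (1-ε)*(Φ b - Φ a) := mul_nonneg (by linarith) hΦab
    have p2 : 0 ≤ ε*(α - (b - a)) := mul_nonneg hε0.le (by linarith)
    nlinarith [hgab, p1, p2]
  -- uniform bound |Φε ε x| ≤ M on [0,α]
  have habs : ∀ x ∈ Icc (0:ℝ) α, |Φε ε x| ≤ M := by
    intro x hx
    have hεα : 2*α*ε ≤ 2*α := by nlinarith
    rw [abs_le]
    rcases le_total x s₀ with h | h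
    · have hmx : Φε ε x ≤ Φε ε s₀ := hΦε_mono hx hs₀Icc h
      have hd := hdiff x hx s₀ hs₀Icc h
      have hΦd : Φ s₀ - Φ x ≤ C := by
        have := hΦ_mono hs₀Icc hαIcc hs₀.2.le
        have := hΦ_mono h0Icc hx hx.1
        rw [hCdef]; linarith
      constructor
      · rw [hΦεs₀ ε hε] at hd hmx; rw [hMdef]; linarith
      · rw [hΦεs₀ ε hε] at hmx; linarith
    · have hmx : Φε ε s₀ ≤ Φε ε x := hΦε_mono hs₀Icc hx h
      have hd := hdiff s₀ hs₀Icc x hx h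
      have hΦd : Φ x - Φ s₀ ≤ C := by
        have := hΦ_mono hx hαIcc hx.2
        have := hΦ_mono h0Icc hs₀Icc hs₀.1.le
        rw [hCdef]; linarith
      constructor
      · rw [hΦεs₀ ε hε] at hmx; linarith
      · rw [hΦεs₀ ε hε] at hd hmx; rw [hMdef]; linarith
  have hsIcc : s ∈ Icc (0:ℝ) α := Ioo_subset_Icc_self hs
  -- pointwise bound |Φε ε s| ≤ 2|Φ s| + 2αε
  have habs2 : |Φε ε s| ≤ 2*|Φ s| + 2*α*ε := by
    rcases le_total s s₀ with h | h
    · have hmx : Φε ε s ≤ Φε ε s₀ := hΦε_mono hsIcc hs₀Icc h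
      have hΦx : Φ s ≤ Φ s₀ := hΦ_mono hsIcc hs₀Icc h
      have hd := hdiff s hsIcc s₀ hs₀Icc h
      rw [hΦεs₀ ε hε] at hmx hd
      rw [abs_of_nonpos hmx, abs_of_nonpos (by linarith : Φ s ≤ 0)]
      linarith
    · have hmx : Φε ε s₀ ≤ Φε ε s := hΦε_mono hs₀Icc hsIcc h
      have hΦx : Φ s₀ ≤ Φ s := hΦ_mono hs₀Icc hsIcc h
      have hd := hdiff s₀ hs₀Icc s hsIcc h
      rw [hΦεs₀ ε hε] at hmx hd
      rw [abs_of_nonneg hmx, abs_of_nonneg (by linarith : 0 ≤ Φ s)]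
      linarith
  -- derivative facts
  have h1 := (hΦε_bounds ε hε s hs).1
  have hminnn : 0 ≤ min (Φ' s) (1/κ ε) := le_min (hΦ'0 s hs) (by positivity)
  have hεP : ε ≤ Φε' ε s := by linarith
  have hP0 : 0 ≤ Φε' ε s := by linarith
  -- the case dichotomy
  have hcase : Φ' s ≤ Φε' ε s ∨ 1 ≤ B' * Φε' ε s := by
    rcases le_or_gt (Φ' s) (1/κ ε) with h | h
    · left; rw [min_eq_left h] at h1; linarith
    · right
      rw [min_eq_right h.le] at h1
      have h1B : 1/B' ≤ 1/κ ε := one_div_le_one_div_of_le hκε hκB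
      have : 1/B' ≤ Φε' ε s := by linarith
      calc (1:ℝ) = B' * (1/B') := by field_simp
        _ ≤ B' * Φε' ε s := mul_le_mul_of_nonneg_left this hB'0.le
  have habsM : |Φε ε s| ≤ M := habs s hsIcc
  have habsα : |Φε ε α| ≤ M := habs α hαIcc
  have habs0' : |Φε ε 0| ≤ M := habs 0 h0Icc
  obtain ⟨hc1, hc2⟩ := hΦ_cond s hs
  constructor
  · refine aux_main hK hα.le hC hM hB'0.le hε0.le (abs_nonneg _) habsM habs2 ?_ ?_ ?_ ?_ hc1 hεP hP0 hcase
    · have := le_abs_self (Φε ε α)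
      have := neg_abs_le (Φε ε s)
      linarith
    · exact hdiff s hsIcc α hαIcc hs.2.le
    · exact sub_nonneg.2 (hΦ_mono hsIcc hαIcc hs.2.le)
    · have := hΦ_mono h0Icc hsIcc hs.1.le
      rw [hCdef]; linarith
  · refine aux_main hK hα.le hC hM hB'0.le hε0.le (abs_nonneg _) habsM habs2 ?_ ?_ ?_ ?_ hc2 hεP hP0 hcase
    · have := le_abs_self (Φε ε s)
      have := neg_abs_le (Φε ε 0)
      linarith
    · exact hdiff 0 h0Icc s hsIcc hs.1.le
    · exact sub_nonneg.2 (hΦ_mono h0Icc hsIcc hs.1.le)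
    · have := hΦ_mono hsIcc hαIcc hs.2.le
      rw [hCdef]; linarith
end

section
/- Let M ∈ (0, α|Ω|) and let ρ̂ be an L¹-local minimiser of ℱ on 𝒜_M. Then there exists a constant C ∈ ℝ such that for a.e. x ∈ Ω: (i) if 0 < ρ̂(x) < α then U′(ρ̂(x)) + V(x) = C; (ii) if ρ̂(x) = 0 then C − V(x) ≤ ζ̲; (iii) if ρ̂(x) = α then C − V(x) ≥ ζ̄, where the inequalities in (ii) and (iii) are understood in the extended real numbers. -/
open Set MeasureTheory Filter Topology

lemma el_mvt {α : ℝ} {Uc U' : ℝ → ℝ} (hUc : Continuous Uc)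
    (hder : ∀ s ∈ Ioo 0 α, HasDerivAt Uc (U' s) s) {s h : ℝ}
    (hs0 : 0 ≤ s) (hsh : s + h ≤ α) (hh : 0 < h) :
    ∃ ξ, s < ξ ∧ ξ < s + h ∧ Uc (s + h) - Uc s = h * U' ξ := by
  obtain ⟨c, hc, hc'⟩ := exists_hasDerivAt_eq_slope Uc U' (by linarith : s < s + h)
    hUc.continuousOn
    (fun x hx => hder x ⟨lt_of_le_of_lt hs0 hx.1, lt_of_lt_of_le hx.2 hsh⟩)
  refine ⟨c, hc.1, hc.2, ?_⟩
  have hne : s + h - s ≠ 0 := by simp; linarith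
  field_simp at hc'
  rw [← hc']; ring

lemma el_pick {X : Type*} [MeasurableSpace X] (μ : Measure X) {α : ℝ} (hα : 0 < α)
    (ρ : X → ℝ) (E : Set X) (hE : μ E ≠ 0) (hEsub : ∀ x ∈ E, ρ x ∈ Ioo 0 α) :
    ∃ c : ℝ, 0 < c ∧ c ≤ α - c ∧ μ (E ∩ {x | ρ x ∈ Icc c (α - c)}) ≠ 0 := by
  by_cases hall : ∀ n : ℕ, μ (E ∩ {x | ρ x ∈ Icc (1/((n:ℝ)+1)) (α - 1/((n:ℝ)+1))}) = 0
  · exfalso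
    apply hE
    have hsub : E ⊆ ⋃ n : ℕ, (E ∩ {x | ρ x ∈ Icc (1/((n:ℝ)+1)) (α - 1/((n:ℝ)+1))}) := by
      intro x hx
      obtain ⟨h1, h2⟩ := hEsub x hx
      obtain ⟨n, hn⟩ := exists_nat_one_div_lt (show (0:ℝ) < min (ρ x) (α - ρ x) by
        exact lt_min h1 (by linarith))
      have hn1 : 1/((n:ℝ)+1) < ρ x := lt_of_lt_of_le hn (min_le_left _ _)
      have hn2 : 1/((n:ℝ)+1) < α - ρ x := lt_of_lt_of_le hn (min_le_right _ _)
      exact mem_iUnion.2 ⟨n, hx, ⟨hn1.le, by linarith⟩⟩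
    exact measure_mono_null hsub (measure_iUnion_null hall)
  · push_neg at hall
    obtain ⟨n, hn⟩ := hall
    refine ⟨1/((n:ℝ)+1), by positivity, ?_, hn⟩
    obtain ⟨x, hx⟩ := nonempty_of_measure_ne_zero hn
    have := hx.2
    exact le_trans this.1 this.2


lemma el_key2 {X : Type*} [MeasurableSpace X] (μ : Measure X) (P Q : Set X) (g h : X → ℝ)
    (hP : μ P ≠ 0) (hQ : μ Q ≠ 0)
    (hyp : ∀ p q : ℝ, p < q → μ (P ∩ {x | g x < p}) = 0 ∨ μ (Q ∩ {x | q < h x}) = 0) :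
    ∃ C : ℝ, μ (P ∩ {x | g x < C}) = 0 ∧ μ (Q ∩ {x | C < h x}) = 0 := by
  set T : Set ℝ := {c | μ (Q ∩ {x | c < h x}) = 0} with hT
  have hTup : ∀ c ∈ T, ∀ c', c ≤ c' → c' ∈ T := by
    intro c hc c' hcc'
    exact measure_mono_null (inter_subset_inter_right _ (fun x hx => lt_of_le_of_lt hcc' hx)) hc
  have hTne : T.Nonempty := by
    by_cases hall : ∀ n : ℕ, μ (P ∩ {x | g x < (n:ℝ)}) = 0
    · exfalso
      apply hP
      have hsub : P ⊆ ⋃ n : ℕ, (P ∩ {x | g x < (n:ℝ)}) := by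
        intro x hx
        obtain ⟨n, hn⟩ := exists_nat_gt (g x)
        exact mem_iUnion.2 ⟨n, hx, hn⟩
      exact measure_mono_null hsub (measure_iUnion_null hall)
    · push_neg at hall
      obtain ⟨n, hn⟩ := hall
      rcases hyp n (n + 1) (by linarith) with h1 | h2
      · exact absurd h1 hn
      · exact ⟨n + 1, h2⟩
  have hTbdd : BddBelow T := by
    by_contra hb
    apply hQ
    have hmem : ∀ n : ℕ, (-(n:ℝ)) ∈ T := by
      intro n
      obtain ⟨c, hc, hcn⟩ := not_bddBelow_iff.1 hb (-(n:ℝ))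
      exact hTup c hc _ hcn.le
    have hsub : Q ⊆ ⋃ n : ℕ, (Q ∩ {x | (-(n:ℝ)) < h x}) := by
      intro x hx
      obtain ⟨n, hn⟩ := exists_nat_gt (-(h x))
      exact mem_iUnion.2 ⟨n, hx, show (-(n:ℝ)) < h x by linarith⟩
    exact measure_mono_null hsub (measure_iUnion_null hmem)
  refine ⟨sInf T, ?_, ?_⟩
  · have hsub : P ∩ {x | g x < sInf T} ⊆
        ⋃ n : ℕ, (P ∩ {x | g x < sInf T - 1 / ((n:ℝ) + 1)}) := by
      intro x hx
      obtain ⟨n, hn⟩ := exists_nat_one_div_lt (show (0:ℝ) < sInf T - g x from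
        sub_pos.2 hx.2)
      exact mem_iUnion.2 ⟨n, hx.1, show g x < sInf T - 1 / ((n:ℝ) + 1) by linarith⟩
    refine measure_mono_null hsub (measure_iUnion_null fun n => ?_)
    rcases hyp (sInf T - 1 / ((n:ℝ) + 1)) (sInf T - 1 / (2 * ((n:ℝ) + 1))) (by
      have h1 : (0:ℝ) < (n:ℝ) + 1 := by positivity
      have : 1 / (2 * ((n:ℝ) + 1)) < 1 / ((n:ℝ) + 1) := by
        apply one_div_lt_one_div_of_lt h1; linarith
      linarith) with h1 | h2
    · exact h1
    · exfalso
      have hle := csInf_le hTbdd h2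
      have h1 : (0:ℝ) < 1 / (2 * ((n:ℝ) + 1)) := by positivity
      linarith
  · have hsub : Q ∩ {x | sInf T < h x} ⊆
        ⋃ n : ℕ, (Q ∩ {x | sInf T + 1 / ((n:ℝ) + 1) < h x}) := by
      intro x hx
      obtain ⟨n, hn⟩ := exists_nat_one_div_lt (show (0:ℝ) < h x - sInf T from
        sub_pos.2 hx.2)
      exact mem_iUnion.2 ⟨n, hx.1, show sInf T + 1 / ((n:ℝ) + 1) < h x by linarith⟩
    refine measure_mono_null hsub (measure_iUnion_null fun n => ?_)
    have hmem : sInf T + 1 / ((n:ℝ) + 1) ∈ T := by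
      obtain ⟨c, hc, hcl⟩ := (csInf_lt_iff hTbdd hTne).1
        (show sInf T < sInf T + 1 / ((n:ℝ) + 1) by
          have : (0:ℝ) < 1 / ((n:ℝ)+1) := by positivity
          linarith)
      exact hTup c hc _ hcl.le
    exact hmem


lemma el_master {X : Type*} [MeasurableSpace X] {μ : Measure X} [IsFiniteMeasure μ]
    {α : ℝ} (hα : 0 < α) {U : ℝ → ℝ} {V ρ : X → ℝ}
    (hUc : Continuous U)
    (hVm : AEStronglyMeasurable V μ) {BV : ℝ} (hVB : ∀ᵐ x ∂μ, |V x| ≤ BV)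
    (hρint : Integrable ρ μ) (hρmem : ∀ᵐ x ∂μ, ρ x ∈ Icc 0 α)
    {r : ℝ} (hr : 0 < r)
    (hmin : ∀ ρ' : X → ℝ, Integrable ρ' μ → (∀ᵐ x ∂μ, ρ' x ∈ Icc 0 α) →
      (∫ x, ρ' x ∂μ) = (∫ x, ρ x ∂μ) → (∫ x, |ρ' x - ρ x| ∂μ) < r →
      ∫ x, (U (ρ x) + V x * ρ x) ∂μ ≤ ∫ x, (U (ρ' x) + V x * ρ' x) ∂μ)
    {A B : Set X} (hA : MeasurableSet A) (hB : MeasurableSet B) (hd : Disjoint A B)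
    (hμA : μ A ≠ 0) (hμB : μ B ≠ 0)
    {h₀ KA KB : ℝ} (hh₀ : 0 < h₀)
    (hAα : ∀ᵐ x ∂μ, x ∈ A → ρ x + h₀ ≤ α)
    (hB0 : ∀ᵐ x ∂μ, x ∈ B → h₀ ≤ ρ x)
    (hKA : ∀ᵐ x ∂μ, x ∈ A → ∀ h : ℝ, 0 < h → h ≤ h₀ → U (ρ x + h) - U (ρ x) + h * V x ≤ h * KA)
    (hKB : ∀ᵐ x ∂μ, x ∈ B → ∀ h : ℝ, 0 < h → h ≤ h₀ →
      U (ρ x - h) - U (ρ x) - h * V x ≤ -(h * KB)) :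
    KB ≤ KA := by
  by_contra hlt
  push_neg at hlt
  set a : ℝ := (μ A).toReal with ha_def
  set b : ℝ := (μ B).toReal with hb_def
  have hμAfin : μ A ≠ ⊤ := measure_ne_top μ A
  have hμBfin : μ B ≠ ⊤ := measure_ne_top μ B
  have ha : 0 < a := ENNReal.toReal_pos hμA hμAfin
  have hb : 0 < b := ENNReal.toReal_pos hμB hμBfin
  set t : ℝ := min (r/4) (min (h₀ * a) (h₀ * b)) with ht_def
  have ht : 0 < t := by
    apply lt_min (by linarith)
    exact lt_min (by positivity) (by positivity)
  have hta : t / a ≤ h₀ := by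
    rw [div_le_iff₀ ha]
    calc t ≤ h₀ * a := le_trans (min_le_right _ _) (min_le_left _ _)
    _ = h₀ * a := rfl
  have htb : t / b ≤ h₀ := by
    rw [div_le_iff₀ hb]
    exact le_trans (min_le_right _ _) (min_le_right _ _)
  have hta' : 0 < t / a := by positivity
  have htb' : 0 < t / b := by positivity
  set ρ' : X → ℝ := fun x =>
    ρ x + A.indicator (fun _ => t / a) x - B.indicator (fun _ => t / b) x with hρ'_def
  have hiA : Integrable (A.indicator fun _ => t / a) μ := (integrable_const _).indicator hA
  have hiB : Integrable (B.indicator fun _ => t / b) μ := (integrable_const _).indicator hB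
  have hρ'int : Integrable ρ' μ := (hρint.add hiA).sub hiB
  -- pointwise description
  have hval : ∀ x, (x ∈ A → ρ' x = ρ x + t / a) ∧ (x ∈ B → ρ' x = ρ x - t / b) ∧
      (x ∉ A → x ∉ B → ρ' x = ρ x) := by
    intro x
    refine ⟨fun hx => ?_, fun hx => ?_, fun hx hx' => ?_⟩
    · have hxB : x ∉ B := fun hxb => (Set.disjoint_left.1 hd hx) hxb
      simp [hρ'_def, indicator_of_mem hx, indicator_of_notMem hxB]
    · have hxA : x ∉ A := fun hxa => (Set.disjoint_left.1 hd hxa) hx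
      simp [hρ'_def, indicator_of_mem hx, indicator_of_notMem hxA]
    · simp [hρ'_def, indicator_of_notMem hx, indicator_of_notMem hx']
  have hρ'mem : ∀ᵐ x ∂μ, ρ' x ∈ Icc 0 α := by
    filter_upwards [hρmem, hAα, hB0] with x hmem hxA hxB
    by_cases hxa : x ∈ A
    · rw [(hval x).1 hxa]
      constructor
      · have := hmem.1; positivity
      · have := hxA hxa; linarith [hta]
    by_cases hxb : x ∈ B
    · rw [(hval x).2.1 hxb]
      constructor
      · have := hxB hxb; linarith [htb]
      · have := hmem.2; linarith [htb'.le]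
    · rw [(hval x).2.2 hxa hxb]; exact hmem
  have hintA : ∫ x, A.indicator (fun _ => t / a) x ∂μ = t := by
    rw [integral_indicator_const _ hA]
    simp only [smul_eq_mul, measureReal_def, ← ha_def]
    field_simp
  have hintB : ∫ x, B.indicator (fun _ => t / b) x ∂μ = t := by
    rw [integral_indicator_const _ hB]
    simp only [smul_eq_mul, measureReal_def, ← hb_def]
    field_simp
  have hmass : (∫ x, ρ' x ∂μ) = ∫ x, ρ x ∂μ := by
    have h1 : (∫ x, ρ' x ∂μ) = (∫ x, (ρ x + A.indicator (fun _ => t / a) x) ∂μ)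
        - ∫ x, B.indicator (fun _ => t / b) x ∂μ := integral_sub (hρint.add hiA) hiB
    have h2 : (∫ x, (ρ x + A.indicator (fun _ => t / a) x) ∂μ)
        = (∫ x, ρ x ∂μ) + ∫ x, A.indicator (fun _ => t / a) x ∂μ := integral_add hρint hiA
    rw [h1, h2, hintA, hintB]; ring
  have hdist : (∫ x, |ρ' x - ρ x| ∂μ) < r := by
    have heq : ∀ x, |ρ' x - ρ x| =
        A.indicator (fun _ => t / a) x + B.indicator (fun _ => t / b) x := by
      intro x
      by_cases hxa : x ∈ A
      · have hxB : x ∉ B := fun hxb => (Set.disjoint_left.1 hd hxa) hxb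
        rw [(hval x).1 hxa, indicator_of_mem hxa, indicator_of_notMem hxB]
        rw [show ρ x + t / a - ρ x = t / a by ring, abs_of_pos hta']
        ring
      by_cases hxb : x ∈ B
      · rw [(hval x).2.1 hxb, indicator_of_notMem hxa, indicator_of_mem hxb]
        rw [show ρ x - t / b - ρ x = -(t / b) by ring, abs_neg, abs_of_pos htb']
        ring
      · rw [(hval x).2.2 hxa hxb, indicator_of_notMem hxa, indicator_of_notMem hxb]
        simp
    calc (∫ x, |ρ' x - ρ x| ∂μ)
        = ∫ x, (A.indicator (fun _ => t / a) x + B.indicator (fun _ => t / b) x) ∂μ := by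
          exact integral_congr_ae (Eventually.of_forall heq)
      _ = t + t := by rw [integral_add hiA hiB, hintA, hintB]
      _ < r := by
          have : t ≤ r / 4 := min_le_left _ _
          linarith
  have hineq := hmin ρ' hρ'int hρ'mem hmass hdist
  -- integrability of all energy pieces
  obtain ⟨CU, hCU⟩ : ∃ C, ∀ s ∈ Icc (-(1:ℝ) + -(t/a) + -α) (α + t/a + 1), |U s| ≤ C := by
    obtain ⟨C, hC⟩ := (isCompact_Icc (a := (-(1:ℝ) + -(t/a) + -α)) (b := α + t/a + 1)).exists_bound_of_continuousOn hUc.continuousOn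
    exact ⟨C, fun s hs => by simpa using hC s hs⟩
  have hrange : ∀ᵐ x ∂μ, ρ x ∈ Icc (-(1:ℝ) + -(t/a) + -α) (α + t/a + 1) ∧
      ρ' x ∈ Icc (-(1:ℝ) + -(t/a) + -α) (α + t/a + 1) := by
    filter_upwards [hρmem, hρ'mem] with x h1 h2
    obtain ⟨h11, h12⟩ := h1
    obtain ⟨h21, h22⟩ := h2
    have hkey : -1 + -(t/a) + -α ≤ (0:ℝ) := by linarith [hta'.le, hα]
    have hkey2 : α ≤ α + t/a + 1 := by linarith [hta'.le]
    exact ⟨⟨le_trans hkey h11, le_trans h12 hkey2⟩, ⟨le_trans hkey h21, le_trans h22 hkey2⟩⟩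
  have hUρ : Integrable (fun x => U (ρ x)) μ := by
    refine Integrable.mono' (integrable_const CU) (hUc.comp_aestronglyMeasurable hρint.1) ?_
    filter_upwards [hrange] with x hx using by simpa using hCU _ hx.1
  have hUρ' : Integrable (fun x => U (ρ' x)) μ := by
    refine Integrable.mono' (integrable_const CU) (hUc.comp_aestronglyMeasurable hρ'int.1) ?_
    filter_upwards [hrange] with x hx using by simpa using hCU _ hx.2
  have hVρ : Integrable (fun x => V x * ρ x) μ := by
    refine Integrable.mono' (integrable_const (BV * (α + t/a + 1))) (hVm.mul hρint.1) ?_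
    filter_upwards [hVB, hrange] with x h1 h2
    simp only [Real.norm_eq_abs]
    rw [abs_mul]
    have h3 : |ρ x| ≤ α + t/a + 1 := by
      rw [abs_le]; exact ⟨by linarith [h2.1.1], h2.1.2⟩
    have h4 : (0:ℝ) ≤ |ρ x| := abs_nonneg _
    nlinarith [abs_nonneg (V x)]
  have hVρ' : Integrable (fun x => V x * ρ' x) μ := by
    refine Integrable.mono' (integrable_const (BV * (α + t/a + 1))) (hVm.mul hρ'int.1) ?_
    filter_upwards [hVB, hrange] with x h1 h2
    simp only [Real.norm_eq_abs]
    rw [abs_mul]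
    have h3 : |ρ' x| ≤ α + t/a + 1 := by
      rw [abs_le]; exact ⟨by linarith [h2.2.1], h2.2.2⟩
    have h4 : (0:ℝ) ≤ |ρ' x| := abs_nonneg _
    nlinarith [abs_nonneg (V x)]
  -- the difference integrand
  set D : X → ℝ := fun x => (U (ρ' x) + V x * ρ' x) - (U (ρ x) + V x * ρ x) with hD_def
  have hDint : Integrable D μ := ((hUρ'.add hVρ').sub (hUρ.add hVρ))
  have hD0 : 0 ≤ ∫ x, D x ∂μ := by
    have h1 : (∫ x, D x ∂μ) = (∫ x, (U (ρ' x) + V x * ρ' x) ∂μ)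
        - ∫ x, (U (ρ x) + V x * ρ x) ∂μ := integral_sub (hUρ'.add hVρ') (hUρ.add hVρ)
    rw [h1]
    linarith [hineq]
  set G : X → ℝ := fun x =>
    A.indicator (fun _ => (t / a) * KA) x + B.indicator (fun _ => -((t / b) * KB)) x with hG_def
  have hGint : Integrable G μ :=
    ((integrable_const _).indicator hA).add ((integrable_const _).indicator hB)
  have hDG : ∀ᵐ x ∂μ, D x ≤ G x := by
    filter_upwards [hKA, hKB] with x h1 h2
    by_cases hxa : x ∈ A
    · have hxB : x ∉ B := fun hxb => (Set.disjoint_left.1 hd hxa) hxb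
      have := h1 hxa (t / a) hta' hta
      rw [hD_def, hG_def]
      simp only [indicator_of_mem hxa, indicator_of_notMem hxB, add_zero]
      rw [(hval x).1 hxa]
      nlinarith [this]
    by_cases hxb : x ∈ B
    · have := h2 hxb (t / b) htb' htb
      rw [hD_def, hG_def]
      simp only [indicator_of_mem hxb, indicator_of_notMem hxa, zero_add]
      rw [(hval x).2.1 hxb]
      nlinarith [this]
    · rw [hD_def, hG_def]
      simp only [indicator_of_notMem hxa, indicator_of_notMem hxb, add_zero]
      rw [(hval x).2.2 hxa hxb]
      simp
  have hGval : ∫ x, G x ∂μ = t * KA - t * KB := by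
    rw [hG_def]
    rw [integral_add ((integrable_const _).indicator hA) ((integrable_const _).indicator hB),
      integral_indicator_const _ hA, integral_indicator_const _ hB]
    simp only [smul_eq_mul, measureReal_def, ← ha_def, ← hb_def]
    field_simp
    ring
  have hfinal : (∫ x, D x ∂μ) ≤ t * KA - t * KB := by
    rw [← hGval]
    exact integral_mono_ae hDint hGint hDG
  have : t * KA - t * KB < 0 := by nlinarith
  linarith

set_option maxHeartbeats 2000000 in
/-- Euler–Lagrange conditions for L¹-local minimisers of the free energy on 𝒜_M. -/
theorem euler_lagrange_conditions
    (d : ℕ) (Ω : Set (EuclideanSpace ℝ (Fin d)))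
    (hΩ_meas : MeasurableSet Ω) (hΩ_ne : Ω.Nonempty) (hΩ_open : IsOpen Ω)
    (hΩ_conn : IsConnected Ω) (hΩ_bdd : Bornology.IsBounded Ω)
    (α : ℝ) (hα : 0 < α)
    (U : ℝ → ℝ) (hU_cont : ContinuousOn U (Icc 0 α)) (hU_conv : ConvexOn ℝ (Icc 0 α) U)
    (V : EuclideanSpace ℝ (Fin d) → ℝ) (hV_cont : ContinuousOn V Ω)
    (hV_bdd : ∃ B : ℝ, ∀ x ∈ Ω, V x ≤ B) (hV_nonneg : ∀ x ∈ Ω, 0 ≤ V x)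
    (U' : ℝ → ℝ)
    (hU'_deriv : ∀ s ∈ Ioo 0 α, HasDerivAt U (U' s) s)
    (hU'_cont : ContinuousOn U' (Ioo 0 α))
    (hU'_mono : MonotoneOn U' (Ioo 0 α))
    (ζl ζh : EReal) (hζl_ne : ζl ≠ ⊤) (hζh_ne : ζh ≠ ⊥)
    (hζl_lim : Tendsto (fun s : ℝ => (U' s : EReal)) (𝓝[>] (0:ℝ)) (𝓝 ζl))
    (hζh_lim : Tendsto (fun s : ℝ => (U' s : EReal)) (𝓝[<] α) (𝓝 ζh))
    (M : ℝ) (hM_pos : 0 < M) (hM_lt : M < α * (volume Ω).toReal)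
    (ρh : EuclideanSpace ℝ (Fin d) → ℝ)
    (hρh_int : Integrable ρh (volume.restrict Ω))
    (hρh_mem : ∀ᵐ x ∂(volume.restrict Ω), ρh x ∈ Icc 0 α)
    (hρh_mass : ∫ x in Ω, ρh x = M)
    (hρh_locmin : ∃ r : ℝ, 0 < r ∧
      ∀ ρ : EuclideanSpace ℝ (Fin d) → ℝ,
        Integrable ρ (volume.restrict Ω) →
        (∀ᵐ x ∂(volume.restrict Ω), ρ x ∈ Icc 0 α) →
        (∫ x in Ω, ρ x) = M →
        (∫ x in Ω, |ρ x - ρh x|) < r →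
        ∫ x in Ω, (U (ρh x) + V x * ρh x) ≤ ∫ x in Ω, (U (ρ x) + V x * ρ x)) :
    ∃ C : ℝ, ∀ᵐ x ∂(volume.restrict Ω),
      (ρh x ∈ Ioo 0 α → U' (ρh x) + V x = C) ∧
      (ρh x = 0 → ((C - V x : ℝ) : EReal) ≤ ζl) ∧
      (ρh x = α → ζh ≤ ((C - V x : ℝ) : EReal)) := by
  classical
  obtain ⟨r, hr, hmin⟩ := hρh_locmin
  haveI hfin : IsFiniteMeasure (volume.restrict Ω) :=
    ⟨by rw [Measure.restrict_apply_univ]; exact hΩ_bdd.measure_lt_top⟩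
  set μ := volume.restrict Ω with hμdef
  obtain ⟨ρ₀, hρ₀sm, hρ₀e⟩ := hρh_int.1
  have hρ₀meas : Measurable ρ₀ := hρ₀sm.measurable
  obtain ⟨V₀, hV₀m, hV₀e⟩ := ContinuousOn.aemeasurable hV_cont hΩ_meas
  obtain ⟨B, hB⟩ := hV_bdd
  set BV : ℝ := max B 0 with hBVdef
  have hΩae : ∀ᵐ x ∂μ, x ∈ Ω := ae_restrict_mem hΩ_meas
  have hV₀B : ∀ᵐ x ∂μ, |V₀ x| ≤ BV := by
    filter_upwards [hΩae, hV₀e] with x hx he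
    rw [← he, abs_of_nonneg (hV_nonneg x hx)]
    exact le_max_of_le_left (hB x hx)
  have hV₀pos : ∀ᵐ x ∂μ, 0 ≤ V₀ x := by
    filter_upwards [hΩae, hV₀e] with x hx he
    rw [← he]; exact hV_nonneg x hx
  set Ue : ℝ → ℝ := fun s => U (max 0 (min s α)) with hUedef
  have hUe_cont : Continuous Ue := by
    apply hU_cont.comp_continuous (continuous_const.max (continuous_id'.min continuous_const))
    intro s
    exact ⟨le_max_left _ _, max_le hα.le (min_le_right _ _)⟩
  have hUe_eq : ∀ s ∈ Icc 0 α, Ue s = U s := by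
    intro s hs
    rw [hUedef]
    simp only
    rw [min_eq_left hs.2, max_eq_right hs.1]
  have hUe_deriv : ∀ s ∈ Ioo 0 α, HasDerivAt Ue (U' s) s := by
    intro s hs
    apply (hU'_deriv s hs).congr_of_eventuallyEq
    filter_upwards [isOpen_Ioo.mem_nhds hs] with y hy
    rw [hUedef]
    simp only
    rw [min_eq_left hy.2.le, max_eq_right hy.1.le]
  have hρ₀int : Integrable ρ₀ μ := hρh_int.congr hρ₀e
  have hρ₀mem : ∀ᵐ x ∂μ, ρ₀ x ∈ Icc 0 α := by
    filter_upwards [hρh_mem, hρ₀e] with x h1 h2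
    rw [← h2]; exact h1
  have hρ₀mass : (∫ x, ρ₀ x ∂μ) = M := by
    rw [← integral_congr_ae hρ₀e]; exact hρh_mass
  have hmin₀ : ∀ ρ' : EuclideanSpace ℝ (Fin d) → ℝ, Integrable ρ' μ →
      (∀ᵐ x ∂μ, ρ' x ∈ Icc 0 α) → (∫ x, ρ' x ∂μ) = (∫ x, ρ₀ x ∂μ) →
      (∫ x, |ρ' x - ρ₀ x| ∂μ) < r →
      ∫ x, (Ue (ρ₀ x) + V₀ x * ρ₀ x) ∂μ ≤ ∫ x, (Ue (ρ' x) + V₀ x * ρ' x) ∂μ := by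
    intro ρ' h1 h2 h3 h4
    have e1 : ∫ x, (Ue (ρ₀ x) + V₀ x * ρ₀ x) ∂μ = ∫ x, (U (ρh x) + V x * ρh x) ∂μ := by
      apply integral_congr_ae
      filter_upwards [hρ₀e, hV₀e, hρh_mem] with x hx hv hm
      rw [← hx, ← hv, hUe_eq _ hm]
    have e2 : ∫ x, (Ue (ρ' x) + V₀ x * ρ' x) ∂μ = ∫ x, (U (ρ' x) + V x * ρ' x) ∂μ := by
      apply integral_congr_ae
      filter_upwards [h2, hV₀e] with x hm hv
      rw [← hv, hUe_eq _ hm]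
    rw [e1, e2]
    have e3 : (∫ x, |ρ' x - ρh x| ∂μ) = ∫ x, |ρ' x - ρ₀ x| ∂μ := by
      apply integral_congr_ae
      filter_upwards [hρ₀e] with x hx
      rw [hx]
    exact hmin ρ' h1 h2 (h3.trans hρ₀mass) (by rw [e3]; exact h4)
  have master : ∀ A Bs : Set (EuclideanSpace ℝ (Fin d)), MeasurableSet A → MeasurableSet Bs →
      Disjoint A Bs → μ A ≠ 0 → μ Bs ≠ 0 → ∀ h₀ KA KB : ℝ, 0 < h₀ →
      (∀ᵐ x ∂μ, x ∈ A → ρ₀ x + h₀ ≤ α) → (∀ᵐ x ∂μ, x ∈ Bs → h₀ ≤ ρ₀ x) →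
      (∀ᵐ x ∂μ, x ∈ A → ∀ h : ℝ, 0 < h → h ≤ h₀ →
        Ue (ρ₀ x + h) - Ue (ρ₀ x) + h * V₀ x ≤ h * KA) →
      (∀ᵐ x ∂μ, x ∈ Bs → ∀ h : ℝ, 0 < h → h ≤ h₀ →
        Ue (ρ₀ x - h) - Ue (ρ₀ x) - h * V₀ x ≤ -(h * KB)) → KB ≤ KA := by
    intro A Bs hA hBs hd hμA hμB h₀ KA KB hh₀ h1 h2 h3 h4
    exact el_master hα hUe_cont hV₀m.aestronglyMeasurable hV₀B hρ₀int hρ₀mem hr hmin₀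
      hA hBs hd hμA hμB hh₀ h1 h2 h3 h4
  -- rate lemmas
  have rate_both : ∀ c : ℝ, 0 < c → c ≤ α - c → ∀ ε : ℝ, 0 < ε → ∃ h₀ : ℝ,
      0 < h₀ ∧ h₀ ≤ c / 2 ∧ ∀ s : ℝ, c ≤ s → s ≤ α - c → ∀ h : ℝ, 0 < h → h ≤ h₀ →
        (Ue (s + h) - Ue s ≤ h * (U' s + ε)) ∧ (Ue (s - h) - Ue s ≤ -(h * (U' s - ε))) := by
    intro c hc hc2 ε hε
    have hKsub : Icc (c/2) (α - c/2) ⊆ Ioo 0 α := fun s hs =>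
      ⟨lt_of_lt_of_le (by linarith) hs.1, lt_of_le_of_lt hs.2 (by linarith)⟩
    have hucont := (isCompact_Icc (a := c/2) (b := α - c/2)).uniformContinuousOn_of_continuous
      (hU'_cont.mono hKsub)
    rw [Metric.uniformContinuousOn_iff] at hucont
    obtain ⟨δ, hδ, hδ'⟩ := hucont ε hε
    refine ⟨min (δ/2) (c/2), by positivity, min_le_right _ _, ?_⟩
    intro s hs1 hs2 h hh hh'
    have hhδ : h < δ := lt_of_le_of_lt (hh'.trans (min_le_left _ _)) (by linarith)
    have hhc : h ≤ c/2 := hh'.trans (min_le_right _ _)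
    have hsK : s ∈ Icc (c/2) (α - c/2) := ⟨by linarith, by linarith⟩
    constructor
    · obtain ⟨ξ, hξ1, hξ2, hξ3⟩ := el_mvt hUe_cont hUe_deriv
        (show (0:ℝ) ≤ s by linarith) (show s + h ≤ α by linarith) hh
      have hξK : ξ ∈ Icc (c/2) (α - c/2) := ⟨by linarith, by linarith⟩
      have hdist := hδ' ξ hξK s hsK (by rw [Real.dist_eq, abs_of_pos (by linarith : (0:ℝ) < ξ - s)]; linarith)
      rw [Real.dist_eq] at hdist
      have hlt : U' ξ < U' s + ε := by
        have := abs_lt.1 hdist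
        linarith [this.1, this.2]
      rw [hξ3]
      nlinarith [hh.le]
    · obtain ⟨ξ, hξ1, hξ2, hξ3⟩ := el_mvt hUe_cont hUe_deriv
        (show (0:ℝ) ≤ s - h by linarith) (show (s - h) + h ≤ α by linarith) hh
      rw [show s - h + h = s by ring] at hξ2 hξ3
      have hξK : ξ ∈ Icc (c/2) (α - c/2) := ⟨by linarith, by linarith⟩
      have hdist := hδ' ξ hξK s hsK (by rw [Real.dist_eq, abs_of_neg (by linarith : ξ - s < 0)]; linarith)
      rw [Real.dist_eq] at hdist
      have hlt : U' s - ε < U' ξ := by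
        have := abs_lt.1 hdist
        linarith [this.1, this.2]
      have : Ue (s - h) - Ue s = -(h * U' ξ) := by linarith [hξ3]
      rw [this]
      nlinarith [hh.le]
  have find_lo : ∀ m : ℝ, ζl < (m : EReal) → ∃ s₁, s₁ ∈ Ioo 0 α ∧ U' s₁ < m := by
    intro m hm
    have h1 : ∀ᶠ s in 𝓝[>] (0:ℝ), ((U' s : ℝ) : EReal) < (m : EReal) :=
      hζl_lim.eventually_lt_const hm
    have h2 : ∀ᶠ s in 𝓝[>] (0:ℝ), s ∈ Ioo 0 α :=
      eventually_of_mem (Ioo_mem_nhdsGT_of_mem ⟨le_refl 0, hα⟩) (fun x hx => hx)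
    obtain ⟨s₁, hs₁, hs₁'⟩ := (h1.and h2).exists
    exact ⟨s₁, hs₁', by exact_mod_cast hs₁⟩
  have find_hi : ∀ m : ℝ, (m : EReal) < ζh → ∃ s₂, s₂ ∈ Ioo 0 α ∧ m < U' s₂ := by
    intro m hm
    have h1 : ∀ᶠ s in 𝓝[<] α, (m : EReal) < ((U' s : ℝ) : EReal) :=
      hζh_lim.eventually_const_lt hm
    have h2 : ∀ᶠ s in 𝓝[<] α, s ∈ Ioo 0 α :=
      eventually_of_mem (Ioo_mem_nhdsLT_of_mem ⟨hα, le_refl α⟩) (fun x hx => hx)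
    obtain ⟨s₂, hs₂, hs₂'⟩ := (h1.and h2).exists
    exact ⟨s₂, hs₂', by exact_mod_cast hs₂⟩
  have rate_zero : ∀ s₁, s₁ ∈ Ioo 0 α → ∀ h : ℝ, 0 < h → h ≤ s₁ →
      Ue h - Ue 0 ≤ h * U' s₁ := by
    intro s₁ hs₁ h hh hh'
    obtain ⟨ξ, hξ1, hξ2, hξ3⟩ := el_mvt hUe_cont hUe_deriv (le_refl (0:ℝ))
      (show (0:ℝ) + h ≤ α by rw [zero_add]; linarith [hs₁.2]) hh
    rw [zero_add] at hξ2 hξ3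
    rw [hξ3]
    have hmono := hU'_mono (show ξ ∈ Ioo 0 α from ⟨hξ1, by linarith [hs₁.2]⟩) hs₁ (by linarith)
    nlinarith [hh.le]
  have rate_alpha : ∀ s₂, s₂ ∈ Ioo 0 α → ∀ h : ℝ, 0 < h → h ≤ α - s₂ →
      Ue (α - h) - Ue α ≤ -(h * U' s₂) := by
    intro s₂ hs₂ h hh hh'
    obtain ⟨ξ, hξ1, hξ2, hξ3⟩ := el_mvt hUe_cont hUe_deriv
      (show (0:ℝ) ≤ α - h by linarith [hs₂.1]) (show (α - h) + h ≤ α by ring_nf; exact le_refl α) hh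
    rw [show α - h + h = α by ring] at hξ2 hξ3
    have hmono := hU'_mono hs₂ (show ξ ∈ Ioo 0 α from ⟨lt_trans hs₂.1 (by linarith), hξ2⟩)
      (by linarith)
    have : Ue (α - h) - Ue α = -(h * U' ξ) := by linarith [hξ3]
    rw [this]
    nlinarith [hh.le]
  set S : Set (EuclideanSpace ℝ (Fin d)) := {x | ρ₀ x ∈ Ioo 0 α} with hSdef
  have hSmeas : MeasurableSet S := hρ₀meas measurableSet_Ioo
  by_cases hS : μ S = 0
  · -- bang-bang case
    have hae01 : ∀ᵐ x ∂μ, ρ₀ x = 0 ∨ ρ₀ x = α := by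
      filter_upwards [measure_eq_zero_iff_ae_notMem.1 hS, hρ₀mem] with x hx hmem
      rcases eq_or_lt_of_le hmem.1 with h | h
      · exact Or.inl h.symm
      rcases eq_or_lt_of_le hmem.2 with h' | h'
      · exact Or.inr h'
      · exact absurd (show x ∈ S from ⟨h, h'⟩) hx
    set E0 : Set (EuclideanSpace ℝ (Fin d)) := {x | ρ₀ x = 0} with hE0def
    set Eα : Set (EuclideanSpace ℝ (Fin d)) := {x | ρ₀ x = α} with hEαdef
    have hE0meas : MeasurableSet E0 := hρ₀meas (measurableSet_singleton 0)
    have hEαmeas : MeasurableSet Eα := hρ₀meas (measurableSet_singleton α)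
    have hmassEα : M = α * (μ Eα).toReal := by
      have hind : ρ₀ =ᵐ[μ] Eα.indicator (fun _ => α) := by
        filter_upwards [hae01] with x hx
        rcases hx with h | h
        · rw [h, indicator_of_notMem]
          intro hmem
          have h2 : ρ₀ x = α := hmem
          rw [h] at h2; linarith
        · rw [h, indicator_of_mem (show x ∈ Eα from h)]
      rw [← hρ₀mass, integral_congr_ae hind, integral_indicator_const _ hEαmeas]
      simp [smul_eq_mul, mul_comm, measureReal_def]
    have hEα0 : μ Eα ≠ 0 := by
      intro h0
      rw [h0] at hmassEα
      simp at hmassEα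
      linarith
    have hE00 : μ E0 ≠ 0 := by
      intro h0
      have hcomp : μ ((E0 ∪ Eα)ᶜ) = 0 := by
        rw [measure_eq_zero_iff_ae_notMem]
        filter_upwards [hae01] with x hx
        simp only [mem_compl_iff, not_not]
        rcases hx with h | h
        · exact Or.inl h
        · exact Or.inr h
      have huniv : μ univ ≤ μ Eα := by
        calc μ univ = μ ((E0 ∪ Eα) ∪ (E0 ∪ Eα)ᶜ) := by rw [union_compl_self]
        _ ≤ μ (E0 ∪ Eα) + μ ((E0 ∪ Eα)ᶜ) := measure_union_le _ _
        _ = μ (E0 ∪ Eα) := by rw [hcomp, add_zero]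
        _ ≤ μ E0 + μ Eα := measure_union_le _ _
        _ = μ Eα := by rw [h0, zero_add]
      have htr : (μ univ).toReal ≤ (μ Eα).toReal :=
        ENNReal.toReal_mono (measure_ne_top μ Eα) huniv
      have hμuniv : (μ univ).toReal = (volume Ω).toReal := by
        rw [hμdef, Measure.restrict_apply_univ]
      rw [hμuniv] at htr
      have hmul := mul_le_mul_of_nonneg_left htr hα.le
      linarith
    have hhalf : (α/2) ∈ Ioo 0 α := ⟨by linarith, by linarith⟩
    have hdisj0α : Disjoint E0 Eα := Set.disjoint_left.2 fun x hx0 hxα => by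
      have h1 : ρ₀ x = 0 := hx0
      have h2 : ρ₀ x = α := hxα
      rw [h1] at h2; linarith
    have hζl_bot : ζl ≠ ⊥ := by
      intro hbot
      obtain ⟨s₁, hs₁, hs₁'⟩ := find_lo (U' (α/2) - BV - 1)
        (by rw [hbot]; exact EReal.bot_lt_coe _)
      have hres := master E0 Eα hE0meas hEαmeas hdisj0α hE00 hEα0
        (min s₁ (α/2)) (U' (α/2) - 1) (U' (α/2))
        (lt_min hs₁.1 (by linarith))
        (Eventually.of_forall fun x hx => by
          have h1 : ρ₀ x = 0 := hx
          rw [h1, zero_add]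
          exact le_trans (min_le_right _ _) (by linarith))
        (Eventually.of_forall fun x hx => by
          have h1 : ρ₀ x = α := hx
          rw [h1]
          exact le_trans (min_le_left _ _) (by linarith [hs₁.2]))
        (by
          filter_upwards [hV₀B] with x hVx hx h hh hh'
          have h1 : ρ₀ x = 0 := hx
          rw [h1, zero_add]
          have hr0 := rate_zero s₁ hs₁ h hh (le_trans hh' (min_le_left _ _))
          have habs := (abs_le.1 hVx).2
          have e1 := mul_le_mul_of_nonneg_left hs₁'.le hh.le
          have e2 := mul_le_mul_of_nonneg_left habs hh.le
          nlinarith [hr0])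
        (by
          filter_upwards [hV₀pos] with x hVx hx h hh hh'
          have h1 : ρ₀ x = α := hx
          rw [h1]
          have hrα := rate_alpha (α/2) hhalf h hh
            (by have := le_trans hh' (min_le_right s₁ (α/2)); linarith)
          nlinarith [hrα, mul_nonneg hh.le hVx])
      linarith
    have hζh_top : ζh ≠ ⊤ := by
      intro htop
      obtain ⟨s₂, hs₂, hs₂'⟩ := find_hi (U' (α/2) + BV + 1)
        (by rw [htop]; exact EReal.coe_lt_top _)
      have hres := master E0 Eα hE0meas hEαmeas hdisj0α hE00 hEα0
        (min (α/2) (α - s₂)) (U' (α/2) + BV) (U' (α/2) + BV + 1)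
        (lt_min (by linarith) (by linarith [hs₂.2]))
        (Eventually.of_forall fun x hx => by
          have h1 : ρ₀ x = 0 := hx
          rw [h1, zero_add]
          exact le_trans (min_le_left _ _) (by linarith))
        (Eventually.of_forall fun x hx => by
          have h1 : ρ₀ x = α := hx
          rw [h1]
          exact le_trans (min_le_left _ _) (by linarith))
        (by
          filter_upwards [hV₀B] with x hVx hx h hh hh'
          have h1 : ρ₀ x = 0 := hx
          rw [h1, zero_add]
          have hr0 := rate_zero (α/2) hhalf h hh (le_trans hh' (min_le_left _ _))
          have habs := (abs_le.1 hVx).2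
          have e2 := mul_le_mul_of_nonneg_left habs hh.le
          nlinarith [hr0])
        (by
          filter_upwards [hV₀pos] with x hVx hx h hh hh'
          have h1 : ρ₀ x = α := hx
          rw [h1]
          have hrα := rate_alpha s₂ hs₂ h hh (le_trans hh' (min_le_right _ _))
          have e1 := mul_le_mul_of_nonneg_left hs₂'.le hh.le
          nlinarith [hrα, mul_nonneg hh.le hVx])
      linarith
    set zl := ζl.toReal with hzldef
    set zh := ζh.toReal with hzhdef
    have hζl_eq : ζl = ((zl : ℝ) : EReal) := (EReal.coe_toReal hζl_ne hζl_bot).symm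
    have hζh_eq : ζh = ((zh : ℝ) : EReal) := (EReal.coe_toReal hζh_top hζh_ne).symm
    have hcross2 : ∀ p q : ℝ, p < q → μ (E0 ∩ {x | zl + V₀ x < p}) = 0 ∨
        μ (Eα ∩ {x | q < zh + V₀ x}) = 0 := by
      intro p q hpq
      by_contra hcon
      push_neg at hcon
      obtain ⟨hpos1, hpos2⟩ := hcon
      set ε := (q - p)/4 with hεdef
      have hε : 0 < ε := by rw [hεdef]; linarith
      obtain ⟨s₁, hs₁, hs₁'⟩ := find_lo (zl + ε)
        (by rw [hζl_eq]; exact_mod_cast (by linarith : zl < zl + ε))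
      obtain ⟨s₂, hs₂, hs₂'⟩ := find_hi (zh - ε)
        (by rw [hζh_eq]; exact_mod_cast (by linarith : zh - ε < zh))
      have hmeasA : MeasurableSet (E0 ∩ {x | zl + V₀ x < p}) :=
        hE0meas.inter (measurableSet_lt (measurable_const.add hV₀m) measurable_const)
      have hmeasB : MeasurableSet (Eα ∩ {x | q < zh + V₀ x}) :=
        hEαmeas.inter (measurableSet_lt measurable_const (measurable_const.add hV₀m))
      have hres := master _ _ hmeasA hmeasB
        (Set.disjoint_left.2 fun x hxA hxB => by
          have h1 : ρ₀ x = 0 := hxA.1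
          have h2 : ρ₀ x = α := hxB.1
          rw [h1] at h2; linarith)
        hpos1 hpos2 (min s₁ (α - s₂)) (p + ε) (q - ε)
        (lt_min hs₁.1 (by linarith [hs₂.2]))
        (Eventually.of_forall fun x hx => by
          have h1 : ρ₀ x = 0 := hx.1
          rw [h1, zero_add]
          exact le_trans (min_le_left _ _) (by linarith [hs₁.2]))
        (Eventually.of_forall fun x hx => by
          have h1 : ρ₀ x = α := hx.1
          rw [h1]
          exact le_trans (min_le_right _ _) (by linarith [hs₂.1]))
        (Eventually.of_forall fun x hx h hh hh' => by
          have h1 : ρ₀ x = 0 := hx.1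
          have h2 : zl + V₀ x < p := hx.2
          rw [h1, zero_add]
          have hr0 := rate_zero s₁ hs₁ h hh (le_trans hh' (min_le_left _ _))
          have e1 := mul_le_mul_of_nonneg_left hs₁'.le hh.le
          have e2 := mul_le_mul_of_nonneg_left (by linarith : V₀ x ≤ p - zl) hh.le
          nlinarith [hr0])
        (Eventually.of_forall fun x hx h hh hh' => by
          have h1 : ρ₀ x = α := hx.1
          have h2 : q < zh + V₀ x := hx.2
          rw [h1]
          have hrα := rate_alpha s₂ hs₂ h hh (le_trans hh' (min_le_right _ _))
          have e1 := mul_le_mul_of_nonneg_left hs₂'.le hh.le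
          have e2 := mul_le_mul_of_nonneg_left (by linarith : q - zh ≤ V₀ x) hh.le
          nlinarith [hrα])
      linarith
    obtain ⟨C, hC1, hC2⟩ := el_key2 μ E0 Eα (fun x => zl + V₀ x) (fun x => zh + V₀ x)
      hE00 hEα0 hcross2
    refine ⟨C, ?_⟩
    filter_upwards [measure_eq_zero_iff_ae_notMem.1 hC1, measure_eq_zero_iff_ae_notMem.1 hC2,
      measure_eq_zero_iff_ae_notMem.1 hS, hρ₀e, hV₀e] with x hx1 hx2 hxS he hv
    refine ⟨?_, ?_, ?_⟩
    · intro hmem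
      exfalso
      rw [he] at hmem
      exact hxS hmem
    · intro h0
      rw [he] at h0
      have hnlt : ¬ (zl + V₀ x < C) := fun hlt => hx1 ⟨h0, hlt⟩
      push_neg at hnlt
      rw [hζl_eq, hv]
      exact_mod_cast (by linarith : C - V₀ x ≤ zl)
    · intro hαx
      rw [he] at hαx
      have hnlt : ¬ (C < zh + V₀ x) := fun hlt => hx2 ⟨hαx, hlt⟩
      push_neg at hnlt
      rw [hζh_eq, hv]
      exact_mod_cast (by linarith : zh ≤ C - V₀ x)
  · -- interior case
    have hclamp_cont : ∀ c : ℝ, 0 < c → c ≤ α - c →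
        Continuous (fun s : ℝ => U' (max c (min s (α - c)))) := by
      intro c hc hc2
      apply hU'_cont.comp_continuous (continuous_const.max (continuous_id'.min continuous_const))
      intro s
      constructor
      · exact lt_of_lt_of_le hc (le_max_left _ _)
      · have h1 : max c (min s (α - c)) ≤ α - c := max_le hc2 (min_le_right _ _)
        linarith
    have hIccMeas : ∀ c : ℝ, MeasurableSet {x | ρ₀ x ∈ Icc c (α - c)} :=
      fun c => hρ₀meas measurableSet_Icc
    have hsetEq : ∀ c p : ℝ, {x | ρ₀ x ∈ Icc c (α - c)} ∩ {x | U' (ρ₀ x) + V₀ x < p} =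
        {x | ρ₀ x ∈ Icc c (α - c)} ∩ {x | U' (max c (min (ρ₀ x) (α - c))) + V₀ x < p} := by
      intro c p
      ext x
      simp only [mem_inter_iff, mem_setOf_eq]
      refine and_congr_right fun hx => ?_
      rw [min_eq_left hx.2, max_eq_right hx.1]
    have hsetEq' : ∀ c q : ℝ, {x | ρ₀ x ∈ Icc c (α - c)} ∩ {x | q < U' (ρ₀ x) + V₀ x} =
        {x | ρ₀ x ∈ Icc c (α - c)} ∩ {x | q < U' (max c (min (ρ₀ x) (α - c))) + V₀ x} := by
      intro c q
      ext x
      simp only [mem_inter_iff, mem_setOf_eq]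
      refine and_congr_right fun hx => ?_
      rw [min_eq_left hx.2, max_eq_right hx.1]
    have hcross : ∀ p q : ℝ, p < q → μ (S ∩ {x | U' (ρ₀ x) + V₀ x < p}) = 0 ∨
        μ (S ∩ {x | q < U' (ρ₀ x) + V₀ x}) = 0 := by
      intro p q hpq
      by_contra hcon
      push_neg at hcon
      obtain ⟨hpos1, hpos2⟩ := hcon
      obtain ⟨c1, hc1, hc1', hposA⟩ := el_pick μ hα ρ₀ _ hpos1 (fun x hx => hx.1)
      obtain ⟨c2, hc2, hc2', hposB⟩ := el_pick μ hα ρ₀ _ hpos2 (fun x hx => hx.1)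
      set c := min c1 c2 with hcdef
      have hc : 0 < c := lt_min hc1 hc2
      have hc' : c ≤ α - c := by
        have h1 : c ≤ c1 := min_le_left _ _
        linarith
      have hsubIcc : ∀ c' : ℝ, c ≤ c' → c' ≤ α - c' → Icc c' (α - c') ⊆ Icc c (α - c) :=
        fun c' hcc' _ s hs => ⟨le_trans hcc' hs.1, le_trans hs.2 (by linarith)⟩
      have hApos : μ ({x | ρ₀ x ∈ Icc c (α - c)} ∩ {x | U' (ρ₀ x) + V₀ x < p}) ≠ 0 := by
        intro h0
        apply hposA
        apply measure_mono_null ?_ h0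
        intro x hx
        exact ⟨hsubIcc c1 (min_le_left _ _) hc1' hx.2, hx.1.2⟩
      have hBpos : μ ({x | ρ₀ x ∈ Icc c (α - c)} ∩ {x | q < U' (ρ₀ x) + V₀ x}) ≠ 0 := by
        intro h0
        apply hposB
        apply measure_mono_null ?_ h0
        intro x hx
        exact ⟨hsubIcc c2 (min_le_right _ _) hc2' hx.2, hx.1.2⟩
      have hAmeas : MeasurableSet ({x | ρ₀ x ∈ Icc c (α - c)} ∩ {x | U' (ρ₀ x) + V₀ x < p}) := by
        rw [hsetEq c p]
        exact (hIccMeas c).inter (measurableSet_lt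
          (((hclamp_cont c hc hc').measurable.comp hρ₀meas).add hV₀m) measurable_const)
      have hBmeas : MeasurableSet ({x | ρ₀ x ∈ Icc c (α - c)} ∩ {x | q < U' (ρ₀ x) + V₀ x}) := by
        rw [hsetEq' c q]
        exact (hIccMeas c).inter (measurableSet_lt measurable_const
          (((hclamp_cont c hc hc').measurable.comp hρ₀meas).add hV₀m))
      have hdisj : Disjoint ({x | ρ₀ x ∈ Icc c (α - c)} ∩ {x | U' (ρ₀ x) + V₀ x < p})
          ({x | ρ₀ x ∈ Icc c (α - c)} ∩ {x | q < U' (ρ₀ x) + V₀ x}) :=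
        Set.disjoint_left.2 fun x hxA hxB => by
          have h1 : U' (ρ₀ x) + V₀ x < p := hxA.2
          have h2 : q < U' (ρ₀ x) + V₀ x := hxB.2
          linarith
      set ε := (q - p)/4 with hεdef
      obtain ⟨h₀, hh₀, hh₀c, hrates⟩ := rate_both c hc hc' ε (by rw [hεdef]; linarith)
      have hres := master _ _ hAmeas hBmeas hdisj hApos hBpos h₀ (p + ε) (q - ε) hh₀
        (Eventually.of_forall fun x hx => by
          have h2 : ρ₀ x ≤ α - c := hx.1.2
          linarith [hh₀c, hc])
        (Eventually.of_forall fun x hx => by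
          have h2 : c ≤ ρ₀ x := hx.1.1
          linarith [hh₀c, hc])
        (Eventually.of_forall fun x hx h hh hh' => by
          have hrr := (hrates (ρ₀ x) hx.1.1 hx.1.2 h hh hh').1
          have hfx : U' (ρ₀ x) + V₀ x < p := hx.2
          have e1 := mul_le_mul_of_nonneg_left hfx.le hh.le
          nlinarith [hrr])
        (Eventually.of_forall fun x hx h hh hh' => by
          have hrr := (hrates (ρ₀ x) hx.1.1 hx.1.2 h hh hh').2
          have hfx : q < U' (ρ₀ x) + V₀ x := hx.2
          have e1 := mul_le_mul_of_nonneg_left hfx.le hh.le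
          nlinarith [hrr])
      linarith
    obtain ⟨C, hC1, hC2⟩ := el_key2 μ S S (fun x => U' (ρ₀ x) + V₀ x)
      (fun x => U' (ρ₀ x) + V₀ x) hS hS hcross
    have hfC : ∀ᵐ x ∂μ, x ∈ S → U' (ρ₀ x) + V₀ x = C := by
      filter_upwards [measure_eq_zero_iff_ae_notMem.1 hC1, measure_eq_zero_iff_ae_notMem.1 hC2]
        with x h1 h2 hxS
      by_contra hne
      rcases lt_or_gt_of_ne hne with h | h
      · exact h1 ⟨hxS, h⟩
      · exact h2 ⟨hxS, h⟩
    obtain ⟨cW, hcW, hcW', hWpos0⟩ := el_pick μ hα ρ₀ S hS (fun x hx => hx)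
    have hWsubS : {x | ρ₀ x ∈ Icc cW (α - cW)} ⊆ S := fun x hx =>
      ⟨lt_of_lt_of_le hcW hx.1, lt_of_le_of_lt hx.2 (by linarith)⟩
    have hWpos : μ {x | ρ₀ x ∈ Icc cW (α - cW)} ≠ 0 := by
      intro h0
      exact hWpos0 (measure_mono_null Set.inter_subset_right h0)
    have hWmeas : MeasurableSet {x | ρ₀ x ∈ Icc cW (α - cW)} := hIccMeas cW
    have claim2 : ∀ q : ℚ, ζl < ((q : ℝ) : EReal) →
        μ ({x | ρ₀ x = 0} ∩ {x | (q : ℝ) < C - V₀ x}) = 0 := by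
      intro q hq
      by_contra hpos
      obtain ⟨m, hm1, hm2⟩ := EReal.exists_between_coe_real hq
      have hm2' : m < (q : ℝ) := by exact_mod_cast hm2
      obtain ⟨s₁, hs₁, hs₁'⟩ := find_lo m hm1
      set ε := ((q : ℝ) - m)/2 with hεdef
      have hε : 0 < ε := by rw [hεdef]; linarith
      obtain ⟨h₂, hh₂, hh₂c, hrates⟩ := rate_both cW hcW hcW' ε hε
      have hmeasA : MeasurableSet ({x | ρ₀ x = 0} ∩ {x | (q : ℝ) < C - V₀ x}) :=
        (hρ₀meas (measurableSet_singleton 0)).inter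
          (measurableSet_lt measurable_const (measurable_const.sub hV₀m))
      have hdisj : Disjoint ({x | ρ₀ x = 0} ∩ {x | (q : ℝ) < C - V₀ x})
          {x | ρ₀ x ∈ Icc cW (α - cW)} :=
        Set.disjoint_left.2 fun x hxA hxW => by
          have h1 : ρ₀ x = 0 := hxA.1
          have h2 : cW ≤ ρ₀ x := hxW.1
          rw [h1] at h2; linarith
      have hres := master _ _ hmeasA hWmeas hdisj hpos hWpos
        (min s₁ h₂) (m + (C - (q : ℝ))) (C - ε)
        (lt_min hs₁.1 hh₂)
        (Eventually.of_forall fun x hx => by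
          have h1 : ρ₀ x = 0 := hx.1
          rw [h1, zero_add]
          exact le_trans (min_le_left _ _) (by linarith [hs₁.2]))
        (Eventually.of_forall fun x hx => by
          have h2 : cW ≤ ρ₀ x := hx.1
          have h3 := min_le_right s₁ h₂
          linarith [hh₂c, hcW])
        (Eventually.of_forall fun x hx h hh hh' => by
          have h1 : ρ₀ x = 0 := hx.1
          have h2 : (q : ℝ) < C - V₀ x := hx.2
          rw [h1, zero_add]
          have hr0 := rate_zero s₁ hs₁ h hh (le_trans hh' (min_le_left _ _))
          have e1 := mul_le_mul_of_nonneg_left hs₁'.le hh.le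
          have e2 := mul_le_mul_of_nonneg_left (by linarith : V₀ x ≤ C - (q : ℝ)) hh.le
          nlinarith [hr0])
        (by
          filter_upwards [hfC] with x hfx hxW h hh hh'
          have hCx : U' (ρ₀ x) + V₀ x = C := hfx (hWsubS hxW)
          have hrr := (hrates (ρ₀ x) hxW.1 hxW.2 h hh (le_trans hh' (min_le_right _ _))).2
          have e3 : h * (U' (ρ₀ x) + V₀ x) = h * C := by rw [hCx]
          nlinarith [hrr])
      linarith
    have claim3 : ∀ q : ℚ, ((q : ℝ) : EReal) < ζh →
        μ ({x | ρ₀ x = α} ∩ {x | C - V₀ x < (q : ℝ)}) = 0 := by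
      intro q hq
      by_contra hpos
      obtain ⟨m, hm1, hm2⟩ := EReal.exists_between_coe_real hq
      have hm1' : (q : ℝ) < m := by exact_mod_cast hm1
      obtain ⟨s₂, hs₂, hs₂'⟩ := find_hi m hm2
      set ε := (m - (q : ℝ))/2 with hεdef
      have hε : 0 < ε := by rw [hεdef]; linarith
      obtain ⟨h₂, hh₂, hh₂c, hrates⟩ := rate_both cW hcW hcW' ε hε
      have hmeasB : MeasurableSet ({x | ρ₀ x = α} ∩ {x | C - V₀ x < (q : ℝ)}) :=
        (hρ₀meas (measurableSet_singleton α)).inter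
          (measurableSet_lt (measurable_const.sub hV₀m) measurable_const)
      have hdisj : Disjoint {x | ρ₀ x ∈ Icc cW (α - cW)}
          ({x | ρ₀ x = α} ∩ {x | C - V₀ x < (q : ℝ)}) :=
        Set.disjoint_left.2 fun x hxW hxB => by
          have h1 : ρ₀ x ≤ α - cW := hxW.2
          have h2 : ρ₀ x = α := hxB.1
          rw [h2] at h1; linarith
      have hres := master _ _ hWmeas hmeasB hdisj hWpos hpos
        (min (α - s₂) h₂) (C + ε) (m + (C - (q : ℝ)))
        (lt_min (by linarith [hs₂.2]) hh₂)
        (Eventually.of_forall fun x hx => by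
          have h2 : ρ₀ x ≤ α - cW := hx.2
          have h3 := min_le_right (α - s₂) h₂
          linarith [hh₂c, hcW])
        (Eventually.of_forall fun x hx => by
          have h1 : ρ₀ x = α := hx.1
          rw [h1]
          exact le_trans (min_le_left _ _) (by linarith [hs₂.1]))
        (by
          filter_upwards [hfC] with x hfx hxW h hh hh'
          have hCx : U' (ρ₀ x) + V₀ x = C := hfx (hWsubS hxW)
          have hrr := (hrates (ρ₀ x) hxW.1 hxW.2 h hh (le_trans hh' (min_le_right _ _))).1
          have e3 : h * (U' (ρ₀ x) + V₀ x) = h * C := by rw [hCx]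
          nlinarith [hrr])
        (Eventually.of_forall fun x hx h hh hh' => by
          have h1 : ρ₀ x = α := hx.1
          have h2 : C - V₀ x < (q : ℝ) := hx.2
          rw [h1]
          have hrα := rate_alpha s₂ hs₂ h hh (le_trans hh' (min_le_left _ _))
          have e1 := mul_le_mul_of_nonneg_left hs₂'.le hh.le
          have e2 := mul_le_mul_of_nonneg_left (by linarith : C - (q : ℝ) ≤ V₀ x) hh.le
          nlinarith [hrα])
      linarith
    refine ⟨C, ?_⟩
    have hbad2 : μ {x | ρ₀ x = 0 ∧ ¬ (((C - V₀ x : ℝ) : EReal) ≤ ζl)} = 0 := by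
      have hsub : {x | ρ₀ x = 0 ∧ ¬ (((C - V₀ x : ℝ) : EReal) ≤ ζl)} ⊆
          ⋃ q : {q : ℚ // ζl < ((q : ℝ) : EReal)},
            ({x | ρ₀ x = 0} ∩ {x | ((q.1 : ℝ)) < C - V₀ x}) := by
        intro x hx
        have hlt : ζl < ((C - V₀ x : ℝ) : EReal) := lt_of_not_ge hx.2
        obtain ⟨q, hq1, hq2⟩ := EReal.exists_rat_btwn_of_lt hlt
        exact mem_iUnion.2 ⟨⟨q, hq1⟩, hx.1, by exact_mod_cast hq2⟩
      exact measure_mono_null hsub (measure_iUnion_null fun q => claim2 q.1 q.2)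
    have hbad3 : μ {x | ρ₀ x = α ∧ ¬ (ζh ≤ ((C - V₀ x : ℝ) : EReal))} = 0 := by
      have hsub : {x | ρ₀ x = α ∧ ¬ (ζh ≤ ((C - V₀ x : ℝ) : EReal))} ⊆
          ⋃ q : {q : ℚ // ((q : ℝ) : EReal) < ζh},
            ({x | ρ₀ x = α} ∩ {x | C - V₀ x < ((q.1 : ℝ))}) := by
        intro x hx
        have hlt : ((C - V₀ x : ℝ) : EReal) < ζh := lt_of_not_ge hx.2
        obtain ⟨q, hq1, hq2⟩ := EReal.exists_rat_btwn_of_lt hlt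
        exact mem_iUnion.2 ⟨⟨q, hq2⟩, hx.1, by exact_mod_cast hq1⟩
      exact measure_mono_null hsub (measure_iUnion_null fun q => claim3 q.1 q.2)
    filter_upwards [hfC, measure_eq_zero_iff_ae_notMem.1 hbad2, measure_eq_zero_iff_ae_notMem.1 hbad3,
      hρ₀e, hV₀e] with x h1 h2 h3 he hv
    refine ⟨?_, ?_, ?_⟩
    · intro hmem
      rw [he] at hmem
      rw [he, hv]
      exact h1 hmem
    · intro h0
      rw [he] at h0
      by_contra hne
      rw [hv] at hne
      exact h2 ⟨h0, hne⟩
    · intro hαx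
      rw [he] at hαx
      by_contra hne
      rw [hv] at hne
      exact h3 ⟨hαx, hne⟩
end

section
/- Let M ∈ (0, α|Ω|), assume U′ is strictly increasing on (0,α), and let ρ̂ be an L¹-local minimiser of ℱ on 𝒜_M. Then there exists a constant C ∈ ℝ such that ρ̂(x) = g(C − V(x)) for a.e. x ∈ Ω, where g = T_{0,α}∘(U′)⁻¹. -/
open Set MeasureTheory Filter Topology

private lemma slope_mono2 {α : ℝ} {U : ℝ → ℝ} (hU : ConvexOn ℝ (Icc 0 α) U)
    {a b c d : ℝ} (ha : a ∈ Icc 0 α) (hd : d ∈ Icc 0 α)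
    (hab : a < b) (hcd : c < d) (hac : a ≤ c) (hbd : b ≤ d) :
    (U b - U a) / (b - a) ≤ (U d - U c) / (d - c) := by
  have hb : b ∈ Icc 0 α := ⟨ha.1.trans hab.le, hbd.trans hd.2⟩
  have hc : c ∈ Icc 0 α := ⟨ha.1.trans hac, hcd.le.trans hd.2⟩
  have had : a < d := hab.trans_le hbd
  have h1 : (U b - U a) / (b - a) ≤ (U d - U a) / (d - a) :=
    hU.secant_mono ha hb hd hab.ne' had.ne' hbd
  have h2 : (U a - U d) / (a - d) ≤ (U c - U d) / (c - d) :=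
    hU.secant_mono hd ha hc had.ne hcd.ne hac
  have e1 : (U a - U d) / (a - d) = (U d - U a) / (d - a) := by
    rw [← neg_sub (U d) (U a), ← neg_sub d a, neg_div_neg_eq]
  have e2 : (U c - U d) / (c - d) = (U d - U c) / (d - c) := by
    rw [← neg_sub (U d) (U c), ← neg_sub d c, neg_div_neg_eq]
  rw [e1] at h2
  rw [e2] at h2
  exact h1.trans h2

set_option maxHeartbeats 4000000 in
/-- When U′ is strictly increasing, every L¹-local minimiser of the free energy on 𝒜_M
is of the form ρ̂(x) = T_{0,α}∘(U′)⁻¹(C − V(x)). -/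
theorem local_minimiser_explicit_form
    (d : ℕ) (Ω : Set (EuclideanSpace ℝ (Fin d)))
    (hΩ_meas : MeasurableSet Ω) (hΩ_ne : Ω.Nonempty) (hΩ_open : IsOpen Ω)
    (hΩ_conn : IsConnected Ω) (hΩ_bdd : Bornology.IsBounded Ω)
    (α : ℝ) (hα : 0 < α)
    (U : ℝ → ℝ) (hU_cont : ContinuousOn U (Icc 0 α)) (hU_conv : ConvexOn ℝ (Icc 0 α) U)
    (V : EuclideanSpace ℝ (Fin d) → ℝ) (hV_cont : ContinuousOn V Ω)
    (hV_bdd : ∃ B : ℝ, ∀ x ∈ Ω, V x ≤ B) (hV_nonneg : ∀ x ∈ Ω, 0 ≤ V x)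
    (U' : ℝ → ℝ)
    (hU'_deriv : ∀ s ∈ Ioo 0 α, HasDerivAt U (U' s) s)
    (hU'_cont : ContinuousOn U' (Ioo 0 α))
    (hU'_smono : StrictMonoOn U' (Ioo 0 α))
    (ζl ζh : EReal) (hζl_ne : ζl ≠ ⊤) (hζh_ne : ζh ≠ ⊥)
    (hζl_lim : Tendsto (fun s : ℝ => (U' s : EReal)) (𝓝[>] (0:ℝ)) (𝓝 ζl))
    (hζh_lim : Tendsto (fun s : ℝ => (U' s : EReal)) (𝓝[<] α) (𝓝 ζh))
    (g : ℝ → ℝ)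
    (hg_low : ∀ ζ : ℝ, (ζ : EReal) ≤ ζl → g ζ = 0)
    (hg_high : ∀ ζ : ℝ, ζh ≤ (ζ : EReal) → g ζ = α)
    (hg_mid : ∀ ζ : ℝ, ζl < (ζ : EReal) → (ζ : EReal) < ζh →
      g ζ ∈ Ioo 0 α ∧ U' (g ζ) = ζ)
    (M : ℝ) (hM_pos : 0 < M) (hM_lt : M < α * (volume Ω).toReal)
    (ρh : EuclideanSpace ℝ (Fin d) → ℝ)
    (hρh_int : Integrable ρh (volume.restrict Ω))
    (hρh_mem : ∀ᵐ x ∂(volume.restrict Ω), ρh x ∈ Icc 0 α)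
    (hρh_mass : ∫ x in Ω, ρh x = M)
    (hρh_locmin : ∃ r : ℝ, 0 < r ∧
      ∀ ρ : EuclideanSpace ℝ (Fin d) → ℝ,
        Integrable ρ (volume.restrict Ω) →
        (∀ᵐ x ∂(volume.restrict Ω), ρ x ∈ Icc 0 α) →
        (∫ x in Ω, ρ x) = M →
        (∫ x in Ω, |ρ x - ρh x|) < r →
        ∫ x in Ω, (U (ρh x) + V x * ρh x) ≤ ∫ x in Ω, (U (ρ x) + V x * ρ x)) :
    ∃ C : ℝ, ∀ᵐ x ∂(volume.restrict Ω), ρh x = g (C - V x) := by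
  obtain ⟨r, hr, hmin⟩ := hρh_locmin
  set μ := volume.restrict Ω with hμdef
  have hμ_fin : IsFiniteMeasure μ := by
    constructor
    rw [hμdef, Measure.restrict_apply_univ]
    exact hΩ_bdd.measure_lt_top
  -- bound for V
  obtain ⟨B₀, hB₀⟩ := hV_bdd
  set B : ℝ := max B₀ 0 with hBdef
  have hB_nonneg : 0 ≤ B := le_max_right _ _
  have hVB : ∀ x ∈ Ω, V x ≤ B := fun x hx => (hB₀ x hx).trans (le_max_left _ _)
  -- measurable representatives
  have hρ_aem : AEMeasurable ρh μ := hρh_int.aemeasurable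
  set ρm : EuclideanSpace ℝ (Fin d) → ℝ := fun x => max 0 (min α (hρ_aem.mk ρh x)) with hρmdef
  have hρm_meas : Measurable ρm :=
    measurable_const.max (measurable_const.min hρ_aem.measurable_mk)
  have hρm_mem : ∀ x, ρm x ∈ Icc 0 α := by
    intro x
    constructor
    · exact le_max_left _ _
    · exact max_le hα.le (min_le_left _ _)
  have hρm_eq : ρm =ᵐ[μ] ρh := by
    filter_upwards [hρ_aem.ae_eq_mk, hρh_mem] with x hx hmem
    rw [hρmdef]
    simp only [← hx]
    rw [min_eq_right hmem.2, max_eq_right hmem.1]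
  -- measurable representative of V, clamped to [0, B]
  have hV_aem : AEMeasurable V μ := hV_cont.aemeasurable hΩ_meas
  set Vm : EuclideanSpace ℝ (Fin d) → ℝ := fun x => max 0 (min B (hV_aem.mk V x)) with hVmdef
  have hVm_meas : Measurable Vm :=
    measurable_const.max (measurable_const.min hV_aem.measurable_mk)
  have hVm_mem : ∀ x, Vm x ∈ Icc 0 B := by
    intro x
    exact ⟨le_max_left _ _, max_le hB_nonneg (min_le_left _ _)⟩
  have hVm_eq : Vm =ᵐ[μ] V := by
    have hmem : ∀ᵐ x ∂μ, x ∈ Ω := ae_restrict_mem hΩ_meas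
    filter_upwards [hV_aem.ae_eq_mk, hmem] with x hx hxΩ
    rw [hVmdef]
    simp only [← hx]
    rw [min_eq_right (hVB x hxΩ), max_eq_right (hV_nonneg x hxΩ)]
  -- composition with U is measurable
  have hUcomp : ∀ f : EuclideanSpace ℝ (Fin d) → ℝ, Measurable f → (∀ x, f x ∈ Icc 0 α) →
      Measurable (fun x => U (f x)) := by
    intro f hf hmem
    have hUc : Continuous (fun y : Icc (0:ℝ) α => U (y : ℝ)) :=
      continuousOn_iff_continuous_restrict.mp hU_cont
    exact hUc.measurable.comp
      (show Measurable (fun x => (⟨f x, hmem x⟩ : Icc (0:ℝ) α)) from hf.subtype_mk)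
  -- bound for U on [0, α]
  obtain ⟨K, hK⟩ : ∃ K : ℝ, ∀ y ∈ Icc (0:ℝ) α, ‖U y‖ ≤ K :=
    isCompact_Icc.exists_bound_of_continuousOn hU_cont
  -- bounded measurable functions are integrable
  have hbint : ∀ (f : EuclideanSpace ℝ (Fin d) → ℝ) (K' : ℝ), Measurable f → (∀ x, |f x| ≤ K') →
      Integrable f μ := by
    intro f K' hf hbd
    exact Integrable.mono' (integrable_const K') hf.aestronglyMeasurable
      (Eventually.of_forall fun x => (Real.norm_eq_abs (f x)).symm ▸ hbd x)
  have hK0 : 0 ≤ K := le_trans (norm_nonneg _) (hK 0 ⟨le_rfl, hα.le⟩)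
  -- the slope functions
  set Qp : ℝ → EuclideanSpace ℝ (Fin d) → ℝ :=
    fun h x => (U (min α (ρm x + h)) - U (ρm x)) / h with hQpdef
  set Qm : ℝ → EuclideanSpace ℝ (Fin d) → ℝ :=
    fun h x => (U (ρm x) - U (max 0 (ρm x - h))) / h with hQmdef
  have hQp_meas : ∀ h : ℝ, 0 < h → Measurable (Qp h) := by
    intro h hh
    apply Measurable.div _ measurable_const
    apply Measurable.sub _ (hUcomp _ hρm_meas hρm_mem)
    apply hUcomp _ (measurable_const.min (hρm_meas.add measurable_const))
    intro x
    exact ⟨le_min hα.le (by show 0 ≤ ρm x + h; linarith [(hρm_mem x).1]), min_le_left _ _⟩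
  have hQm_meas : ∀ h : ℝ, 0 < h → Measurable (Qm h) := by
    intro h hh
    apply Measurable.div _ measurable_const
    apply Measurable.sub (hUcomp _ hρm_meas hρm_mem)
    apply hUcomp _ (measurable_const.max (hρm_meas.sub measurable_const))
    intro x
    exact ⟨le_max_left _ _, max_le hα.le (by show ρm x - h ≤ α; linarith [(hρm_mem x).2])⟩
  -- mass of the representative
  have hmass_m : ∫ x, ρm x ∂μ = M := by
    rw [integral_congr_ae hρm_eq]; exact hρh_mass
  have hρm_int : Integrable ρm μ := hρh_int.congr hρm_eq.symm
  -- key exchange lemma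
  have key : ∀ h h' p q : ℝ, 0 < h → 0 < h' → p < q →
      μ {x | ρm x ≤ α - h ∧ Qp h x + Vm x < p} = 0 ∨
      μ {x | h' ≤ ρm x ∧ q < Qm h' x + Vm x} = 0 := by
    intro h h' p q hh hh' hpq
    by_contra hcon
    push_neg at hcon
    obtain ⟨hA0, hB0⟩ := hcon
    set A := {x | ρm x ≤ α - h ∧ Qp h x + Vm x < p} with hAdef
    set Bs := {x | h' ≤ ρm x ∧ q < Qm h' x + Vm x} with hBsdef
    have hA_mem : ∀ x, x ∈ A → ρm x ≤ α - h ∧ Qp h x + Vm x < p := fun x hx => hx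
    have hB_mem : ∀ x, x ∈ Bs → h' ≤ ρm x ∧ q < Qm h' x + Vm x := fun x hx => hx
    have hA_meas : MeasurableSet A := by
      rw [hAdef, setOf_and]
      exact (measurableSet_le hρm_meas measurable_const).inter
        (measurableSet_lt ((hQp_meas h hh).add hVm_meas) measurable_const)
    have hB_meas : MeasurableSet Bs := by
      rw [hBsdef, setOf_and]
      exact (measurableSet_le measurable_const hρm_meas).inter
        (measurableSet_lt measurable_const ((hQm_meas h' hh').add hVm_meas))
    set a := (μ A).toReal with hadef
    set b := (μ Bs).toReal with hbdef2
    have ha : 0 < a := ENNReal.toReal_pos hA0 (measure_ne_top μ A)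
    have hb : 0 < b := ENNReal.toReal_pos hB0 (measure_ne_top μ Bs)
    set h₁ := min h (min (h' * b / a) (r / (2 * a + 1))) with hh₁def
    have hh₁ : 0 < h₁ := lt_min hh (lt_min (by positivity) (by positivity))
    have h₁h : h₁ ≤ h := min_le_left _ _
    set h₂ := h₁ * a / b with hh₂def
    have hh₂ : 0 < h₂ := by positivity
    have h₂h' : h₂ ≤ h' := by
      rw [hh₂def, div_le_iff₀ hb]
      have h1' : h₁ ≤ h' * b / a := le_trans (min_le_right _ _) (min_le_left _ _)
      have := (le_div_iff₀ ha).mp h1'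
      linarith
    have hmassbal : h₂ * b = h₁ * a := div_mul_cancel₀ _ hb.ne'
    have hL1 : 2 * (h₁ * a) < r := by
      have h1'' : h₁ ≤ r / (2 * a + 1) := le_trans (min_le_right _ _) (min_le_right _ _)
      have := (le_div_iff₀ (by positivity : (0:ℝ) < 2 * a + 1)).mp h1''
      nlinarith
    -- A and Bs are disjoint
    have hABdisj : ∀ x, x ∈ A → x ∈ Bs → False := by
      intro x hxA hxB
      obtain ⟨hx1, hx2⟩ := hA_mem x hxA
      obtain ⟨hx3, hx4⟩ := hB_mem x hxB
      have hQmQp : Qm h' x ≤ Qp h x := by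
        simp only [hQpdef, hQmdef]
        rw [min_eq_right (by linarith), max_eq_right (by linarith [(hρm_mem x).1])]
        have hs := slope_mono2 hU_conv (a := ρm x - h') (b := ρm x) (c := ρm x) (d := ρm x + h)
          ⟨by linarith, by linarith [(hρm_mem x).2]⟩ ⟨by linarith [(hρm_mem x).1], by linarith⟩
          (by linarith) (by linarith) (by linarith) (by linarith)
        have e1 : ρm x - (ρm x - h') = h' := by ring
        have e2 : ρm x + h - ρm x = h := by ring
        rw [e1, e2] at hs
        exact hs
      linarith
    -- the competitor
    set ρ := fun y => ρm y + A.indicator (fun _ => h₁) y + Bs.indicator (fun _ => -h₂) y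
      with hρdef
    have hρ_onA : ∀ x ∈ A, ρ x = ρm x + h₁ := by
      intro x hx
      simp only [hρdef]
      rw [indicator_of_mem hx, indicator_of_notMem (fun hB => hABdisj x hx hB)]
      ring
    have hρ_onB : ∀ x ∈ Bs, ρ x = ρm x - h₂ := by
      intro x hx
      simp only [hρdef]
      rw [indicator_of_mem hx, indicator_of_notMem (fun hA' => hABdisj x hA' hx)]
      ring
    have hρ_off : ∀ x, x ∉ A → x ∉ Bs → ρ x = ρm x := by
      intro x hx1 hx2
      simp only [hρdef]
      rw [indicator_of_notMem hx1, indicator_of_notMem hx2]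
      ring
    have hρmem : ∀ x, ρ x ∈ Icc 0 α := by
      intro x
      by_cases hxA : x ∈ A
      · rw [hρ_onA x hxA]
        have := (hA_mem x hxA).1
        exact ⟨by linarith [(hρm_mem x).1], by linarith⟩
      by_cases hxB : x ∈ Bs
      · rw [hρ_onB x hxB]
        have := (hB_mem x hxB).1
        exact ⟨by linarith, by linarith [(hρm_mem x).2]⟩
      · rw [hρ_off x hxA hxB]
        exact hρm_mem x
    have hρ_meas : Measurable ρ :=
      (hρm_meas.add (measurable_const.indicator hA_meas)).add
        (measurable_const.indicator hB_meas)
    have hρ_int : Integrable ρ μ := by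
      refine hbint ρ α hρ_meas fun x => ?_
      have := hρmem x
      rw [abs_le]
      exact ⟨by linarith [this.1], this.2⟩
    have hindA_int : Integrable (A.indicator (fun _ => h₁)) μ :=
      (integrable_const h₁).indicator hA_meas
    have hindB_int : Integrable (Bs.indicator (fun _ => (-h₂ : ℝ))) μ :=
      (integrable_const (-h₂)).indicator hB_meas
    have hmass : ∫ x, ρ x ∂μ = M := by
      have e : ∫ x, ρ x ∂μ =
          ∫ x, ρm x ∂μ + (∫ x, A.indicator (fun _ => h₁) x ∂μ +
            ∫ x, Bs.indicator (fun _ => (-h₂:ℝ)) x ∂μ) := by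
        rw [← integral_add hindA_int hindB_int,
          ← integral_add hρm_int (show Integrable (fun x =>
            A.indicator (fun _ => h₁) x + Bs.indicator (fun _ => (-h₂:ℝ)) x) μ from
            hindA_int.add hindB_int)]
        congr 1
        funext x
        simp only [hρdef, Pi.add_apply]
        ring
      rw [e, integral_indicator_const _ hA_meas, integral_indicator_const _ hB_meas, hmass_m]
      simp only [smul_eq_mul, measureReal_def, ← hadef, ← hbdef2]
      have hzero : a * h₁ + b * -h₂ = 0 := by
        rw [show b * -h₂ = -(h₂ * b) from by ring, hmassbal]; ring
      linarith
    have hL1' : ∫ x, |ρ x - ρh x| ∂μ < r := by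
      have heq : (fun x => |ρ x - ρh x|) =ᵐ[μ]
          (fun x => A.indicator (fun _ => h₁) x + Bs.indicator (fun _ => h₂) x) := by
        filter_upwards [hρm_eq] with x hx
        by_cases hxA : x ∈ A
        · rw [hρ_onA x hxA, ← hx, indicator_of_mem hxA,
            indicator_of_notMem (fun hB => hABdisj x hxA hB)]
          rw [show ρm x + h₁ - ρm x = h₁ from by ring, abs_of_pos hh₁]
          ring
        by_cases hxB : x ∈ Bs
        · rw [hρ_onB x hxB, ← hx, indicator_of_mem hxB, indicator_of_notMem hxA]
          rw [show ρm x - h₂ - ρm x = -h₂ from by ring, abs_neg, abs_of_pos hh₂]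
          ring
        · rw [hρ_off x hxA hxB, ← hx, indicator_of_notMem hxA, indicator_of_notMem hxB]
          simp
      rw [integral_congr_ae heq,
        integral_add hindA_int ((integrable_const h₂).indicator hB_meas),
        integral_indicator_const _ hA_meas, integral_indicator_const _ hB_meas]
      simp only [smul_eq_mul, measureReal_def, ← hadef, ← hbdef2]
      rw [mul_comm] at hmassbal
      nlinarith
    have hE := hmin ρ hρ_int (Eventually.of_forall hρmem) hmass hL1'
    -- switch to the measurable representatives in the energy inequality
    have hEL : ∫ x, (U (ρh x) + V x * ρh x) ∂μ = ∫ x, (U (ρm x) + Vm x * ρm x) ∂μ := by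
      apply integral_congr_ae
      filter_upwards [hρm_eq, hVm_eq] with x hx1 hx2
      rw [hx1, hx2]
    have hER : ∫ x, (U (ρ x) + V x * ρ x) ∂μ = ∫ x, (U (ρ x) + Vm x * ρ x) ∂μ := by
      apply integral_congr_ae
      filter_upwards [hVm_eq] with x hx
      rw [hx]
    rw [hEL, hER] at hE
    -- split the energy difference over A and Bs
    set gA := fun x => U (min α (ρm x + h₁)) - U (ρm x) + h₁ * Vm x with hgAdef
    set gB := fun x => U (max 0 (ρm x - h₂)) - U (ρm x) - h₂ * Vm x with hgBdef
    have hgA_meas : Measurable gA := by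
      apply Measurable.add _ (measurable_const.mul hVm_meas)
      refine Measurable.sub ?_ (hUcomp _ hρm_meas hρm_mem)
      refine hUcomp _ (measurable_const.min (hρm_meas.add measurable_const)) fun x => ?_
      exact ⟨le_min hα.le (by show 0 ≤ ρm x + h₁; linarith [(hρm_mem x).1]), min_le_left _ _⟩
    have hgB_meas : Measurable gB := by
      apply Measurable.sub _ (measurable_const.mul hVm_meas)
      refine Measurable.sub ?_ (hUcomp _ hρm_meas hρm_mem)
      refine hUcomp _ (measurable_const.max (hρm_meas.sub measurable_const)) fun x => ?_
      exact ⟨le_max_left _ _, max_le hα.le (by show ρm x - h₂ ≤ α; linarith [(hρm_mem x).2])⟩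
    have hgA_bd : ∀ x, |gA x| ≤ K + K + h₁ * B := by
      intro x
      simp only [hgAdef]
      have k1 : ‖U (min α (ρm x + h₁))‖ ≤ K :=
        hK _ ⟨le_min hα.le (by linarith [(hρm_mem x).1]), min_le_left _ _⟩
      have k2 : ‖U (ρm x)‖ ≤ K := hK _ (hρm_mem x)
      have k3 := (hVm_mem x).1
      have k4 := (hVm_mem x).2
      rw [Real.norm_eq_abs] at k1 k2
      rw [abs_le] at k1 k2 ⊢
      have m1 : 0 ≤ h₁ * Vm x := mul_nonneg hh₁.le k3
      have m2 : h₁ * Vm x ≤ h₁ * B := mul_le_mul_of_nonneg_left k4 hh₁.le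
      have m3 : 0 ≤ h₁ * B := mul_nonneg hh₁.le hB_nonneg
      constructor
      · linarith [k1.1, k2.2]
      · linarith [k1.2, k2.1]
    have hgB_bd : ∀ x, |gB x| ≤ K + K + h₂ * B := by
      intro x
      simp only [hgBdef]
      have k1 : ‖U (max 0 (ρm x - h₂))‖ ≤ K :=
        hK _ ⟨le_max_left _ _, max_le hα.le (by linarith [(hρm_mem x).2])⟩
      have k2 : ‖U (ρm x)‖ ≤ K := hK _ (hρm_mem x)
      have k3 := (hVm_mem x).1
      have k4 := (hVm_mem x).2
      rw [Real.norm_eq_abs] at k1 k2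
      rw [abs_le] at k1 k2 ⊢
      have m1 : 0 ≤ h₂ * Vm x := mul_nonneg hh₂.le k3
      have m2 : h₂ * Vm x ≤ h₂ * B := mul_le_mul_of_nonneg_left k4 hh₂.le
      have m3 : 0 ≤ h₂ * B := mul_nonneg hh₂.le hB_nonneg
      constructor
      · linarith [k1.1, k2.2]
      · linarith [k1.2, k2.1]
    have hgA_int : Integrable gA μ := hbint gA _ hgA_meas hgA_bd
    have hgB_int : Integrable gB μ := hbint gB _ hgB_meas hgB_bd
    have hsplit : (fun x => (U (ρ x) + Vm x * ρ x) - (U (ρm x) + Vm x * ρm x)) =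
        fun x => A.indicator gA x + Bs.indicator gB x := by
      funext x
      by_cases hxA : x ∈ A
      · rw [indicator_of_mem hxA, indicator_of_notMem (fun hB => hABdisj x hxA hB),
          hρ_onA x hxA, hgAdef]
        have hminr : min α (ρm x + h₁) = ρm x + h₁ :=
          min_eq_right (by linarith [(hA_mem x hxA).1])
        simp only
        rw [hminr]
        ring
      by_cases hxB : x ∈ Bs
      · rw [indicator_of_mem hxB, indicator_of_notMem hxA, hρ_onB x hxB, hgBdef]
        have hmaxr : max 0 (ρm x - h₂) = ρm x - h₂ :=
          max_eq_right (by linarith [(hB_mem x hxB).1])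
        simp only
        rw [hmaxr]
        ring
      · rw [indicator_of_notMem hxA, indicator_of_notMem hxB, hρ_off x hxA hxB]
        ring
    have hUρ_int : Integrable (fun x => U (ρ x) + Vm x * ρ x) μ := by
      refine hbint _ (K + B * α) (Measurable.add (hUcomp _ hρ_meas hρmem)
        (hVm_meas.mul hρ_meas)) fun x => ?_
      have k1 : ‖U (ρ x)‖ ≤ K := hK _ (hρmem x)
      rw [Real.norm_eq_abs] at k1
      have k3 := (hVm_mem x).1
      have k4 := (hVm_mem x).2
      have k5 := (hρmem x).1
      have k6 := (hρmem x).2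
      rw [abs_le] at k1 ⊢
      have m1 : 0 ≤ Vm x * ρ x := mul_nonneg k3 k5
      have m2 : Vm x * ρ x ≤ B * α := mul_le_mul k4 k6 k5 hB_nonneg
      constructor
      · linarith [k1.1]
      · linarith [k1.2]
    have hUρm_int : Integrable (fun x => U (ρm x) + Vm x * ρm x) μ := by
      refine hbint _ (K + B * α) (Measurable.add (hUcomp _ hρm_meas hρm_mem)
        (hVm_meas.mul hρm_meas)) fun x => ?_
      have k1 : ‖U (ρm x)‖ ≤ K := hK _ (hρm_mem x)
      rw [Real.norm_eq_abs] at k1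
      have k3 := (hVm_mem x).1
      have k4 := (hVm_mem x).2
      have k5 := (hρm_mem x).1
      have k6 := (hρm_mem x).2
      rw [abs_le] at k1 ⊢
      have m1 : 0 ≤ Vm x * ρm x := mul_nonneg k3 k5
      have m2 : Vm x * ρm x ≤ B * α := mul_le_mul k4 k6 k5 hB_nonneg
      constructor
      · linarith [k1.1]
      · linarith [k1.2]
    have hdiff : (0:ℝ) ≤ ∫ x in A, gA x ∂μ + ∫ x in Bs, gB x ∂μ := by
      have e1 : ∫ x, ((U (ρ x) + Vm x * ρ x) - (U (ρm x) + Vm x * ρm x)) ∂μ =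
          ∫ x, (U (ρ x) + Vm x * ρ x) ∂μ - ∫ x, (U (ρm x) + Vm x * ρm x) ∂μ :=
        integral_sub hUρ_int hUρm_int
      have e2 : ∫ x, ((U (ρ x) + Vm x * ρ x) - (U (ρm x) + Vm x * ρm x)) ∂μ =
          ∫ x, (A.indicator gA x + Bs.indicator gB x) ∂μ := by rw [hsplit]
      have e3 : ∫ x, (A.indicator gA x + Bs.indicator gB x) ∂μ =
          ∫ x in A, gA x ∂μ + ∫ x in Bs, gB x ∂μ := by
        rw [integral_add (hgA_int.indicator hA_meas) (hgB_int.indicator hB_meas),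
          integral_indicator hA_meas, integral_indicator hB_meas]
      rw [e2, e3] at e1
      linarith
    -- strict bound on A
    have hAbound : ∫ x in A, gA x ∂μ < a * (h₁ * p) := by
      have hFpos : ∀ x ∈ A, 0 < h₁ * p - gA x := by
        intro x hx
        obtain ⟨hx1, hx2⟩ := hA_mem x hx
        have hminr : min α (ρm x + h₁) = ρm x + h₁ := min_eq_right (by linarith)
        have hminr2 : min α (ρm x + h) = ρm x + h := min_eq_right (by linarith)
        have hs := slope_mono2 hU_conv (a := ρm x) (b := ρm x + h₁) (c := ρm x) (d := ρm x + h)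
          (hρm_mem x) ⟨by linarith [(hρm_mem x).1], by linarith⟩
          (by linarith) (by linarith) le_rfl (by linarith)
        have e1 : ρm x + h₁ - ρm x = h₁ := by ring
        have e2 : ρm x + h - ρm x = h := by ring
        rw [e1, e2] at hs
        have hq : Qp h x = (U (ρm x + h) - U (ρm x)) / h := by
          simp only [hQpdef]; rw [hminr2]
        have hub : U (ρm x + h₁) - U (ρm x) ≤ Qp h x * h₁ := by
          rw [hq]
          exact (div_le_iff₀ hh₁).mp hs
        have : gA x = U (ρm x + h₁) - U (ρm x) + h₁ * Vm x := by
          rw [hgAdef]; simp only; rw [hminr]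
        rw [this]
        nlinarith
      have hnonneg : 0 ≤ᵐ[μ.restrict A] fun x => h₁ * p - gA x :=
        (ae_restrict_iff' hA_meas).mpr (Eventually.of_forall fun x hx => (hFpos x hx).le)
      have hFint : IntegrableOn (fun x => h₁ * p - gA x) A μ :=
        ((integrable_const (h₁ * p)).sub hgA_int).integrableOn
      have hsupp : 0 < μ (Function.support (fun x => h₁ * p - gA x) ∩ A) := by
        refine lt_of_lt_of_le (lt_of_le_of_ne (by positivity) (Ne.symm hA0)) (measure_mono ?_)
        intro x hx
        exact ⟨ne_of_gt (hFpos x hx), hx⟩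
      have hpos := (setIntegral_pos_iff_support_of_nonneg_ae hnonneg hFint).mpr hsupp
      have e4 : ∫ x in A, (h₁ * p - gA x) ∂μ =
          (μ A).toReal • (h₁ * p) - ∫ x in A, gA x ∂μ := by
        rw [integral_sub (integrableOn_const (C := h₁ * p) (measure_ne_top μ A)) hgA_int.integrableOn,
          setIntegral_const, measureReal_def]
      rw [e4] at hpos
      rw [smul_eq_mul, ← hadef] at hpos
      linarith
    -- bound on Bs
    have hBbound : ∫ x in Bs, gB x ∂μ ≤ b * (-(h₂ * q)) := by
      have hle : ∀ x ∈ Bs, gB x ≤ -(h₂ * q) := by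
        intro x hx
        obtain ⟨hx1, hx2⟩ := hB_mem x hx
        have hmaxr : max 0 (ρm x - h₂) = ρm x - h₂ := max_eq_right (by linarith)
        have hmaxr2 : max 0 (ρm x - h') = ρm x - h' := max_eq_right (by linarith)
        have hs := slope_mono2 hU_conv (a := ρm x - h') (b := ρm x) (c := ρm x - h₂) (d := ρm x)
          ⟨by linarith, by linarith [(hρm_mem x).2]⟩ (hρm_mem x)
          (by linarith) (by linarith) (by linarith) le_rfl
        have e1 : ρm x - (ρm x - h') = h' := by ring
        have e2 : ρm x - (ρm x - h₂) = h₂ := by ring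
        rw [e1, e2] at hs
        have hq2 : Qm h' x = (U (ρm x) - U (ρm x - h')) / h' := by
          simp only [hQmdef]; rw [hmaxr2]
        have hub : Qm h' x * h₂ ≤ U (ρm x) - U (ρm x - h₂) := by
          rw [hq2]
          exact (le_div_iff₀ hh₂).mp hs
        have hgBeq : gB x = U (ρm x - h₂) - U (ρm x) - h₂ * Vm x := by
          rw [hgBdef]; simp only; rw [hmaxr]
        rw [hgBeq]
        nlinarith [mul_le_mul_of_nonneg_left hx2.le hh₂.le]
      calc ∫ x in Bs, gB x ∂μ ≤ ∫ _x in Bs, (-(h₂ * q)) ∂μ :=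
            setIntegral_mono_on hgB_int.integrableOn
              (integrableOn_const (measure_ne_top μ Bs)) hB_meas hle
        _ = b * (-(h₂ * q)) := by rw [setIntegral_const, smul_eq_mul, measureReal_def, ← hbdef2]
    -- contradiction
    have eq1 : b * (-(h₂ * q)) = -(h₁ * a * q) := by
      rw [show b * (-(h₂ * q)) = -(h₂ * b * q) from by ring, hmassbal]
    have eq2 : (0:ℝ) < h₁ * a * (q - p) := mul_pos (mul_pos hh₁ ha) (sub_pos.mpr hpq)
    have expand : h₁ * a * (q - p) = h₁ * a * q - h₁ * a * p := by ring
    have eq3 : a * (h₁ * p) = h₁ * a * p := by ring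
    rw [eq1] at hBbound
    rw [eq3] at hAbound
    linarith
  -- positivity facts
  have fact1 : ∃ h' : ℝ, 0 < h' ∧ h' ≤ α ∧ μ {x | h' ≤ ρm x} ≠ 0 := by
    by_contra hcon
    push_neg at hcon
    have hnull : ∀ n : ℕ, μ {x | min α (1/(n+1)) ≤ ρm x} = 0 := by
      intro n
      exact hcon _ (lt_min hα (by positivity)) (min_le_left _ _)
    have hsub : {x | 0 < ρm x} ⊆ ⋃ n : ℕ, {x | min α (1/(n+1)) ≤ ρm x} := by
      intro x hx
      simp only [mem_setOf_eq] at hx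
      obtain ⟨n, hn⟩ := exists_nat_one_div_lt hx
      exact mem_iUnion.mpr ⟨n, le_trans (min_le_right _ _) hn.le⟩
    have h0 : μ {x | 0 < ρm x} = 0 := measure_mono_null hsub (measure_iUnion_null hnull)
    have hae : ρm =ᵐ[μ] (fun _ => (0:ℝ)) := by
      rw [Filter.EventuallyEq, ae_iff]
      refine measure_mono_null ?_ h0
      intro x hx
      simp only [mem_setOf_eq] at hx ⊢
      exact lt_of_le_of_ne (hρm_mem x).1 (Ne.symm hx)
    have : M = 0 := by
      rw [← hmass_m, integral_congr_ae hae, integral_zero]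
    linarith
  
  have fact2 : ∃ h : ℝ, 0 < h ∧ h ≤ α ∧ μ {x | ρm x ≤ α - h} ≠ 0 := by
    by_contra hcon
    push_neg at hcon
    have hnull : ∀ n : ℕ, μ {x | ρm x ≤ α - min α (1/(n+1))} = 0 := by
      intro n
      exact hcon _ (lt_min hα (by positivity)) (min_le_left _ _)
    have hsub : {x | ρm x < α} ⊆ ⋃ n : ℕ, {x | ρm x ≤ α - min α (1/(n+1))} := by
      intro x hx
      simp only [mem_setOf_eq] at hx
      obtain ⟨n, hn⟩ := exists_nat_one_div_lt (sub_pos.mpr hx)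
      refine mem_iUnion.mpr ⟨n, ?_⟩
      simp only [mem_setOf_eq]
      have : min α (1/(n+1)) ≤ 1/(n+1:ℝ) := min_le_right _ _
      linarith
    have h0 : μ {x | ρm x < α} = 0 := measure_mono_null hsub (measure_iUnion_null hnull)
    have hae : ρm =ᵐ[μ] (fun _ => α) := by
      rw [Filter.EventuallyEq, ae_iff]
      refine measure_mono_null ?_ h0
      intro x hx
      simp only [mem_setOf_eq] at hx ⊢
      exact lt_of_le_of_ne (hρm_mem x).2 hx
    have hM : M = α * (volume Ω).toReal := by
      rw [← hmass_m, integral_congr_ae hae, integral_const, smul_eq_mul]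
      rw [measureReal_def, hμdef, Measure.restrict_apply_univ, mul_comm]
    linarith
  
  -- the Lagrange multiplier
  set S : Set ℝ :=
    {t | ∃ h' : ℝ, 0 < h' ∧ μ {x | h' ≤ ρm x ∧ t < Qm h' x + Vm x} ≠ 0} with hSdef
  have hS_ne : S.Nonempty := by
    obtain ⟨h', h'pos, h'le, hne⟩ := fact1
    refine ⟨(U h' - U 0)/h' - 1, h', h'pos, ?_⟩
    have hsub : {x | h' ≤ ρm x} ⊆
        {x | h' ≤ ρm x ∧ (U h' - U 0)/h' - 1 < Qm h' x + Vm x} := by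
      intro x hx
      simp only [mem_setOf_eq] at hx ⊢
      refine ⟨hx, ?_⟩
      have hmax : max 0 (ρm x - h') = ρm x - h' := max_eq_right (by linarith)
      have hq : (U h' - U 0)/h' ≤ Qm h' x := by
        simp only [hQmdef]
        rw [hmax]
        have hs := slope_mono2 hU_conv (a := 0) (b := h') (c := ρm x - h') (d := ρm x)
          ⟨le_rfl, hα.le⟩ (hρm_mem x) h'pos (by linarith) (by linarith) hx
        have e1 : h' - 0 = h' := by ring
        have e2 : ρm x - (ρm x - h') = h' := by ring
        rw [e1, e2] at hs
        exact hs
      have hv := (hVm_mem x).1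
      linarith
    exact fun hzero => hne (measure_mono_null hsub hzero)
  have hS_bdd : BddAbove S := by
    obtain ⟨h, hpos, hle, hne⟩ := fact2
    refine ⟨(U α - U (α - h))/h + B, ?_⟩
    rintro t ⟨h', h'pos, htne⟩
    by_contra hgt
    push_neg at hgt
    set p := ((U α - U (α - h))/h + B + t)/2 with hpdef
    have hp1 : (U α - U (α - h))/h + B < p := by rw [hpdef]; linarith
    have hp2 : p < t := by rw [hpdef]; linarith
    rcases key h h' p t hpos h'pos hp2 with h0 | h0
    · apply hne
      refine measure_mono_null ?_ h0
      intro x hx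
      simp only [mem_setOf_eq] at hx ⊢
      refine ⟨hx, ?_⟩
      have hmin : min α (ρm x + h) = ρm x + h := min_eq_right (by linarith)
      have hq : Qp h x ≤ (U α - U (α - h))/h := by
        simp only [hQpdef]
        rw [hmin]
        have hs := slope_mono2 hU_conv (a := ρm x) (b := ρm x + h) (c := α - h) (d := α)
          (hρm_mem x) ⟨hα.le, le_rfl⟩ (by linarith) (by linarith) hx (by linarith)
        have e1 : ρm x + h - ρm x = h := by ring
        have e2 : α - (α - h) = h := by ring
        rw [e1, e2] at hs
        exact hs
      have hv := (hVm_mem x).2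
      linarith
    · exact htne h0
  set C : ℝ := sSup S with hCdef
  have P1 : ∀ h' : ℝ, 0 < h' → ∀ᵐ x ∂μ, h' ≤ ρm x → Qm h' x + Vm x ≤ C := by
    intro h' h'pos
    rw [ae_iff]
    have hsub : {x | ¬ (h' ≤ ρm x → Qm h' x + Vm x ≤ C)} ⊆
        ⋃ q : ℚ, {x | C < (q:ℝ) ∧ h' ≤ ρm x ∧ (q:ℝ) < Qm h' x + Vm x} := by
      intro x hx
      simp only [mem_setOf_eq, Classical.not_imp, not_le] at hx
      obtain ⟨hx1, hx2⟩ := hx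
      obtain ⟨q, hq1, hq2⟩ := exists_rat_btwn hx2
      exact mem_iUnion.mpr ⟨q, hq1, hx1, hq2⟩
    refine measure_mono_null hsub (measure_iUnion_null fun q => ?_)
    by_cases hq : C < (q:ℝ)
    · by_contra hne
      have hqS : (q:ℝ) ∈ S := by
        refine ⟨h', h'pos, fun h0 => hne (measure_mono_null ?_ h0)⟩
        intro x hx
        simp only [mem_setOf_eq] at hx ⊢
        exact ⟨hx.2.1, hx.2.2⟩
      exact absurd (le_csSup hS_bdd hqS) (not_le.mpr hq)
    · have hempty : {x | C < (q:ℝ) ∧ h' ≤ ρm x ∧ (q:ℝ) < Qm h' x + Vm x} = ∅ := by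
        ext x
        simp only [mem_setOf_eq, mem_empty_iff_false, iff_false]
        rintro ⟨h1, -⟩
        exact hq h1
      rw [hempty]
      exact measure_empty
  have P2 : ∀ h : ℝ, 0 < h → ∀ᵐ x ∂μ, ρm x ≤ α - h → C ≤ Qp h x + Vm x := by
    intro h hpos
    rw [ae_iff]
    have hsub : {x | ¬ (ρm x ≤ α - h → C ≤ Qp h x + Vm x)} ⊆
        ⋃ p : ℚ, {x | (p:ℝ) < C ∧ ρm x ≤ α - h ∧ Qp h x + Vm x < (p:ℝ)} := by
      intro x hx
      simp only [mem_setOf_eq, Classical.not_imp, not_le] at hx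
      obtain ⟨hx1, hx2⟩ := hx
      obtain ⟨p, hp1, hp2⟩ := exists_rat_btwn hx2
      exact mem_iUnion.mpr ⟨p, hp2, hx1, hp1⟩
    refine measure_mono_null hsub (measure_iUnion_null fun p => ?_)
    by_cases hp : (p:ℝ) < C
    · obtain ⟨t, htS, hpt⟩ := exists_lt_of_lt_csSup hS_ne hp
      obtain ⟨h', h'pos, htne⟩ := htS
      rcases key h h' p t hpos h'pos hpt with h0 | h0
      · refine measure_mono_null ?_ h0
        intro x hx
        simp only [mem_setOf_eq] at hx ⊢
        exact ⟨hx.2.1, hx.2.2⟩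
      · exact (htne h0).elim
    · have hempty : {x | (p:ℝ) < C ∧ ρm x ≤ α - h ∧ Qp h x + Vm x < (p:ℝ)} = ∅ := by
        ext x
        simp only [mem_setOf_eq, mem_empty_iff_false, iff_false]
        rintro ⟨h1, -⟩
        exact hp h1
      rw [hempty]
      exact measure_empty
  -- auxiliary slope vs derivative estimates
  have slope0 : ∀ s : ℝ, 0 < s → s < α → (U s - U 0) / s ≤ U' s := by
    intro s hs hsα
    -- the secant (U s - U t)/(s - t) tends to (U s - U 0)/s as t → 0⁺ and is ≤ U' s on (0,s)
    have hUc0 : ContinuousWithinAt U (Icc 0 α) 0 := hU_cont 0 ⟨le_rfl, hα.le⟩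
    have hten : Tendsto (fun t : ℝ => (U s - U t) / (s - t)) (𝓝[>] (0:ℝ))
        (𝓝 ((U s - U 0) / (s - 0))) := by
      apply Tendsto.div
      · refine tendsto_const_nhds.sub
          (hUc0.tendsto.comp (tendsto_nhdsWithin_of_tendsto_nhds_of_eventually_within _
            (tendsto_id'.mpr nhdsWithin_le_nhds) ?_))
        filter_upwards [Ioo_mem_nhdsGT_of_mem (show (0:ℝ) ∈ Ico (0:ℝ) α from ⟨le_rfl, hα⟩)]
          with t ht
        exact ⟨ht.1.le, ht.2.le⟩
      · exact tendsto_const_nhds.sub (tendsto_id'.mpr nhdsWithin_le_nhds)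
      · simpa using hs.ne'
    have hev : ∀ᶠ t in 𝓝[>] (0:ℝ), (U s - U t) / (s - t) ≤ U' s := by
      filter_upwards [Ioo_mem_nhdsGT_of_mem ⟨le_rfl, hs⟩] with t ht
      obtain ⟨c, hc, hceq⟩ := exists_hasDerivAt_eq_slope U U' ht.2
        (hU_cont.mono (Icc_subset_Icc ht.1.le (by linarith)))
        (fun y hy => hU'_deriv y ⟨lt_trans ht.1 hy.1, lt_trans hy.2 hsα⟩)
      rw [← hceq]
      exact (hU'_smono ⟨lt_trans ht.1 hc.1, lt_trans hc.2 hsα⟩ ⟨hs, hsα⟩ hc.2).le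
    have := le_of_tendsto hten hev
    rwa [sub_zero] at this
  have slopeA : ∀ s : ℝ, 0 < s → s < α → U' s ≤ (U α - U s) / (α - s) := by
    intro s hs hsα
    have hUcα : ContinuousWithinAt U (Icc 0 α) α := hU_cont α ⟨hα.le, le_rfl⟩
    have hten : Tendsto (fun t : ℝ => (U t - U s) / (t - s)) (𝓝[<] α)
        (𝓝 ((U α - U s) / (α - s))) := by
      apply Tendsto.div
      · refine Tendsto.sub (hUcα.tendsto.comp (tendsto_nhdsWithin_of_tendsto_nhds_of_eventually_within _
          (tendsto_id'.mpr nhdsWithin_le_nhds) ?_)) tendsto_const_nhds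
        filter_upwards [Ioo_mem_nhdsLT_of_mem (show α ∈ Ioc (0:ℝ) α from ⟨hα, le_rfl⟩)] with t ht
        exact ⟨ht.1.le, ht.2.le⟩
      · exact (tendsto_id'.mpr nhdsWithin_le_nhds).sub tendsto_const_nhds
      · exact sub_ne_zero_of_ne (ne_of_gt hsα)
    have hev : ∀ᶠ t in 𝓝[<] α, U' s ≤ (U t - U s) / (t - s) := by
      filter_upwards [Ioo_mem_nhdsLT_of_mem (show α ∈ Ioc s α from ⟨hsα, le_rfl⟩)] with t ht
      obtain ⟨c, hc, hceq⟩ := exists_hasDerivAt_eq_slope U U' ht.1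
        (hU_cont.mono (Icc_subset_Icc hs.le ht.2.le))
        (fun y hy => hU'_deriv y ⟨lt_trans hs hy.1, lt_trans hy.2 ht.2⟩)
      rw [← hceq]
      exact (hU'_smono ⟨hs, hsα⟩ ⟨lt_trans hs hc.1, lt_trans hc.2 ht.2⟩ hc.1).le
    exact ge_of_tendsto hten hev
  -- main pointwise identification
  have main : ∀ᵐ x ∂μ, ρm x = g (C - Vm x) := by
    have h1 : ∀ᵐ x ∂μ, ∀ n : ℕ, ρm x ≤ α - 1/(n+1) → C ≤ Qp (1/(n+1)) x + Vm x :=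
      ae_all_iff.mpr fun n => P2 _ (by positivity)
    have h2 : ∀ᵐ x ∂μ, ∀ n : ℕ, 1/(n+1:ℝ) ≤ ρm x → Qm (1/(n+1)) x + Vm x ≤ C :=
      ae_all_iff.mpr fun n => P1 _ (by positivity)
    filter_upwards [h1, h2] with x hx1 hx2
    set s := ρm x with hsdef
    set v := Vm x with hvdef
    have hs0 : 0 ≤ s := (hρm_mem x).1
    have hsα : s ≤ α := (hρm_mem x).2
    have hseq : Tendsto (fun n : ℕ => 1/(n+1:ℝ)) atTop (𝓝 0) :=
      tendsto_one_div_add_atTop_nhds_zero_nat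
    rcases eq_or_lt_of_le hs0 with hzero | hpos
    · -- s = 0
      have hCle : ((C - v : ℝ) : EReal) ≤ ζl := by
        have hlim : Tendsto (fun n : ℕ => ((U' (1/(n+1:ℝ)) : ℝ) : EReal)) atTop (𝓝 ζl) :=
          hζl_lim.comp (tendsto_nhdsWithin_of_tendsto_nhds_of_eventually_within _ hseq
            (Eventually.of_forall fun n => by
              simp only [mem_Ioi]; positivity))
        refine ge_of_tendsto hlim ?_
        have hev : ∀ᶠ n : ℕ in atTop, 1/(n+1:ℝ) < α := hseq.eventually (gt_mem_nhds hα)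
        filter_upwards [hev] with n hn
        have hnpos : (0:ℝ) < 1/(n+1) := by positivity
        have hcond := hx1 n (by rw [← hzero]; linarith)
        have hQ : Qp (1/(n+1)) x = (U (1/(n+1:ℝ)) - U 0)/(1/(n+1:ℝ)) := by
          simp only [hQpdef]
          rw [← hsdef, ← hzero, zero_add, min_eq_right hn.le]
        have hslope := slope0 (1/(n+1:ℝ)) hnpos hn
        rw [hQ] at hcond
        exact_mod_cast (by linarith : C - v ≤ U' (1/(n+1:ℝ)))
      rw [← hzero]
      exact (hg_low _ hCle).symm
    rcases eq_or_lt_of_le hsα with hαeq | hslt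
    · -- s = α
      have hChigh : ζh ≤ ((C - v : ℝ) : EReal) := by
        have hbase : Tendsto (fun n : ℕ => α - 1/(n+1:ℝ)) atTop (𝓝 α) := by
          simpa using tendsto_const_nhds.sub hseq
        have hlim : Tendsto (fun n : ℕ => ((U' (α - 1/(n+1:ℝ)) : ℝ) : EReal)) atTop (𝓝 ζh) :=
          hζh_lim.comp (tendsto_nhdsWithin_of_tendsto_nhds_of_eventually_within _ hbase
            (Eventually.of_forall fun n => by
              simp only [mem_Iio]
              have : (0:ℝ) < 1/(n+1) := by positivity
              linarith))
        refine le_of_tendsto hlim ?_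
        have hev : ∀ᶠ n : ℕ in atTop, 1/(n+1:ℝ) < α := hseq.eventually (gt_mem_nhds hα)
        filter_upwards [hev] with n hn
        have hnpos : (0:ℝ) < 1/(n+1) := by positivity
        have hcond := hx2 n (by rw [hαeq]; linarith)
        have hQ : Qm (1/(n+1)) x = (U α - U (α - 1/(n+1:ℝ)))/(1/(n+1:ℝ)) := by
          simp only [hQmdef]
          rw [← hsdef, hαeq, max_eq_right (by linarith : (0:ℝ) ≤ α - 1/(n+1))]
        have hslope := slopeA (α - 1/(n+1:ℝ)) (by linarith) (by linarith)
        rw [show α - (α - 1/(n+1:ℝ)) = 1/(n+1:ℝ) from by ring] at hslope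
        rw [hQ] at hcond
        exact_mod_cast (by linarith : U' (α - 1/(n+1:ℝ)) ≤ C - v)
      rw [hαeq]
      exact (hg_high _ hChigh).symm
    · -- 0 < s < α
      have hd := hU'_deriv s ⟨hpos, hslt⟩
      rw [hasDerivAt_iff_tendsto_slope] at hd
      have hup : C - v ≤ U' s := by
        have hyn : Tendsto (fun n : ℕ => s + 1/(n+1:ℝ)) atTop (𝓝 s) := by
          simpa using tendsto_const_nhds.add hseq
        have hyn' : Tendsto (fun n : ℕ => s + 1/(n+1:ℝ)) atTop (𝓝[≠] s) :=
          tendsto_nhdsWithin_of_tendsto_nhds_of_eventually_within _ hyn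
            (Eventually.of_forall fun n => by
              simp only [mem_compl_iff, mem_singleton_iff]
              have : (0:ℝ) < 1/(n+1) := by positivity
              intro hcontra
              linarith [congrArg id hcontra])
        have hslope := hd.comp hyn'
        refine ge_of_tendsto hslope ?_
        have hev : ∀ᶠ n : ℕ in atTop, 1/(n+1:ℝ) < α - s :=
          hseq.eventually (gt_mem_nhds (by linarith))
        filter_upwards [hev] with n hn
        have hnpos : (0:ℝ) < 1/(n+1) := by positivity
        have hcond := hx1 n (by linarith)
        have hQ : Qp (1/(n+1)) x = slope U s (s + 1/(n+1:ℝ)) := by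
          simp only [hQpdef]
          rw [← hsdef, slope_def_field, min_eq_right (by linarith : s + 1/(n+1:ℝ) ≤ α),
            add_sub_cancel_left]
        rw [hQ] at hcond
        simp only [Function.comp_apply]
        linarith
      have hdown : U' s ≤ C - v := by
        have hyn : Tendsto (fun n : ℕ => s - 1/(n+1:ℝ)) atTop (𝓝 s) := by
          simpa using tendsto_const_nhds.sub hseq
        have hyn' : Tendsto (fun n : ℕ => s - 1/(n+1:ℝ)) atTop (𝓝[≠] s) :=
          tendsto_nhdsWithin_of_tendsto_nhds_of_eventually_within _ hyn
            (Eventually.of_forall fun n => by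
              simp only [mem_compl_iff, mem_singleton_iff]
              have : (0:ℝ) < 1/(n+1) := by positivity
              intro hcontra
              linarith [congrArg id hcontra])
        have hslope := hd.comp hyn'
        refine le_of_tendsto hslope ?_
        have hev : ∀ᶠ n : ℕ in atTop, 1/(n+1:ℝ) < s :=
          hseq.eventually (gt_mem_nhds hpos)
        filter_upwards [hev] with n hn
        have hnpos : (0:ℝ) < 1/(n+1) := by positivity
        have hcond := hx2 n hn.le
        have hQ : Qm (1/(n+1)) x = slope U s (s - 1/(n+1:ℝ)) := by
          simp only [hQmdef]
          rw [← hsdef, slope_def_field, max_eq_right (by linarith : (0:ℝ) ≤ s - 1/(n+1:ℝ)),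
            show s - 1/(n+1:ℝ) - s = -(1/(n+1:ℝ)) from by ring, div_neg, ← neg_div, neg_sub]
        rw [hQ] at hcond
        simp only [Function.comp_apply]
        linarith
      have hEq : U' s = C - v := le_antisymm hdown hup
      have hs2mem : s/2 ∈ Ioo (0:ℝ) α := ⟨by linarith, by linarith⟩
      have hl : ζl < ((C - v : ℝ) : EReal) := by
        have hle : ζl ≤ ((U' (s/2) : ℝ) : EReal) := by
          refine le_of_tendsto hζl_lim ?_
          filter_upwards [Ioo_mem_nhdsGT_of_mem
            (show (0:ℝ) ∈ Ico (0:ℝ) (s/2) from ⟨le_rfl, by linarith⟩)] with t ht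
          exact EReal.coe_le_coe_iff.mpr
            (hU'_smono ⟨ht.1, by linarith [ht.2]⟩ hs2mem ht.2).le
        refine lt_of_le_of_lt hle ?_
        rw [← hEq]
        exact EReal.coe_lt_coe_iff.mpr (hU'_smono hs2mem ⟨hpos, hslt⟩ (by linarith))
      have hs3mem : (s+α)/2 ∈ Ioo (0:ℝ) α := ⟨by linarith, by linarith⟩
      have hh : ((C - v : ℝ) : EReal) < ζh := by
        have hle : ((U' ((s+α)/2) : ℝ) : EReal) ≤ ζh := by
          refine ge_of_tendsto hζh_lim ?_
          filter_upwards [Ioo_mem_nhdsLT_of_mem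
            (show α ∈ Ioc ((s+α)/2) α from ⟨by linarith, le_rfl⟩)] with t ht
          exact EReal.coe_le_coe_iff.mpr
            (hU'_smono hs3mem ⟨lt_trans hs3mem.1 ht.1, ht.2⟩ ht.1).le
        refine lt_of_lt_of_le ?_ hle
        rw [← hEq]
        exact EReal.coe_lt_coe_iff.mpr (hU'_smono ⟨hpos, hslt⟩ hs3mem (by linarith))
      obtain ⟨hgmem, hgeq⟩ := hg_mid (C - v) hl hh
      exact (hU'_smono.injOn hgmem ⟨hpos, hslt⟩ (by rw [hgeq, ← hEq])).symm
  refine ⟨C, ?_⟩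
  filter_upwards [main, hρm_eq, hVm_eq] with x hx h1 h2
  rw [← h1, hx, h2]
end

section
/- Assume U′ is strictly increasing on (0,α). Then for every M ∈ (0, α|Ω|) there exists exactly one constant C ∈ ℝ such that ∫_Ω g(C − V(x)) dx = M, where g = T_{0,α}∘(U′)⁻¹. -/
open Set MeasureTheory Filter Topology

/-- When U′ is strictly increasing, for every admissible mass M there is exactly one
constant C with ∫_Ω T_{0,α}∘(U′)⁻¹(C − V(x)) dx = M. -/
theorem unique_mass_constant
    (d : ℕ) (Ω : Set (EuclideanSpace ℝ (Fin d)))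
    (hΩ_meas : MeasurableSet Ω) (hΩ_ne : Ω.Nonempty) (hΩ_open : IsOpen Ω)
    (hΩ_conn : IsConnected Ω) (hΩ_bdd : Bornology.IsBounded Ω)
    (α : ℝ) (hα : 0 < α)
    (U : ℝ → ℝ) (hU_cont : ContinuousOn U (Icc 0 α)) (hU_conv : ConvexOn ℝ (Icc 0 α) U)
    (V : EuclideanSpace ℝ (Fin d) → ℝ) (hV_cont : ContinuousOn V Ω)
    (hV_bdd : ∃ B : ℝ, ∀ x ∈ Ω, V x ≤ B) (hV_nonneg : ∀ x ∈ Ω, 0 ≤ V x)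
    (U' : ℝ → ℝ)
    (hU'_deriv : ∀ s ∈ Ioo 0 α, HasDerivAt U (U' s) s)
    (hU'_cont : ContinuousOn U' (Ioo 0 α))
    (hU'_smono : StrictMonoOn U' (Ioo 0 α))
    (ζl ζh : EReal) (hζl_ne : ζl ≠ ⊤) (hζh_ne : ζh ≠ ⊥)
    (hζl_lim : Tendsto (fun s : ℝ => (U' s : EReal)) (𝓝[>] (0:ℝ)) (𝓝 ζl))
    (hζh_lim : Tendsto (fun s : ℝ => (U' s : EReal)) (𝓝[<] α) (𝓝 ζh))
    (g : ℝ → ℝ)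
    (hg_low : ∀ ζ : ℝ, (ζ : EReal) ≤ ζl → g ζ = 0)
    (hg_high : ∀ ζ : ℝ, ζh ≤ (ζ : EReal) → g ζ = α)
    (hg_mid : ∀ ζ : ℝ, ζl < (ζ : EReal) → (ζ : EReal) < ζh →
      g ζ ∈ Ioo 0 α ∧ U' (g ζ) = ζ)
    (M : ℝ) (hM_pos : 0 < M) (hM_lt : M < α * (volume Ω).toReal) :
    ∃! C : ℝ, ∫ x in Ω, g (C - V x) = M := by
  -- ζl is strictly below U' s for every s ∈ (0,α)
  have hζl_lt : ∀ s ∈ Ioo (0:ℝ) α, ζl < (U' s : EReal) := by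
    intro s hs
    have ht : s/2 ∈ Ioo (0:ℝ) α := ⟨by linarith [hs.1], by linarith [hs.1, hs.2]⟩
    have h1 : ζl ≤ (U' (s/2) : EReal) := by
      refine le_of_tendsto hζl_lim ?_
      filter_upwards [Ioo_mem_nhdsGT_of_mem
        (show (0:ℝ) ∈ Ico (0:ℝ) (s/2) from ⟨le_refl _, ht.1⟩)] with r hr
      exact EReal.coe_le_coe_iff.2
        ((hU'_smono ⟨hr.1, hr.2.trans ht.2⟩ ht hr.2).le)
    have h2 : (U' (s/2) : EReal) < U' s :=
      EReal.coe_lt_coe_iff.2 (hU'_smono ht hs (by linarith [hs.1]))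
    exact h1.trans_lt h2
  have hζh_gt : ∀ s ∈ Ioo (0:ℝ) α, (U' s : EReal) < ζh := by
    intro s hs
    have ht : (s+α)/2 ∈ Ioo (0:ℝ) α := ⟨by linarith [hs.1, hs.2], by linarith [hs.2]⟩
    have h1 : (U' ((s+α)/2) : EReal) ≤ ζh := by
      refine ge_of_tendsto hζh_lim ?_
      filter_upwards [Ioo_mem_nhdsLT_of_mem
        (show α ∈ Ioc ((s+α)/2) α from ⟨ht.2, le_refl _⟩)] with r hr
      exact EReal.coe_le_coe_iff.2
        ((hU'_smono ht ⟨ht.1.trans hr.1, hr.2⟩ hr.1).le)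
    have h2 : (U' s : EReal) < U' ((s+α)/2) :=
      EReal.coe_lt_coe_iff.2 (hU'_smono hs ht (by linarith [hs.2]))
    exact h2.trans_le h1
  have hζlh : ζl < ζh := by
    have h : α/2 ∈ Ioo (0:ℝ) α := ⟨by linarith, by linarith⟩
    exact (hζl_lt _ h).trans (hζh_gt _ h)
  -- g inverts U'
  have g_inv : ∀ s ∈ Ioo (0:ℝ) α, g (U' s) = s := by
    intro s hs
    obtain ⟨hm, he⟩ := hg_mid (U' s) (hζl_lt s hs) (hζh_gt s hs)
    exact hU'_smono.injOn hm hs he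
  -- trichotomy
  have tri : ∀ ζ : ℝ, (ζ : EReal) ≤ ζl ∨ ζh ≤ (ζ : EReal) ∨
      (ζl < (ζ : EReal) ∧ (ζ : EReal) < ζh) := by
    intro ζ
    rcases le_or_gt (ζ : EReal) ζl with h | h
    · exact Or.inl h
    rcases le_or_gt ζh (ζ : EReal) with h' | h'
    · exact Or.inr (Or.inl h')
    · exact Or.inr (Or.inr ⟨h, h'⟩)
  have g_nonneg : ∀ ζ : ℝ, 0 ≤ g ζ := by
    intro ζ
    rcases tri ζ with h | h | h
    · rw [hg_low ζ h]
    · rw [hg_high ζ h]; exact hα.le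
    · exact (hg_mid ζ h.1 h.2).1.1.le
  have g_le : ∀ ζ : ℝ, g ζ ≤ α := by
    intro ζ
    rcases tri ζ with h | h | h
    · rw [hg_low ζ h]; exact hα.le
    · rw [hg_high ζ h]
    · exact (hg_mid ζ h.1 h.2).1.2.le
  have g_mono : Monotone g := by
    intro ζ ζ' h
    rcases tri ζ with hl | hh | hm
    · rw [hg_low ζ hl]; exact g_nonneg ζ'
    · rw [hg_high ζ hh, hg_high ζ' (hh.trans (EReal.coe_le_coe_iff.2 h))]
    · obtain ⟨hmem, heq⟩ := hg_mid ζ hm.1 hm.2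
      rcases le_or_gt ζh (ζ' : EReal) with hh' | hh'
      · rw [hg_high ζ' hh']; exact g_le ζ
      · obtain ⟨hmem', heq'⟩ := hg_mid ζ' (hm.1.trans_le (EReal.coe_le_coe_iff.2 h)) hh'
        exact (hU'_smono.le_iff_le hmem hmem').1 (by rw [heq, heq']; exact h)
  have g_strict : ∀ ζ ζ' : ℝ, ζ < ζ' → ζl < (ζ' : EReal) → (ζ : EReal) < ζh →
      g ζ < g ζ' := by
    intro ζ ζ' h hl' hh
    have hglt : g ζ < α := by
      rcases le_or_gt (ζ : EReal) ζl with h0 | h0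
      · rw [hg_low ζ h0]; exact hα
      · exact (hg_mid ζ h0 hh).1.2
    rcases le_or_gt ζh (ζ' : EReal) with h1 | h1
    · rw [hg_high ζ' h1]; exact hglt
    · obtain ⟨hmem', heq'⟩ := hg_mid ζ' hl' h1
      rcases le_or_gt (ζ : EReal) ζl with h0 | h0
      · rw [hg_low ζ h0]; exact hmem'.1
      · obtain ⟨hmem, heq⟩ := hg_mid ζ h0 hh
        exact (hU'_smono.lt_iff_lt hmem hmem').1 (by rw [heq, heq']; exact h)
  -- continuity of g
  have g_cont : Continuous g := by
    rw [continuous_iff_continuousAt]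
    intro a
    rw [continuousAt_iff_continuous_left_right]
    constructor
    · rcases eq_or_lt_of_le (g_nonneg a) with h0 | h0
      · have hconst : ∀ᶠ x in 𝓝[≤] a, (0:ℝ) = g x := by
          filter_upwards [self_mem_nhdsWithin] with x (hx : x ≤ a)
          exact le_antisymm (g_nonneg x) (h0 ▸ g_mono hx)
        have : Tendsto (fun _ : ℝ => (0:ℝ)) (𝓝[≤] a) (𝓝 (g a)) := by
          rw [← h0]; exact tendsto_const_nhds
        exact this.congr' hconst
      · refine continuousWithinAt_left_of_monotoneOn_of_exists_between
          (g_mono.monotoneOn _) univ_mem ?_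
        intro b hb
        obtain ⟨t, ht1, ht2⟩ := exists_between (max_lt hb h0)
        have htI : t ∈ Ioo (0:ℝ) α :=
          ⟨(le_max_right b 0).trans_lt ht1, ht2.trans_le (g_le a)⟩
        exact ⟨U' t, mem_univ _,
          (le_max_left b 0).trans_lt ht1 |>.trans_le (g_inv t htI).symm.le,
          by rw [g_inv t htI]; exact ht2⟩
    · rcases eq_or_lt_of_le (g_le a) with h0 | h0
      · have hconst : ∀ᶠ x in 𝓝[≥] a, α = g x := by
          filter_upwards [self_mem_nhdsWithin] with x (hx : a ≤ x)
          exact le_antisymm (h0 ▸ g_mono hx) (g_le x)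
        have : Tendsto (fun _ : ℝ => α) (𝓝[≥] a) (𝓝 (g a)) := by
          rw [h0]; exact tendsto_const_nhds
        exact this.congr' hconst
      · refine continuousWithinAt_right_of_monotoneOn_of_exists_between
          (g_mono.monotoneOn _) univ_mem ?_
        intro b hb
        obtain ⟨t, ht1, ht2⟩ := exists_between (show g a < min b α from lt_min hb h0)
        have htI : t ∈ Ioo (0:ℝ) α :=
          ⟨(g_nonneg a).trans_lt ht1, ht2.trans_le (min_le_right b α)⟩
        exact ⟨U' t, mem_univ _, by rw [g_inv t htI]; exact ht1,
          by rw [g_inv t htI]; exact ht2.trans_le (min_le_left b α)⟩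
  -- limits of g
  have g_bot : Tendsto g atBot (𝓝 0) := by
    refine tendsto_order.2 ⟨fun b hb =>
      Eventually.of_forall fun ζ => hb.trans_le (g_nonneg ζ), fun b hb => ?_⟩
    have hsI : min (b/2) (α/2) ∈ Ioo (0:ℝ) α :=
      ⟨lt_min (by linarith) (by linarith), (min_le_right _ _).trans_lt (by linarith)⟩
    filter_upwards [eventually_le_atBot (U' (min (b/2) (α/2)))] with ζ hζ
    calc g ζ ≤ g (U' (min (b/2) (α/2))) := g_mono hζ
      _ = min (b/2) (α/2) := g_inv _ hsI
      _ < b := (min_le_left _ _).trans_lt (by linarith)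
  have g_top : Tendsto g atTop (𝓝 α) := by
    refine tendsto_order.2 ⟨fun b hb => ?_, fun b hb =>
      Eventually.of_forall fun ζ => (g_le ζ).trans_lt hb⟩
    have h1 : max b 0 < α := max_lt hb hα
    have hsI : (max b 0 + α)/2 ∈ Ioo (0:ℝ) α :=
      ⟨by have := le_max_right b 0; linarith, by linarith⟩
    filter_upwards [eventually_ge_atTop (U' ((max b 0 + α)/2))] with ζ hζ
    calc b ≤ max b 0 := le_max_left b 0
      _ < (max b 0 + α)/2 := by linarith
      _ = g (U' ((max b 0 + α)/2)) := (g_inv _ hsI).symm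
      _ ≤ g ζ := g_mono hζ
  -- measure-theoretic setup
  have hvol : volume Ω < ⊤ := hΩ_bdd.measure_lt_top
  haveI : IsFiniteMeasure (volume.restrict Ω) :=
    ⟨by rwa [Measure.restrict_apply_univ]⟩
  have hVm : AEMeasurable V (volume.restrict Ω) := hV_cont.aemeasurable hΩ_meas
  have hmeas : ∀ C : ℝ, AEStronglyMeasurable (fun x => g (C - V x)) (volume.restrict Ω) :=
    fun C => (g_cont.measurable.comp_aemeasurable (aemeasurable_const.sub hVm)).aestronglyMeasurable
  have hnorm : ∀ (C : ℝ) x, ‖g (C - V x)‖ ≤ α := fun C x => by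
    rw [Real.norm_eq_abs, abs_of_nonneg (g_nonneg _)]; exact g_le _
  have hint : ∀ C : ℝ, Integrable (fun x => g (C - V x)) (volume.restrict Ω) :=
    fun C => (integrable_const α).mono' (hmeas C) (ae_of_all _ (hnorm C))
  set F : ℝ → ℝ := fun C => ∫ x in Ω, g (C - V x) with hF
  -- continuity of F
  have hFcont : Continuous F := by
    rw [continuous_iff_continuousAt]
    intro C
    refine tendsto_integral_filter_of_dominated_convergence (fun _ => α)
      (Eventually.of_forall hmeas)
      (Eventually.of_forall fun C' => ae_of_all _ (hnorm C'))
      (integrable_const α) (ae_of_all _ fun x => ?_)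
    exact (g_cont.continuousAt).tendsto.comp
      ((continuous_id.sub continuous_const).tendsto C)
  -- monotonicity of F
  have hFmono : Monotone F := fun C1 C2 h =>
    integral_mono (hint C1) (hint C2) (fun x => g_mono (show C1 - V x ≤ C2 - V x by linarith))
  -- limits of F
  have hFbot : Tendsto F atBot (𝓝 0) := by
    have h0 : (0:ℝ) = ∫ x in Ω, (0:ℝ) := by simp
    rw [h0]
    refine tendsto_integral_filter_of_dominated_convergence (fun _ => α)
      (Eventually.of_forall hmeas)
      (Eventually.of_forall fun C' => ae_of_all _ (hnorm C'))
      (integrable_const α) (ae_of_all _ fun x => ?_)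
    have h1 : Tendsto (fun C : ℝ => C - V x) atBot atBot :=
      (tendsto_atBot_add_const_right atBot (-(V x)) tendsto_id).congr
        (fun C => (sub_eq_add_neg C (V x)).symm)
    exact g_bot.comp h1
  have hFtop : Tendsto F atTop (𝓝 (α * (volume Ω).toReal)) := by
    have h0 : α * (volume Ω).toReal = ∫ _x in Ω, α := by
      rw [setIntegral_const, smul_eq_mul, mul_comm, Measure.real]
    rw [h0]
    refine tendsto_integral_filter_of_dominated_convergence (fun _ => α)
      (Eventually.of_forall hmeas)
      (Eventually.of_forall fun C' => ae_of_all _ (hnorm C'))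
      (integrable_const α) (ae_of_all _ fun x => ?_)
    have h1 : Tendsto (fun C : ℝ => C - V x) atTop atTop :=
      (tendsto_atTop_add_const_right atTop (-(V x)) tendsto_id).congr
        (fun C => (sub_eq_add_neg C (V x)).symm)
    exact g_top.comp h1
  -- existence
  obtain ⟨a, ha⟩ := (hFbot.eventually_lt_const hM_pos).exists
  obtain ⟨b, hb⟩ := (hFtop.eventually_const_lt hM_lt).exists
  have hab : F (min a b) < M := lt_of_le_of_lt (hFmono (min_le_left a b)) ha
  have hba : M < F (max a b) := lt_of_lt_of_le hb (hFmono (le_max_right a b))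
  obtain ⟨C, _, hC⟩ := intermediate_value_Icc (min_le_max (a := a) (b := b))
    hFcont.continuousOn ⟨hab.le, hba.le⟩
  -- uniqueness
  have key : ∀ C1 C2 : ℝ, C1 < C2 → F C1 = M → F C2 = M → False := by
    intro C1 C2 hlt h1 h2
    have hle : ∀ x, g (C1 - V x) ≤ g (C2 - V x) := fun x => g_mono (by linarith)
    -- a point where g(C1 - V x) > 0
    have hx0 : ∃ x0 ∈ Ω, 0 < g (C1 - V x0) := by
      by_contra h; push_neg at h
      have heq : EqOn (fun x => g (C1 - V x)) (fun _ => (0:ℝ)) Ω :=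
        fun x hx => le_antisymm (h x hx) (g_nonneg _)
      have : F C1 = 0 := by
        show (∫ x in Ω, g (C1 - V x)) = 0
        rw [setIntegral_congr_fun hΩ_meas heq]; simp
      linarith
    -- a point where g(C1 - V x) < α
    have hx1 : ∃ x1 ∈ Ω, g (C1 - V x1) < α := by
      by_contra h; push_neg at h
      have heq : EqOn (fun x => g (C1 - V x)) (fun _ => α) Ω :=
        fun x hx => le_antisymm (g_le _) (h x hx)
      have : F C1 = α * (volume Ω).toReal := by
        show (∫ x in Ω, g (C1 - V x)) = α * (volume Ω).toReal
        rw [setIntegral_congr_fun hΩ_meas heq, setIntegral_const,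
          smul_eq_mul, mul_comm, Measure.real]
      linarith
    obtain ⟨x0, hx0Ω, hx0g⟩ := hx0
    obtain ⟨x1, hx1Ω, hx1g⟩ := hx1
    have hlow0 : ζl < ((C1 - V x0 : ℝ) : EReal) := by
      by_contra h; push_neg at h
      rw [hg_low _ h] at hx0g; exact lt_irrefl _ hx0g
    have hhigh1 : ((C1 - V x1 : ℝ) : EReal) < ζh := by
      by_contra h; push_neg at h
      rw [hg_high _ h] at hx1g; exact lt_irrefl _ hx1g
    -- a point x2 with ζl < C1 - V x2 < ζh
    have hx2 : ∃ x2 ∈ Ω, ζl < ((C1 - V x2 : ℝ) : EReal) ∧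
        ((C1 - V x2 : ℝ) : EReal) < ζh := by
      by_cases hc0 : ((C1 - V x0 : ℝ) : EReal) < ζh
      · exact ⟨x0, hx0Ω, hlow0, hc0⟩
      push_neg at hc0
      by_cases hc1 : ζl < ((C1 - V x1 : ℝ) : EReal)
      · exact ⟨x1, hx1Ω, hc1, hhigh1⟩
      push_neg at hc1
      have hζh_ne_top : ζh ≠ ⊤ := fun h => by
        rw [h, top_le_iff] at hc0; exact EReal.coe_ne_top _ hc0
      have hζl_ne_bot : ζl ≠ ⊥ := fun h => by
        rw [h, le_bot_iff] at hc1; exact EReal.coe_ne_bot _ hc1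
      set y := ζl.toReal with hy
      set z := ζh.toReal with hz
      have hyl : (y : EReal) = ζl := EReal.coe_toReal hζl_ne hζl_ne_bot
      have hzh : (z : EReal) = ζh := EReal.coe_toReal hζh_ne_top hζh_ne
      have hyz : y < z := by
        rw [← EReal.coe_lt_coe_iff, hyl, hzh]; exact hζlh
      have h1y : C1 - V x1 ≤ y := by
        rw [← EReal.coe_le_coe_iff, hyl]; exact hc1
      have h0z : z ≤ C1 - V x0 := by
        rw [← EReal.coe_le_coe_iff, hzh]; exact hc0
      have hmem : (y + z)/2 ∈ Icc (C1 - V x1) (C1 - V x0) :=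
        ⟨by linarith, by linarith⟩
      obtain ⟨x2, hx2Ω, hx2t⟩ := hΩ_conn.isPreconnected.intermediate_value
        hx1Ω hx0Ω (continuousOn_const.sub hV_cont) hmem
      have hx2t' : C1 - V x2 = (y + z) / 2 := hx2t
      refine ⟨x2, hx2Ω, ?_, ?_⟩
      · rw [hx2t', ← hyl]; exact EReal.coe_lt_coe_iff.2 (by linarith)
      · rw [hx2t', ← hzh]; exact EReal.coe_lt_coe_iff.2 (by linarith)
    obtain ⟨x2, hx2Ω, hl2, hh2⟩ := hx2
    -- the open set where the strict inequality holds
    set O := Ω ∩ (fun x => ((C1 - V x : ℝ) : EReal)) ⁻¹' (Ioo ζl ζh) with hO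
    have hOopen : IsOpen O :=
      (continuous_coe_real_ereal.comp_continuousOn
        (continuousOn_const.sub hV_cont)).isOpen_inter_preimage hΩ_open isOpen_Ioo
    have hx2O : x2 ∈ O := ⟨hx2Ω, hl2, hh2⟩
    have hOvol : 0 < volume O := hOopen.measure_pos volume ⟨x2, hx2O⟩
    have hstrictO : ∀ x ∈ O, g (C1 - V x) < g (C2 - V x) := by
      intro x hx
      refine g_strict _ _ (by linarith) ?_ hx.2.2
      exact hx.2.1.trans_le (EReal.coe_le_coe_iff.2 (by linarith))
    -- the difference integrates to zero, hence is a.e. zero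
    have hinteq : ∫ x in Ω, (g (C2 - V x) - g (C1 - V x)) = 0 := by
      have h1' : (∫ x in Ω, g (C1 - V x)) = M := h1
      have h2' : (∫ x in Ω, g (C2 - V x)) = M := h2
      rw [integral_sub (hint C2) (hint C1), h1', h2', sub_self]
    have hae : (fun x => g (C2 - V x) - g (C1 - V x)) =ᵐ[volume.restrict Ω] 0 :=
      (integral_eq_zero_iff_of_nonneg_ae
        (ae_of_all _ fun x => sub_nonneg.2 (hle x)) ((hint C2).sub (hint C1))).1 hinteq
    have hae' : ∀ᵐ x ∂(volume.restrict Ω), g (C2 - V x) - g (C1 - V x) = 0 := by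
      filter_upwards [hae] with x hx using hx
    rw [ae_iff] at hae'
    have hsub : O ⊆ {x | ¬ g (C2 - V x) - g (C1 - V x) = 0} :=
      fun x hx => sub_ne_zero.2 (hstrictO x hx).ne'
    have hO0 : volume.restrict Ω O ≤ 0 := hae' ▸ measure_mono hsub
    have hOr : volume.restrict Ω O = volume O := by
      rw [Measure.restrict_apply hOopen.measurableSet, inter_eq_left.2 (inter_subset_left)]
    rw [hOr] at hO0
    exact absurd (le_antisymm hO0 (zero_le)) hOvol.ne'
  refine ⟨C, hC, fun C' hC' => ?_⟩
  rcases lt_trichotomy C' C with h | h | h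
  · exact absurd (key C' C h hC' hC) not_false
  · exact h
  · exact absurd (key C C' h hC hC') not_false
end

section
/- Assume U′ is strictly increasing on (0,α), let M ∈ (0, α|Ω|), let C₀ be the unique constant with ∫_Ω g(C₀ − V(x)) dx = M, and set ρ̂⁰(x) = g(C₀ − V(x)). Then ρ̂⁰ ∈ 𝒜_M, ρ̂⁰ is a global minimiser of ℱ on 𝒜_M (that is, ℱ[ρ̂⁰] ≤ ℱ[ρ] for all ρ ∈ 𝒜_M), and ρ̂⁰ is the unique L¹-local minimiser of ℱ on 𝒜_M: every L¹-local minimiser of ℱ on 𝒜_M coincides with ρ̂⁰ a.e. in Ω. -/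
open Set MeasureTheory Filter Topology

/-- The truncated profile ρ̂⁰ = T_{0,α}∘(U′)⁻¹(C₀ − V) of mass M belongs to 𝒜_M,
is the global minimiser of the free energy on 𝒜_M, and is its unique L¹-local
minimiser. -/
theorem truncated_profile_unique_minimiser
    (d : ℕ) (Ω : Set (EuclideanSpace ℝ (Fin d)))
    (hΩ_meas : MeasurableSet Ω) (hΩ_ne : Ω.Nonempty) (hΩ_open : IsOpen Ω)
    (hΩ_conn : IsConnected Ω) (hΩ_bdd : Bornology.IsBounded Ω)
    (α : ℝ) (hα : 0 < α)
    (U : ℝ → ℝ) (hU_cont : ContinuousOn U (Icc 0 α)) (hU_conv : ConvexOn ℝ (Icc 0 α) U)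
    (V : EuclideanSpace ℝ (Fin d) → ℝ) (hV_cont : ContinuousOn V Ω)
    (hV_bdd : ∃ B : ℝ, ∀ x ∈ Ω, V x ≤ B) (hV_nonneg : ∀ x ∈ Ω, 0 ≤ V x)
    (U' : ℝ → ℝ)
    (hU'_deriv : ∀ s ∈ Ioo 0 α, HasDerivAt U (U' s) s)
    (hU'_cont : ContinuousOn U' (Ioo 0 α))
    (hU'_smono : StrictMonoOn U' (Ioo 0 α))
    (ζl ζh : EReal) (hζl_ne : ζl ≠ ⊤) (hζh_ne : ζh ≠ ⊥)
    (hζl_lim : Tendsto (fun s : ℝ => (U' s : EReal)) (𝓝[>] (0:ℝ)) (𝓝 ζl))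
    (hζh_lim : Tendsto (fun s : ℝ => (U' s : EReal)) (𝓝[<] α) (𝓝 ζh))
    (g : ℝ → ℝ)
    (hg_low : ∀ ζ : ℝ, (ζ : EReal) ≤ ζl → g ζ = 0)
    (hg_high : ∀ ζ : ℝ, ζh ≤ (ζ : EReal) → g ζ = α)
    (hg_mid : ∀ ζ : ℝ, ζl < (ζ : EReal) → (ζ : EReal) < ζh →
      g ζ ∈ Ioo 0 α ∧ U' (g ζ) = ζ)
    (M : ℝ) (hM_pos : 0 < M) (hM_lt : M < α * (volume Ω).toReal)
    (C₀ : ℝ) (hC₀ : ∫ x in Ω, g (C₀ - V x) = M) :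
    (Integrable (fun x => g (C₀ - V x)) (volume.restrict Ω) ∧
      (∀ᵐ x ∂(volume.restrict Ω), g (C₀ - V x) ∈ Icc 0 α) ∧
      ∫ x in Ω, g (C₀ - V x) = M) ∧
    (∀ ρ : EuclideanSpace ℝ (Fin d) → ℝ,
      Integrable ρ (volume.restrict Ω) →
      (∀ᵐ x ∂(volume.restrict Ω), ρ x ∈ Icc 0 α) →
      (∫ x in Ω, ρ x) = M →
      ∫ x in Ω, (U (g (C₀ - V x)) + V x * g (C₀ - V x)) ≤
        ∫ x in Ω, (U (ρ x) + V x * ρ x)) ∧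
    (∀ ρh : EuclideanSpace ℝ (Fin d) → ℝ,
      Integrable ρh (volume.restrict Ω) →
      (∀ᵐ x ∂(volume.restrict Ω), ρh x ∈ Icc 0 α) →
      (∫ x in Ω, ρh x) = M →
      (∃ r : ℝ, 0 < r ∧
        ∀ ρ : EuclideanSpace ℝ (Fin d) → ℝ,
          Integrable ρ (volume.restrict Ω) →
          (∀ᵐ x ∂(volume.restrict Ω), ρ x ∈ Icc 0 α) →
          (∫ x in Ω, ρ x) = M →
          (∫ x in Ω, |ρ x - ρh x|) < r →
          ∫ x in Ω, (U (ρh x) + V x * ρh x) ≤ ∫ x in Ω, (U (ρ x) + V x * ρ x)) →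
      ∀ᵐ x ∂(volume.restrict Ω), ρh x = g (C₀ - V x)) := by
  have htangent : ∀ t ∈ Ioo 0 α, ∀ s ∈ Icc 0 α, U t + U' t * (s - t) ≤ U s := by
    intro t ht s hs
    have htI : t ∈ Icc 0 α := Ioo_subset_Icc_self ht
    rcases lt_trichotomy s t with hst | rfl | hts
    · have hkey : (U s - U t) / (s - t) ≤ U' t := by
        have hder := hasDerivAt_iff_tendsto_slope.1 (hU'_deriv t ht)
        have hmono : ∀ᶠ u in 𝓝[<] t, (U s - U t) / (s - t) ≤ slope U t u := by
          filter_upwards [Ioo_mem_nhdsLT_of_mem (⟨hst, le_rfl⟩ : t ∈ Ioc s t)] with u hu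
          rw [slope_def_field]
          exact hU_conv.secant_mono htI hs
            ⟨le_trans hs.1 hu.1.le, le_trans hu.2.le htI.2⟩ (ne_of_lt hst) (ne_of_lt hu.2) hu.1.le
        have hsub : 𝓝[<] t ≤ 𝓝[≠] t := nhdsWithin_mono t fun u hu => ne_of_lt (mem_Iio.1 hu)
        exact ge_of_tendsto (hder.mono_left hsub) hmono
      rw [div_le_iff_of_neg (by linarith : s - t < 0)] at hkey
      linarith
    · simp
    · have hkey : U' t ≤ (U s - U t) / (s - t) := by
        have hder := hasDerivAt_iff_tendsto_slope.1 (hU'_deriv t ht)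
        have hmono : ∀ᶠ u in 𝓝[>] t, slope U t u ≤ (U s - U t) / (s - t) := by
          filter_upwards [Ioo_mem_nhdsGT_of_mem (⟨le_rfl, hts⟩ : t ∈ Ico t s)] with u hu
          rw [slope_def_field]
          exact hU_conv.secant_mono htI
            ⟨le_trans htI.1 hu.1.le, le_trans hu.2.le hs.2⟩ hs (ne_of_gt hu.1) (ne_of_gt hts) hu.2.le
        have hsub : 𝓝[>] t ≤ 𝓝[≠] t := nhdsWithin_mono t fun u hu => ne_of_gt (mem_Ioi.1 hu)
        exact le_of_tendsto (hder.mono_left hsub) hmono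
      rw [le_div_iff₀ (by linarith : 0 < s - t)] at hkey
      linarith
  have hζl_lt : ∀ t ∈ Ioo 0 α, ζl < (U' t : EReal) := by
    intro t ht
    have ht2 : t / 2 ∈ Ioo 0 α := ⟨by linarith [ht.1], by linarith [ht.1, ht.2]⟩
    have h1 : ζl ≤ (U' (t / 2) : EReal) := by
      refine le_of_tendsto hζl_lim ?_
      filter_upwards [Ioo_mem_nhdsGT_of_mem (⟨le_rfl, ht2.1⟩ : (0:ℝ) ∈ Ico 0 (t / 2))] with s hs
      exact EReal.coe_le_coe_iff.2 ((hU'_smono ⟨hs.1, lt_trans hs.2 ht2.2⟩ ht2 hs.2).le)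
    exact lt_of_le_of_lt h1 (EReal.coe_lt_coe_iff.2 (hU'_smono ht2 ht (by linarith [ht.1])))
  have hζh_gt : ∀ t ∈ Ioo 0 α, (U' t : EReal) < ζh := by
    intro t ht
    have ht2 : (t + α) / 2 ∈ Ioo 0 α := ⟨by linarith [ht.1, ht.2], by linarith [ht.2]⟩
    have h1 : (U' ((t + α) / 2) : EReal) ≤ ζh := by
      refine ge_of_tendsto hζh_lim ?_
      filter_upwards [Ioo_mem_nhdsLT_of_mem (⟨ht2.2, le_rfl⟩ : α ∈ Ioc ((t+α)/2) α)] with s hs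
      exact EReal.coe_le_coe_iff.2 ((hU'_smono ht2 ⟨lt_trans ht2.1 hs.1, hs.2⟩ hs.1).le)
    exact lt_of_lt_of_le (EReal.coe_lt_coe_iff.2 (hU'_smono ht ht2 (by linarith [ht.2]))) h1
  -- Lemma B
  have hB : ∀ ζ : ℝ, (ζ : EReal) ≤ ζl → ∀ t ∈ Ioo 0 α, U 0 + ζ * t ≤ U t := by
    intro ζ hζ t ht
    have hU0 : Tendsto U (𝓝[>] (0:ℝ)) (𝓝 (U 0)) := by
      have h := (hU_cont 0 ⟨le_rfl, hα.le⟩).mono (Ioo_subset_Icc_self : Ioo (0:ℝ) α ⊆ Icc 0 α)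
      rwa [ContinuousWithinAt, nhdsWithin_Ioo_eq_nhdsGT hα] at h
    have h2 : Tendsto (fun ε : ℝ => ζ * (t - ε)) (𝓝[>] (0:ℝ)) (𝓝 (ζ * (t - 0))) :=
      ((continuous_const.mul (continuous_const.sub continuous_id)).tendsto 0).mono_left
        nhdsWithin_le_nhds
    have hlim : Tendsto (fun ε => U ε + ζ * (t - ε)) (𝓝[>] (0:ℝ)) (𝓝 (U 0 + ζ * t)) := by
      simpa using hU0.add h2
    refine le_of_tendsto hlim ?_
    filter_upwards [Ioo_mem_nhdsGT_of_mem (⟨le_rfl, ht.1⟩ : (0:ℝ) ∈ Ico 0 t)] with ε hε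
    have hεI : ε ∈ Ioo 0 α := ⟨hε.1, lt_trans hε.2 ht.2⟩
    have h3 : ζ < U' ε := by exact_mod_cast lt_of_le_of_lt hζ (hζl_lt ε hεI)
    have h4 := htangent ε hεI t (Ioo_subset_Icc_self ht)
    nlinarith [mul_le_mul_of_nonneg_right h3.le (by linarith [hε.2] : (0:ℝ) ≤ t - ε)]
  -- Lemma C
  have hC : ∀ ζ : ℝ, ζh ≤ (ζ : EReal) → ∀ t ∈ Ioo 0 α, U α ≤ U t + ζ * (α - t) := by
    intro ζ hζ t ht
    have hUα : Tendsto U (𝓝[<] α) (𝓝 (U α)) := by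
      have h := (hU_cont α ⟨hα.le, le_rfl⟩).mono (Ioo_subset_Icc_self : Ioo (0:ℝ) α ⊆ Icc 0 α)
      rwa [ContinuousWithinAt, nhdsWithin_Ioo_eq_nhdsLT hα] at h
    have hlim : Tendsto (fun ε : ℝ => U t + ζ * (ε - t)) (𝓝[<] α) (𝓝 (U t + ζ * (α - t))) :=
      ((continuous_const.add (continuous_const.mul (continuous_id.sub continuous_const))).tendsto
        α).mono_left nhdsWithin_le_nhds
    refine le_of_tendsto_of_tendsto hUα hlim ?_
    filter_upwards [Ioo_mem_nhdsLT_of_mem (⟨ht.2, le_rfl⟩ : α ∈ Ioc t α)] with ε hε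
    have hεI : ε ∈ Ioo 0 α := ⟨lt_trans ht.1 hε.1, hε.2⟩
    have h3 : U' ε < ζ := by exact_mod_cast lt_of_lt_of_le (hζh_gt ε hεI) hζ
    have h4 := htangent ε hεI t (Ioo_subset_Icc_self ht)
    nlinarith [mul_le_mul_of_nonneg_right h3.le (by linarith [hε.1] : (0:ℝ) ≤ ε - t)]
  -- membership of g
  have hg_mem : ∀ ζ : ℝ, g ζ ∈ Icc 0 α := by
    intro ζ
    rcases le_or_gt (ζ : EReal) ζl with h | h
    · rw [hg_low ζ h]; exact ⟨le_rfl, hα.le⟩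
    rcases le_or_gt ζh (ζ : EReal) with h2 | h2
    · rw [hg_high ζ h2]; exact ⟨hα.le, le_rfl⟩
    · exact Ioo_subset_Icc_self (hg_mid ζ h h2).1
  -- key pointwise strict inequality
  have keyA : ∀ ζ : ℝ, ∀ s ∈ Icc 0 α, s ≠ g ζ → U (g ζ) - ζ * g ζ < U s - ζ * s := by
    intro ζ s hs hne
    rcases le_or_gt (ζ : EReal) ζl with hcase | hcase
    · rw [hg_low ζ hcase] at hne ⊢
      have hs0 : 0 < s := lt_of_le_of_ne hs.1 (Ne.symm hne)
      have ht : s / 2 ∈ Ioo 0 α := ⟨by linarith, by linarith [hs.2]⟩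
      have h1 := hB ζ hcase (s / 2) ht
      have h2 := htangent (s / 2) ht s hs
      have h3 : ζ < U' (s / 2) := by exact_mod_cast lt_of_le_of_lt hcase (hζl_lt _ ht)
      have h4 : ζ * (s - s / 2) < U' (s / 2) * (s - s / 2) :=
        mul_lt_mul_of_pos_right h3 (by linarith)
      linarith
    rcases le_or_gt ζh (ζ : EReal) with hcase2 | hcase2
    · rw [hg_high ζ hcase2] at hne ⊢
      have hsα : s < α := lt_of_le_of_ne hs.2 hne
      have ht : (s + α) / 2 ∈ Ioo 0 α := ⟨by linarith [hs.1], by linarith⟩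
      have h1 := hC ζ hcase2 ((s + α) / 2) ht
      have h2 := htangent ((s + α) / 2) ht s hs
      have h3 : U' ((s + α) / 2) < ζ := by
        exact_mod_cast lt_of_lt_of_le (hζh_gt _ ht) hcase2
      have h4 : ζ * (s - (s + α) / 2) < U' ((s + α) / 2) * (s - (s + α) / 2) :=
        mul_lt_mul_of_neg_right h3 (by linarith)
      linarith
    · obtain ⟨hgI, hgU⟩ := hg_mid ζ hcase hcase2
      have htan0 : ∀ s' ∈ Icc 0 α, U (g ζ) + ζ * (s' - g ζ) ≤ U s' := by
        intro s' hs'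
        have := htangent (g ζ) hgI s' hs'
        rwa [hgU] at this
      rcases lt_or_gt_of_ne hne with hlt | hgt
      · have ht : (s + g ζ) / 2 ∈ Ioo 0 α := ⟨by linarith [hs.1, hgI.1], by linarith [hgI.2]⟩
        have h2 := htangent ((s + g ζ) / 2) ht s hs
        have h3 : U' ((s + g ζ) / 2) < ζ := by
          have h := hU'_smono ht hgI (by linarith)
          rwa [hgU] at h
        have h4 : ζ * (s - (s + g ζ) / 2) < U' ((s + g ζ) / 2) * (s - (s + g ζ) / 2) :=
          mul_lt_mul_of_neg_right h3 (by linarith)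
        have h5 := htan0 ((s + g ζ) / 2) (Ioo_subset_Icc_self ht)
        linarith
      · have ht : (g ζ + s) / 2 ∈ Ioo 0 α := ⟨by linarith [hgI.1, hs.1], by linarith [hs.2, hgI.2]⟩
        have h2 := htangent ((g ζ + s) / 2) ht s hs
        have h3 : ζ < U' ((g ζ + s) / 2) := by
          have h := hU'_smono hgI ht (by linarith)
          rwa [hgU] at h
        have h4 : ζ * (s - (g ζ + s) / 2) < U' ((g ζ + s) / 2) * (s - (g ζ + s) / 2) :=
          mul_lt_mul_of_pos_right h3 (by linarith)
        have h5 := htan0 ((g ζ + s) / 2) (Ioo_subset_Icc_self ht)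
        linarith
  -- monotone
  have hg_mono : Monotone g := by
    intro a b hab
    rcases le_or_gt (a : EReal) ζl with h | h
    · rw [hg_low a h]; exact (hg_mem b).1
    rcases le_or_gt ζh (b : EReal) with h2 | h2
    · rw [hg_high b h2]; exact (hg_mem a).2
    · have hab' : (a : EReal) ≤ (b : EReal) := EReal.coe_le_coe_iff.2 hab
      have hma := hg_mid a h (lt_of_le_of_lt hab' h2)
      have hmb := hg_mid b (lt_of_lt_of_le h hab') h2
      by_contra hlt
      push_neg at hlt
      have := hU'_smono hmb.1 hma.1 hlt
      rw [hma.2, hmb.2] at this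
      exact absurd this (not_lt.2 hab)
  have keyA_le : ∀ ζ : ℝ, ∀ s ∈ Icc 0 α, U (g ζ) - ζ * g ζ ≤ U s - ζ * s := by
    intro ζ s hs
    by_cases h : s = g ζ
    · rw [h]
    · exact (keyA ζ s hs h).le
  set μ := volume.restrict Ω with hμdef
  haveI hμfin : IsFiniteMeasure μ := ⟨by
    rw [hμdef, Measure.restrict_apply_univ]; exact hΩ_bdd.measure_lt_top⟩
  -- measurability of V and of the profile
  have hV_aem : AEMeasurable V μ := hV_cont.aemeasurable hΩ_meas
  have hprof_aem : AEMeasurable (fun x => g (C₀ - V x)) μ :=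
    hg_mono.measurable.comp_aemeasurable (aemeasurable_const.sub hV_aem)
  have hprof_int : Integrable (fun x => g (C₀ - V x)) μ := by
    refine (integrable_const α).mono' hprof_aem.aestronglyMeasurable (ae_of_all _ fun x => ?_)
    have h := hg_mem (C₀ - V x)
    rw [Real.norm_eq_abs, abs_of_nonneg h.1]
    exact h.2
  have hgm_ae : ∀ᵐ x ∂μ, g (C₀ - V x) ∈ Icc 0 α := ae_of_all _ fun x => hg_mem _
  -- clamp extension of U
  have hclamp : ∀ s : ℝ, max 0 (min s α) ∈ Icc 0 α :=
    fun s => ⟨le_max_left _ _, max_le hα.le (min_le_right _ _)⟩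
  have hUc_cont : Continuous (fun s => U (max 0 (min s α))) :=
    hU_cont.comp_continuous (continuous_const.max (continuous_id.min continuous_const)) hclamp
  obtain ⟨K, hK⟩ := (isCompact_Icc : IsCompact (Icc (0:ℝ) α)).exists_bound_of_continuousOn hU_cont
  obtain ⟨B, hB⟩ := hV_bdd
  -- generic integrability
  have key_int : ∀ ρ : EuclideanSpace ℝ (Fin d) → ℝ, Integrable ρ μ →
      (∀ᵐ x ∂μ, ρ x ∈ Icc 0 α) →
      Integrable (fun x => U (ρ x)) μ ∧ Integrable (fun x => V x * ρ x) μ := by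
    intro ρ hρi hρm
    have h1 : Integrable (fun x => U (max 0 (min (ρ x) α))) μ := by
      refine (integrable_const K).mono'
        (hUc_cont.comp_aestronglyMeasurable hρi.aestronglyMeasurable) (ae_of_all _ fun x => ?_)
      exact hK _ (hclamp (ρ x))
    have hUeq : (fun x => U (max 0 (min (ρ x) α))) =ᵐ[μ] fun x => U (ρ x) := by
      filter_upwards [hρm] with x hx
      rw [min_eq_left hx.2, max_eq_right hx.1]
    refine ⟨h1.congr hUeq, ?_⟩
    refine (integrable_const (max B 0 * α)).mono'
      (hV_aem.aestronglyMeasurable.mul hρi.aestronglyMeasurable) ?_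
    filter_upwards [hρm, ae_restrict_mem hΩ_meas] with x hx hxΩ
    rw [Real.norm_eq_abs, abs_mul, abs_of_nonneg (hV_nonneg x hxΩ), abs_of_nonneg hx.1]
    exact mul_le_mul (le_max_of_le_left (hB x hxΩ)) hx.2 hx.1 (le_max_right _ _)
  -- integrability of the shifted integrand and decomposition
  have hGint : ∀ ρ : EuclideanSpace ℝ (Fin d) → ℝ, Integrable ρ μ →
      (∀ᵐ x ∂μ, ρ x ∈ Icc 0 α) →
      Integrable (fun x => U (ρ x) + (V x - C₀) * ρ x) μ := by
    intro ρ hρi hρm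
    obtain ⟨hUρ, hVρ⟩ := key_int ρ hρi hρm
    have h2 : Integrable (fun x => (V x - C₀) * ρ x) μ := by
      have h3 : Integrable (fun x => V x * ρ x - C₀ * ρ x) μ := hVρ.sub (hρi.const_mul C₀)
      exact h3.congr (ae_of_all _ fun x => by ring)
    exact hUρ.add h2
  have hdecomp : ∀ ρ : EuclideanSpace ℝ (Fin d) → ℝ, Integrable ρ μ →
      (∀ᵐ x ∂μ, ρ x ∈ Icc 0 α) → (∫ x, ρ x ∂μ) = M →
      ∫ x, (U (ρ x) + V x * ρ x) ∂μ
        = (∫ x, (U (ρ x) + (V x - C₀) * ρ x) ∂μ) + C₀ * M := by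
    intro ρ hρi hρm hρM
    rw [← hρM, ← integral_const_mul, ← integral_add (hGint ρ hρi hρm) (hρi.const_mul C₀)]
    exact integral_congr_ae (ae_of_all _ fun x => by ring)
  -- pointwise comparison a.e.
  have hpt : ∀ ρ : EuclideanSpace ℝ (Fin d) → ℝ, (∀ᵐ x ∂μ, ρ x ∈ Icc 0 α) →
      (fun x => U (g (C₀ - V x)) + (V x - C₀) * g (C₀ - V x))
        ≤ᵐ[μ] fun x => U (ρ x) + (V x - C₀) * ρ x := by
    intro ρ hρm
    filter_upwards [hρm] with x hx
    have h := keyA_le (C₀ - V x) (ρ x) hx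
    nlinarith [h]
  -- global minimality
  have hglobal : ∀ ρ : EuclideanSpace ℝ (Fin d) → ℝ, Integrable ρ μ →
      (∀ᵐ x ∂μ, ρ x ∈ Icc 0 α) → (∫ x, ρ x ∂μ) = M →
      ∫ x, (U (g (C₀ - V x)) + V x * g (C₀ - V x)) ∂μ ≤ ∫ x, (U (ρ x) + V x * ρ x) ∂μ := by
    intro ρ hρi hρm hρM
    rw [hdecomp ρ hρi hρm hρM, hdecomp _ hprof_int hgm_ae hC₀]
    have := integral_mono_ae (hGint _ hprof_int hgm_ae) (hGint ρ hρi hρm) (hpt ρ hρm)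
    linarith
  refine ⟨⟨hprof_int, hgm_ae, hC₀⟩, hglobal, ?_⟩
  -- uniqueness of local minimisers
  intro ρh hρhi hρhm hρhM hloc
  obtain ⟨r, hr, hloc⟩ := hloc
  obtain ⟨hUρh, hVρh⟩ := key_int ρh hρhi hρhm
  have hρhglob : ∀ ρ : EuclideanSpace ℝ (Fin d) → ℝ, Integrable ρ μ →
      (∀ᵐ x ∂μ, ρ x ∈ Icc 0 α) → (∫ x, ρ x ∂μ) = M →
      ∫ x, (U (ρh x) + V x * ρh x) ∂μ ≤ ∫ x, (U (ρ x) + V x * ρ x) ∂μ := by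
    intro ρ hρi hρm hρM
    obtain ⟨hUρ, hVρ⟩ := key_int ρ hρi hρm
    set I := ∫ x, |ρ x - ρh x| ∂μ with hI
    have hI0 : 0 ≤ I := integral_nonneg fun x => abs_nonneg _
    set t := min 1 (r / (2 * (I + 1))) with ht
    have ht0 : 0 < t := lt_min one_pos (div_pos hr (by linarith))
    have ht1 : t ≤ 1 := min_le_left _ _
    have hsubi : Integrable (fun x => t * (ρ x - ρh x)) μ := (hρi.sub hρhi).const_mul t
    have hρti : Integrable (fun x => ρh x + t * (ρ x - ρh x)) μ := hρhi.add hsubi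
    have hρtm : ∀ᵐ x ∂μ, ρh x + t * (ρ x - ρh x) ∈ Icc 0 α := by
      filter_upwards [hρm, hρhm] with x h1 h2
      constructor
      · nlinarith [h1.1, h2.1]
      · nlinarith [h1.2, h2.2]
    have hρtM : ∫ x, (ρh x + t * (ρ x - ρh x)) ∂μ = M := by
      rw [integral_add hρhi hsubi, integral_const_mul, integral_sub hρi hρhi, hρM, hρhM]
      ring
    have hρtd : ∫ x, |ρh x + t * (ρ x - ρh x) - ρh x| ∂μ < r := by
      have heq : (fun x => |ρh x + t * (ρ x - ρh x) - ρh x|) = fun x => t * |ρ x - ρh x| := by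
        funext x
        rw [show ρh x + t * (ρ x - ρh x) - ρh x = t * (ρ x - ρh x) by ring, abs_mul,
          abs_of_pos ht0]
      rw [heq, integral_const_mul, ← hI]
      have h2I : (0:ℝ) < 2 * (I + 1) := by linarith
      calc t * I ≤ r / (2 * (I + 1)) * I := mul_le_mul_of_nonneg_right (min_le_right _ _) hI0
        _ < r := by rw [div_mul_eq_mul_div, div_lt_iff₀ h2I]; nlinarith
    have h1 := hloc _ hρti hρtm hρtM hρtd
    obtain ⟨hUρt, hVρt⟩ := key_int _ hρti hρtm
    have hconv : ∫ x, (U (ρh x + t * (ρ x - ρh x)) + V x * (ρh x + t * (ρ x - ρh x))) ∂μ ≤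
        (1 - t) * ∫ x, (U (ρh x) + V x * ρh x) ∂μ + t * ∫ x, (U (ρ x) + V x * ρ x) ∂μ := by
      have hFρh : Integrable (fun x => U (ρh x) + V x * ρh x) μ := hUρh.add hVρh
      have hFρ : Integrable (fun x => U (ρ x) + V x * ρ x) μ := hUρ.add hVρ
      have hFρt : Integrable
          (fun x => U (ρh x + t * (ρ x - ρh x)) + V x * (ρh x + t * (ρ x - ρh x))) μ :=
        hUρt.add hVρt
      have hsum : Integrable (fun x => (1 - t) * (U (ρh x) + V x * ρh x)
          + t * (U (ρ x) + V x * ρ x)) μ :=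
        (hFρh.const_mul (1 - t)).add (hFρ.const_mul t)
      rw [← integral_const_mul, ← integral_const_mul,
        ← integral_add (hFρh.const_mul (1 - t)) (hFρ.const_mul t)]
      refine integral_mono_ae hFρt hsum ?_
      filter_upwards [hρm, hρhm] with x hx hxh
      have hx_eq : ρh x + t * (ρ x - ρh x) = (1 - t) * ρh x + t * ρ x := by ring
      have hcvx := hU_conv.2 hxh hx (by linarith : (0:ℝ) ≤ 1 - t) ht0.le (by ring)
      simp only [smul_eq_mul] at hcvx
      have hU2 : U (ρh x + t * (ρ x - ρh x)) ≤ (1 - t) * U (ρh x) + t * U (ρ x) := by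
        rw [hx_eq]; exact hcvx
      have hV2 : V x * (ρh x + t * (ρ x - ρh x)) = (1 - t) * (V x * ρh x) + t * (V x * ρ x) := by
        ring
      linarith
    have h3 : t * ∫ x, (U (ρh x) + V x * ρh x) ∂μ ≤ t * ∫ x, (U (ρ x) + V x * ρ x) ∂μ := by
      linarith
    exact le_of_mul_le_mul_left h3 ht0
  -- ρh is also a global minimiser, hence has the same energy as the profile
  have hFeq : ∫ x, (U (ρh x) + V x * ρh x) ∂μ
      = ∫ x, (U (g (C₀ - V x)) + V x * g (C₀ - V x)) ∂μ :=
    le_antisymm (hρhglob _ hprof_int hgm_ae hC₀) (hglobal ρh hρhi hρhm hρhM)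
  have hGeq : ∫ x, (U (ρh x) + (V x - C₀) * ρh x) ∂μ
      = ∫ x, (U (g (C₀ - V x)) + (V x - C₀) * g (C₀ - V x)) ∂μ := by
    have ha := hdecomp ρh hρhi hρhm hρhM
    have hb := hdecomp _ hprof_int hgm_ae hC₀
    rw [ha, hb] at hFeq
    linarith
  -- the nonnegative difference integrates to zero, so it vanishes a.e.
  set D := fun x => (U (ρh x) + (V x - C₀) * ρh x)
    - (U (g (C₀ - V x)) + (V x - C₀) * g (C₀ - V x)) with hD
  have hDint : Integrable D μ := (hGint ρh hρhi hρhm).sub (hGint _ hprof_int hgm_ae)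
  have hDnn : 0 ≤ᵐ[μ] D := by
    filter_upwards [hpt ρh hρhm] with x hx
    simpa [hD, sub_nonneg] using hx
  have hDzero : ∫ x, D x ∂μ = 0 := by
    rw [hD]
    rw [integral_sub (hGint ρh hρhi hρhm) (hGint _ hprof_int hgm_ae), hGeq, sub_self]
  have hDae : D =ᵐ[μ] 0 := (integral_eq_zero_iff_of_nonneg_ae hDnn hDint).1 hDzero
  filter_upwards [hDae, hρhm] with x hDx hx
  by_contra hne
  have h := keyA (C₀ - V x) (ρh x) hx hne
  have : D x > 0 := by simp only [hD]; nlinarith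
  simp only [Pi.zero_apply] at hDx
  linarith
end
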